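/- arXiv:2510.00364 — 8 statements merged into one kernel-verified Lean document; each statement's English description precedes it below -/
import Mathlib

section
/- For integers k ≥ 1 and a ≥ 1, a realization LS(a^k) (of the partition of ka with k parts all equal to a) exists if and only if k ≠ 2. -/
/-- A latin square of order `n`: an `n × n` array with symbols from a set of
size `n` (encoded as `Fin n`) such that every symbol occurs exactly once in
every row and every column. -/
def IsLatinSquare {n : ℕ} (L : Fin n → Fin n → Fin n) : Prop :=
  (∀ i, Function.Bijective fun j => L i j) ∧ (∀ j, Function.Bijective fun i => L i j)

/-- `L` has pairwise disjoint subsquares of orders `h 0, …, h (k-1)`: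
for each `i` there are sets `R i` of rows, `C i` of columns and `S i` of
symbols, each of size `h i`, pairwise disjoint (no shared rows, columns or
symbols), such that the subarray on rows `R i` and columns `C i` only uses
the symbols `S i` (given that `L` is a latin square, this subarray is then
itself a latin square of order `h i` on the symbol set `S i`). -/
def HasDisjointSubsquares {n k : ℕ} (L : Fin n → Fin n → Fin n) (h : Fin k → ℕ) : Prop :=
  ∃ R C S : Fin k → Finset (Fin n),
    (∀ i, (R i).card = h i) ∧ (∀ i, (C i).card = h i) ∧ (∀ i, (S i).card = h i) ∧
    (∀ i j, i ≠ j → Disjoint (R i) (R j)) ∧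
    (∀ i j, i ≠ j → Disjoint (C i) (C j)) ∧
    (∀ i j, i ≠ j → Disjoint (S i) (S j)) ∧
    (∀ i, ∀ x ∈ R i, ∀ y ∈ C i, L x y ∈ S i)

/-- An incomplete latin square `ILS(n; h_1 … h_k)`: a latin square of order `n`
with pairwise disjoint subsquares of orders `h_1, …, h_k`. -/
def HasILS (n : ℕ) {k : ℕ} (h : Fin k → ℕ) : Prop :=
  ∃ L : Fin n → Fin n → Fin n, IsLatinSquare L ∧ HasDisjointSubsquares L h

/-- A realization of the partition `(h_1 … h_k)` of `n = h_1 + … + h_k`: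
a latin square of order `n` with pairwise disjoint subsquares of orders
`h_1, …, h_k`. -/
def HasRealization {k : ℕ} (h : Fin k → ℕ) : Prop :=
  HasILS (∑ i, h i) h

/-! ### Auxiliary material -/

/-- A latin square structure on an arbitrary type. -/
def IsLS {α : Type*} (L : α → α → α) : Prop :=
  (∀ i, Function.Bijective fun j => L i j) ∧ (∀ j, Function.Bijective fun i => L i j)

lemma isLS_add {α : Type*} [AddGroup α] : IsLS (fun x y : α => x + y) :=
  ⟨fun i => (Equiv.addLeft i).bijective, fun j => (Equiv.addRight j).bijective⟩

/-- The product construction: if `K` is a latin square of order `k` with injective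
diagonal and `A` is any latin square of order `a`, then `ILS(ka; a^k)` exists. -/
lemma hasILS_of_diag {k a : ℕ} {α β : Type*} [Fintype α] [Fintype β]
    (e : α ≃ Fin k) (f : β ≃ Fin a)
    (K : α → α → α) (hK : IsLS K) (hdiag : Function.Injective fun i => K i i)
    (A : β → β → β) (hA : IsLS A) :
    HasILS (k * a) (fun _ : Fin k => a) := by
  classical
  let g : α × β ≃ Fin (k * a) := (e.prodCongr f).trans finProdFinEquiv
  have hcardβ : Fintype.card β = a := by
    rw [Fintype.card_congr f, Fintype.card_fin]
  refine ⟨fun u v => g (K (g.symm u).1 (g.symm v).1, A (g.symm u).2 (g.symm v).2), ⟨?_, ?_⟩, ?_⟩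
  · intro u
    have : (fun v => g (K (g.symm u).1 (g.symm v).1, A (g.symm u).2 (g.symm v).2))
        = g ∘ (Prod.map (fun x => K (g.symm u).1 x) (fun y => A (g.symm u).2 y)) ∘ g.symm := rfl
    rw [this]
    exact g.bijective.comp (((hK.1 _).prodMap (hA.1 _)).comp g.symm.bijective)
  · intro v
    have : (fun u => g (K (g.symm u).1 (g.symm v).1, A (g.symm u).2 (g.symm v).2))
        = g ∘ (Prod.map (fun x => K x (g.symm v).1) (fun y => A y (g.symm v).2)) ∘ g.symm := rfl
    rw [this]
    exact g.bijective.comp (((hK.2 _).prodMap (hA.2 _)).comp g.symm.bijective)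
  · have hinj : ∀ c : α, Function.Injective fun b : β => g (c, b) := by
      intro c b b' hbb'
      have := g.injective hbb'
      exact (Prod.mk.injEq _ _ _ _ ▸ this).2
    refine ⟨fun i => Finset.univ.image fun b : β => g (e.symm i, b),
            fun i => Finset.univ.image fun b : β => g (e.symm i, b),
            fun i => Finset.univ.image fun b : β => g (K (e.symm i) (e.symm i), b),
            ?_, ?_, ?_, ?_, ?_, ?_, ?_⟩
    · intro i; rw [Finset.card_image_of_injective _ (hinj _), Finset.card_univ, hcardβ]
    · intro i; rw [Finset.card_image_of_injective _ (hinj _), Finset.card_univ, hcardβ]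
    · intro i; rw [Finset.card_image_of_injective _ (hinj _), Finset.card_univ, hcardβ]
    · intro i j hij
      rw [Finset.disjoint_left]
      rintro t ht ht'
      obtain ⟨b, -, rfl⟩ := Finset.mem_image.mp ht
      obtain ⟨b', -, hb'⟩ := Finset.mem_image.mp ht'
      have := g.injective hb'
      exact hij (e.symm.injective ((Prod.mk.injEq _ _ _ _ ▸ this).1).symm)
    · intro i j hij
      rw [Finset.disjoint_left]
      rintro t ht ht'
      obtain ⟨b, -, rfl⟩ := Finset.mem_image.mp ht
      obtain ⟨b', -, hb'⟩ := Finset.mem_image.mp ht'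
      have := g.injective hb'
      exact hij (e.symm.injective ((Prod.mk.injEq _ _ _ _ ▸ this).1).symm)
    · intro i j hij
      rw [Finset.disjoint_left]
      rintro t ht ht'
      obtain ⟨b, -, rfl⟩ := Finset.mem_image.mp ht
      obtain ⟨b', -, hb'⟩ := Finset.mem_image.mp ht'
      have h1 := g.injective hb'
      have h2 : K (e.symm j) (e.symm j) = K (e.symm i) (e.symm i) :=
        (Prod.mk.injEq _ _ _ _ ▸ h1).1
      exact hij (e.symm.injective (hdiag h2.symm))
    · intro i x hx y hy
      obtain ⟨b, -, rfl⟩ := Finset.mem_image.mp hx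
      obtain ⟨b', -, rfl⟩ := Finset.mem_image.mp hy
      simp only [Equiv.symm_apply_apply]
      exact Finset.mem_image.mpr ⟨A b b', Finset.mem_univ _, rfl⟩

/-- Odd order `k`: the square `c * (x + y)` on `ZMod k`, where `2c = 1`, is a latin
square with identity diagonal; combined with the product construction this
gives `ILS(ka; a^k)`. -/
lemma hasILS_odd {k a : ℕ} (hko : Odd k) (hk : 0 < k) (ha : 0 < a) :
    HasILS (k * a) (fun _ : Fin k => a) := by
  haveI : NeZero k := ⟨hk.ne'⟩
  haveI : NeZero a := ⟨ha.ne'⟩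
  set c : ZMod k := (((k + 1) / 2 : ℕ) : ZMod k) with hcdef
  have hmod : k % 2 = 1 := Nat.odd_iff.mp hko
  have hc : 2 * c = 1 := by
    have h2 : 2 * ((k + 1) / 2) = k + 1 := by omega
    calc (2 : ZMod k) * c = ((2 * ((k + 1) / 2) : ℕ) : ZMod k) := by push_cast; ring
      _ = ((k + 1 : ℕ) : ZMod k) := by rw [h2]
      _ = 1 := by push_cast [ZMod.natCast_self]; ring
  have hcan : ∀ z w : ZMod k, c * z = c * w → z = w := by
    intro z w hzw
    have h2 : 2 * (c * z) = 2 * (c * w) := by rw [hzw]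
    rwa [← mul_assoc, ← mul_assoc, hc, one_mul, one_mul] at h2
  have hd : ∀ x : ZMod k, c * (x + x) = x := by
    intro x
    calc c * (x + x) = (2 * c) * x := by ring
      _ = x := by rw [hc, one_mul]
  have hK : IsLS (fun x y : ZMod k => c * (x + y)) := by
    constructor
    · intro x
      constructor
      · intro y y' hyy'
        exact add_left_cancel (hcan _ _ hyy')
      · intro z
        refine ⟨2 * z - x, ?_⟩
        show c * (x + (2 * z - x)) = z
        calc c * (x + (2 * z - x)) = (2 * c) * z := by ring
          _ = z := by rw [hc, one_mul]
    · intro y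
      constructor
      · intro x x' hxx'
        exact add_right_cancel (hcan _ _ hxx')
      · intro z
        refine ⟨2 * z - y, ?_⟩
        show c * ((2 * z - y) + y) = z
        calc c * ((2 * z - y) + y) = (2 * c) * z := by ring
          _ = z := by rw [hc, one_mul]
  have hdiag : Function.Injective fun x : ZMod k => c * (x + x) := by
    intro x y hxy
    have hxy' : c * (x + x) = c * (y + y) := hxy
    rwa [hd x, hd y] at hxy'
  exact hasILS_of_diag (Fintype.equivFinOfCardEq (ZMod.card k))
    (Fintype.equivFinOfCardEq (ZMod.card a)) _ hK hdiag _ isLS_add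

/-- The prolongation square of even order `q + 1` built on `Option (ZMod q)`:
the idempotent square `h * (x + y)` (with `2h = 1`) on `ZMod q` (`q` odd) has the
transversal `{(x, x + 1)}`; replacing it by a new symbol `∞ = none` and adding a
new row and column yields an idempotent latin square of order `q + 1`. -/
def evenK (q : ℕ) (h : ZMod q) : Option (ZMod q) → Option (ZMod q) → Option (ZMod q)
  | some x, some y => if y = x + 1 then none else some (h * (x + y))
  | some x, none => some (x + h)
  | none, some y => some (y - 1 + h)
  | none, none => none

theorem evenK_good {q m : ℕ} (hq : 1 < q) (hm : q + 1 = m + m) :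
    IsLS (evenK q ((m : ℕ) : ZMod q)) ∧
      Function.Injective (fun u => evenK q ((m : ℕ) : ZMod q) u u) := by
  haveI : NeZero q := ⟨by omega⟩
  haveI : Fact (1 < q) := ⟨hq⟩
  set h : ZMod q := ((m : ℕ) : ZMod q) with hhdef
  have hh : 2 * h = 1 := by
    calc (2 : ZMod q) * h = ((2 * m : ℕ) : ZMod q) := by push_cast; ring
      _ = ((q + 1 : ℕ) : ZMod q) := by rw [show 2 * m = q + 1 by omega]
      _ = 1 := by push_cast [ZMod.natCast_self]; ring
  have hcan : ∀ z w : ZMod q, h * z = h * w → z = w := by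
    intro z w hzw
    have h2 : 2 * (h * z) = 2 * (h * w) := by rw [hzw]
    rwa [← mul_assoc, ← mul_assoc, hh, one_mul, one_mul] at h2
  have key1 : ∀ x : ZMod q, h * (2 * x + 1) = x + h := by
    intro x; linear_combination x * hh
  have key2 : ∀ y : ZMod q, h * (2 * y - 1) = y - 1 + h := by
    intro y; linear_combination (y - 1) * hh
  have hstep1 : ∀ x z : ZMod q, x + h = h * z → z = 2 * x + 1 := by
    intro x z hxz
    exact (hcan _ _ (by rw [key1, hxz])).symm
  have hstep2 : ∀ y z : ZMod q, y - 1 + h = h * z → z = 2 * y - 1 := by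
    intro y z hyz
    exact (hcan _ _ (by rw [key2, hyz])).symm
  have hdouble : ∀ z : ZMod q, h * (2 * z) = z := by
    intro z
    calc h * (2 * z) = (2 * h) * z := by ring
      _ = z := by rw [hh, one_mul]
  have row_inj : ∀ u, Function.Injective fun v => evenK q h u v := by
    rintro (_ | x) (_ | y) (_ | y') heq
    · rfl
    · simp [evenK] at heq
    · simp [evenK] at heq
    · simp only [evenK, Option.some_inj] at heq
      exact congrArg some (by linear_combination heq)
    · rfl
    · rcases eq_or_ne y' (x + 1) with hc | hc
      · simp only [evenK, if_pos hc] at heq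
        simp at heq
      · simp only [evenK, if_neg hc, Option.some_inj] at heq
        have h1 := hstep1 x (x + y') heq
        exact absurd (by linear_combination h1 : y' = x + 1) hc
    · rcases eq_or_ne y (x + 1) with hc | hc
      · simp only [evenK, if_pos hc] at heq
        simp at heq
      · simp only [evenK, if_neg hc, Option.some_inj] at heq
        have h1 := hstep1 x (x + y) heq.symm
        exact absurd (by linear_combination h1 : y = x + 1) hc
    · rcases eq_or_ne y (x + 1) with hc | hc <;> rcases eq_or_ne y' (x + 1) with hc' | hc'
      · exact congrArg some (hc.trans hc'.symm)
      · simp only [evenK, if_pos hc, if_neg hc'] at heq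
        simp at heq
      · simp only [evenK, if_neg hc, if_pos hc'] at heq
        simp at heq
      · simp only [evenK, if_neg hc, if_neg hc', Option.some_inj] at heq
        exact congrArg some (add_left_cancel (hcan _ _ heq))
  have col_inj : ∀ v, Function.Injective fun u => evenK q h u v := by
    rintro (_ | y) (_ | x) (_ | x') heq
    · rfl
    · simp [evenK] at heq
    · simp [evenK] at heq
    · simp only [evenK, Option.some_inj] at heq
      exact congrArg some (add_right_cancel heq)
    · rfl
    · rcases eq_or_ne y (x' + 1) with hc | hc
      · simp only [evenK, if_pos hc] at heq
        simp at heq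
      · simp only [evenK, if_neg hc, Option.some_inj] at heq
        have h1 := hstep2 y (x' + y) heq
        exact absurd (by linear_combination -h1 : y = x' + 1) hc
    · rcases eq_or_ne y (x + 1) with hc | hc
      · simp only [evenK, if_pos hc] at heq
        simp at heq
      · simp only [evenK, if_neg hc, Option.some_inj] at heq
        have h1 := hstep2 y (x + y) heq.symm
        exact absurd (by linear_combination -h1 : y = x + 1) hc
    · rcases eq_or_ne y (x + 1) with hc | hc <;> rcases eq_or_ne y (x' + 1) with hc' | hc'
      · exact congrArg some (by linear_combination hc' - hc)
      · simp only [evenK, if_pos hc, if_neg hc'] at heq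
        simp at heq
      · simp only [evenK, if_neg hc, if_pos hc'] at heq
        simp at heq
      · simp only [evenK, if_neg hc, if_neg hc', Option.some_inj] at heq
        exact congrArg some (add_right_cancel (hcan _ _ heq))
  have hdiagid : (fun u => evenK q h u u) = id := by
    funext u
    cases u with
    | none => rfl
    | some x =>
      show (if x = x + 1 then none else some (h * (x + x))) = some x
      rw [if_neg (by simp only [left_eq_add]; exact one_ne_zero)]
      rw [show x + x = 2 * x by ring, hdouble]
  refine ⟨⟨fun u => Finite.injective_iff_bijective.mp (row_inj u),
           fun v => Finite.injective_iff_bijective.mp (col_inj v)⟩, ?_⟩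
  rw [hdiagid]; exact Function.injective_id

/-- Even order `k ≥ 4`: `ILS(ka; a^k)` exists. -/
lemma hasILS_even {k a : ℕ} (hk4 : 4 ≤ k) (hke : Even k) (ha : 0 < a) :
    HasILS (k * a) (fun _ : Fin k => a) := by
  haveI : NeZero a := ⟨ha.ne'⟩
  obtain ⟨m, hm⟩ := hke
  obtain ⟨q, rfl⟩ : ∃ q, k = q + 1 := ⟨k - 1, by omega⟩
  haveI : NeZero q := ⟨by omega⟩
  obtain ⟨hK, hdiag⟩ := evenK_good (q := q) (m := m) (by omega) (by omega)
  have ecard : Fintype.card (Option (ZMod q)) = q + 1 := by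
    rw [Fintype.card_option, ZMod.card]
  exact hasILS_of_diag (Fintype.equivFinOfCardEq ecard)
    (Fintype.equivFinOfCardEq (ZMod.card a)) _ hK hdiag _ isLS_add

/-- There is no `ILS(2a; a a)` for `a ≥ 1`. -/
lemma no_k2 {a : ℕ} (ha : 0 < a) : ¬ HasILS (2 * a) (fun _ : Fin 2 => a) := by
  rintro ⟨L, ⟨hrow, hcol⟩, R, C, S, hR, hC, hS, hRd, hCd, hSd, hsub⟩
  have h01 : (0 : Fin 2) ≠ 1 := by decide
  have hRu : R 0 ∪ R 1 = Finset.univ := by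
    apply Finset.eq_univ_of_card
    rw [Finset.card_union_of_disjoint (hRd 0 1 h01), hR, hR, Fintype.card_fin]
    show a + a = 2 * a
    omega
  have himg : ∀ x ∈ R 0, (C 0).image (L x) = S 0 := by
    intro x hx
    apply Finset.eq_of_subset_of_card_le
    · intro s hs
      obtain ⟨y, hy, rfl⟩ := Finset.mem_image.mp hs
      exact hsub 0 x hx y hy
    · rw [Finset.card_image_of_injective _ (hrow x).1, hS, hC]
  obtain ⟨y1, hy1⟩ := Finset.card_pos.mp (show 0 < (C 1).card by rw [hC]; exact ha)
  obtain ⟨s, hs⟩ := Finset.card_pos.mp (show 0 < (S 0).card by rw [hS]; exact ha)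
  obtain ⟨x, hx⟩ := (hcol y1).2 s
  have hxu : x ∈ R 0 ∪ R 1 := hRu ▸ Finset.mem_univ x
  rcases Finset.mem_union.mp hxu with hx0 | hx1
  · have hmem : s ∈ (C 0).image (L x) := (himg x hx0).symm ▸ hs
    obtain ⟨y0, hy0, hy0e⟩ := Finset.mem_image.mp hmem
    have hyy : y0 = y1 := (hrow x).1 (hy0e.trans hx.symm)
    exact (Finset.disjoint_left.mp (hCd 0 1 h01) (hyy ▸ hy0)) hy1
  · have hmem : L x y1 ∈ S 1 := hsub 1 x hx1 y1 hy1
    have hx' : L x y1 = s := hx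
    rw [hx'] at hmem
    exact (Finset.disjoint_left.mp (hSd 0 1 h01) hs) hmem

/-- for `k ≥ 1` and `a ≥ 1`, a realization `LS(a^k)` exists if and
only if `k ≠ 2`. -/
theorem statement9 (k a : ℕ) (hk : 1 ≤ k) (ha : 1 ≤ a) :
    HasRealization (fun _ : Fin k => a) ↔ k ≠ 2 := by
  have hre : HasRealization (fun _ : Fin k => a) ↔ HasILS (k * a) (fun _ : Fin k => a) := by
    unfold HasRealization
    rw [show (∑ _i : Fin k, a) = k * a by
      simp [Finset.sum_const, Finset.card_univ, mul_comm]]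
  rw [hre]
  constructor
  · intro H hk2
    subst hk2
    exact no_k2 ha H
  · intro hne
    rcases Nat.even_or_odd k with he | ho
    · obtain ⟨t, ht⟩ := he
      exact hasILS_even (by omega) ⟨t, ht⟩ ha
    · exact hasILS_odd ho (by omega) ha
end

section
/- For any positive integers h_1 ≥ h_2, there is no realization LS(h_1 h_2), i.e. no latin square of order h_1 + h_2 with two disjoint subsquares of orders h_1 and h_2. -/
/-- for positive integers `h_1 ≥ h_2` there is no realization
`LS(h_1 h_2)`. -/
theorem statement11 (h₁ h₂ : ℕ) (h2pos : 0 < h₂) (hle : h₂ ≤ h₁) :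
    ¬ HasRealization ![h₁, h₂] := by
  unfold HasRealization HasILS
  have hsum : (∑ i : Fin 2, ![h₁, h₂] i) = h₁ + h₂ := by
    simp [Fin.sum_univ_two]
  rw [hsum]
  rintro ⟨L, ⟨hrow, hcol⟩, R, C, S, hR, hC, hS, hRd, hCd, hSd, hsub⟩
  have hR0 : (R 0).card = h₁ := by simpa using hR 0
  have hR1 : (R 1).card = h₂ := by simpa using hR 1
  have hC0 : (C 0).card = h₁ := by simpa using hC 0
  have hC1 : (C 1).card = h₂ := by simpa using hC 1
  have hS0 : (S 0).card = h₁ := by simpa using hS 0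
  have hS1 : (S 1).card = h₂ := by simpa using hS 1
  have h01 : (0 : Fin 2) ≠ 1 := by decide
  -- unions cover everything
  have hRu : R 0 ∪ R 1 = Finset.univ := by
    apply Finset.eq_univ_of_card
    rw [Finset.card_union_of_disjoint (hRd 0 1 h01), hR0, hR1, Fintype.card_fin]
  have hCu : C 0 ∪ C 1 = Finset.univ := by
    apply Finset.eq_univ_of_card
    rw [Finset.card_union_of_disjoint (hCd 0 1 h01), hC0, hC1, Fintype.card_fin]
  have hSu : S 0 ∪ S 1 = Finset.univ := by
    apply Finset.eq_univ_of_card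
    rw [Finset.card_union_of_disjoint (hSd 0 1 h01), hS0, hS1, Fintype.card_fin]
  -- step 1: for x ∈ R 0 and y ∈ C 1, L x y ∈ S 1
  have step1 : ∀ x ∈ R 0, ∀ y ∈ C 1, L x y ∈ S 1 := by
    intro x hx y hy
    have hinj : Function.Injective (fun j => L x j) := (hrow x).injective
    have himg : (C 0).image (fun j => L x j) = S 0 := by
      apply Finset.eq_of_subset_of_card_le
      · intro s hs
        obtain ⟨y', hy', rfl⟩ := Finset.mem_image.mp hs
        exact hsub 0 x hx y' hy'
      · rw [Finset.card_image_of_injective _ hinj, hC0, hS0]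
    have hnot : L x y ∉ S 0 := by
      intro hmem
      rw [← himg] at hmem
      obtain ⟨y', hy', hyy⟩ := Finset.mem_image.mp hmem
      have : y' = y := hinj hyy
      subst this
      exact (Finset.disjoint_left.mp (hCd 0 1 h01)) hy' hy
    have : L x y ∈ S 0 ∪ S 1 := hSu ▸ Finset.mem_univ _
    rcases Finset.mem_union.mp this with h | h
    · exact absurd h hnot
    · exact h
  -- step 2: pick a column y ∈ C 1 and derive a contradiction
  obtain ⟨y, hy⟩ := Finset.card_pos.mp (by rw [hC1]; exact h2pos)
  have hall : ∀ i, L i y ∈ S 1 := by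
    intro i
    have : i ∈ R 0 ∪ R 1 := hRu ▸ Finset.mem_univ _
    rcases Finset.mem_union.mp this with h | h
    · exact step1 i h y hy
    · exact hsub 1 i h y hy
  have hinj : Function.Injective (fun i => L i y) := (hcol y).injective
  have hsubS : (Finset.univ : Finset (Fin (h₁ + h₂))).image (fun i => L i y) ⊆ S 1 := by
    intro s hs
    obtain ⟨i, _, rfl⟩ := Finset.mem_image.mp hs
    exact hall i
  have hcard := Finset.card_le_card hsubS
  rw [Finset.card_image_of_injective _ hinj, Finset.card_univ, Fintype.card_fin, hS1] at hcard
  omega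
end

section
/- Let h_1 ≥ h_2 ≥ h_3 > 0 be integers. A realization LS(h_1 h_2 h_3) exists if and only if h_1 = h_2 = h_3. -/
/-- In a latin square, a subsquare's rows contain each subsquare symbol only
within the subsquare's columns. -/
lemma row_fill {n : ℕ} {L : Fin n → Fin n → Fin n} (hL : IsLatinSquare L)
    {R C S : Finset (Fin n)} {m : ℕ} (hC : C.card = m) (hS : S.card = m)
    (hsub : ∀ x ∈ R, ∀ y ∈ C, L x y ∈ S) {x : Fin n} (hx : x ∈ R) {y : Fin n} (hy : y ∉ C) :
    L x y ∉ S := by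
  have hinj : Function.Injective (L x) := (hL.1 x).1
  have himg : C.image (L x) = S := by
    apply Finset.eq_of_subset_of_card_le
    · intro s hs
      obtain ⟨y', hy', rfl⟩ := Finset.mem_image.mp hs
      exact hsub x hx y' hy'
    · rw [Finset.card_image_of_injective _ hinj, hC, hS]
  intro hmem
  rw [← himg] at hmem
  obtain ⟨y', hy', he⟩ := Finset.mem_image.mp hmem
  exact hy (hinj he ▸ hy')

/-- Column version of `row_fill`. -/
lemma col_fill {n : ℕ} {L : Fin n → Fin n → Fin n} (hL : IsLatinSquare L)
    {R C S : Finset (Fin n)} {m : ℕ} (hR : R.card = m) (hS : S.card = m)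
    (hsub : ∀ x ∈ R, ∀ y ∈ C, L x y ∈ S) {y : Fin n} (hy : y ∈ C) {x : Fin n} (hx : x ∉ R) :
    L x y ∉ S := by
  have : IsLatinSquare (fun a b => L b a) := ⟨hL.2, hL.1⟩
  exact row_fill this hR hS (fun a ha b hb => hsub b hb a ha) hy hx

/-- Counting: a row of subsquare 1 restricted to the columns of subsquare 2
is injective into the complement of `S1 ∪ S2`. -/
lemma count_le {n : ℕ} {L : Fin n → Fin n → Fin n} (hL : IsLatinSquare L)
    {R1 C1 S1 R2 C2 S2 : Finset (Fin n)} {a b : ℕ}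
    (hR1 : R1.card = a) (hC1 : C1.card = a) (hS1 : S1.card = a)
    (hR2 : R2.card = b) (hC2 : C2.card = b) (hS2 : S2.card = b)
    (hsub1 : ∀ x ∈ R1, ∀ y ∈ C1, L x y ∈ S1)
    (hsub2 : ∀ x ∈ R2, ∀ y ∈ C2, L x y ∈ S2)
    (hRd : Disjoint R1 R2) (hCd : Disjoint C1 C2) (hSd : Disjoint S1 S2)
    (ha : 0 < a) :
    b ≤ n - a - b := by
  obtain ⟨x, hx⟩ := Finset.card_pos.mp (hR1 ▸ ha)
  have hinj : Function.Injective (L x) := (hL.1 x).1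
  have hsubset : C2.image (L x) ⊆ Finset.univ \ (S1 ∪ S2) := by
    intro s hs
    obtain ⟨y, hy, rfl⟩ := Finset.mem_image.mp hs
    have h1 : L x y ∉ S1 :=
      row_fill hL hC1 hS1 hsub1 hx (Finset.disjoint_right.mp hCd hy)
    have h2 : L x y ∉ S2 :=
      col_fill hL hR2 hS2 hsub2 hy (Finset.disjoint_left.mp hRd hx)
    simp [h1, h2]
  have hcard := Finset.card_le_card hsubset
  rw [Finset.card_image_of_injective _ hinj, hC2,
    Finset.card_sdiff_of_subset (Finset.subset_univ _), Finset.card_union_of_disjoint hSd,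
    hS1, hS2, Finset.card_univ, Fintype.card_fin] at hcard
  omega

/-- The Cayley table of `Fin 3 × Fin h`, transported to `Fin (h + h + h)`,
realizes `LS(h h h)`. -/
lemma construction (h : ℕ) (hp : 0 < h) : HasILS (h + h + h) ![h, h, h] := by
  haveI : NeZero h := ⟨hp.ne'⟩
  let e : Fin 3 × Fin h ≃ Fin (h + h + h) :=
    finProdFinEquiv.trans (finCongr (by ring))
  refine ⟨fun u v => e ((e.symm u).1 + (e.symm v).1, (e.symm u).2 + (e.symm v).2), ?_, ?_⟩
  · constructor
    · intro u
      have : (fun v => e ((e.symm u).1 + (e.symm v).1, (e.symm u).2 + (e.symm v).2)) =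
          (e.symm.trans (((Equiv.addLeft (e.symm u).1).prodCongr
            (Equiv.addLeft (e.symm u).2)).trans e) : Fin (h+h+h) ≃ Fin (h+h+h)) := by
        funext v; rfl
      rw [this]; exact (Equiv.bijective _)
    · intro v
      have : (fun u => e ((e.symm u).1 + (e.symm v).1, (e.symm u).2 + (e.symm v).2)) =
          (e.symm.trans (((Equiv.addRight (e.symm v).1).prodCongr
            (Equiv.addRight (e.symm v).2)).trans e) : Fin (h+h+h) ≃ Fin (h+h+h)) := by
        funext u; rfl
      rw [this]; exact (Equiv.bijective _)
  · refine ⟨fun i => Finset.map e.toEmbedding ({i} ×ˢ Finset.univ),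
      fun i => Finset.map e.toEmbedding ({i} ×ˢ Finset.univ),
      fun i => Finset.map e.toEmbedding ({i + i} ×ˢ Finset.univ), ?_, ?_, ?_, ?_, ?_, ?_, ?_⟩
    · intro i; fin_cases i <;> simp
    · intro i; fin_cases i <;> simp
    · intro i; fin_cases i <;> simp
    · intro i j hij
      rw [Finset.disjoint_map]
      exact Finset.disjoint_left.mpr (by
        rintro ⟨a, b⟩ hx hy
        simp only [Finset.mem_product, Finset.mem_singleton] at hx hy
        exact hij (hx.1 ▸ hy.1 ▸ rfl))
    · intro i j hij
      rw [Finset.disjoint_map]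
      exact Finset.disjoint_left.mpr (by
        rintro ⟨a, b⟩ hx hy
        simp only [Finset.mem_product, Finset.mem_singleton] at hx hy
        exact hij (hx.1 ▸ hy.1 ▸ rfl))
    · intro i j hij
      have hne : i + i ≠ j + j := by
        revert hij; revert i j; decide
      rw [Finset.disjoint_map]
      exact Finset.disjoint_left.mpr (by
        rintro ⟨a, b⟩ hx hy
        simp only [Finset.mem_product, Finset.mem_singleton] at hx hy
        exact hne (hx.1 ▸ hy.1 ▸ rfl))
    · intro i x hx y hy
      obtain ⟨⟨a, u⟩, ha, rfl⟩ := Finset.mem_map.mp hx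
      obtain ⟨⟨b, v⟩, hb, rfl⟩ := Finset.mem_map.mp hy
      simp only [Finset.mem_product, Finset.mem_singleton] at ha hb
      refine Finset.mem_map.mpr ⟨(i + i, u + v), ?_, ?_⟩
      · simp
      · simp [Equiv.toEmbedding, ha.1, hb.1]

/-- for `h_1 ≥ h_2 ≥ h_3 > 0`, a realization `LS(h_1 h_2 h_3)`
exists if and only if `h_1 = h_2 = h_3`. -/
theorem statement12 (h₁ h₂ h₃ : ℕ) (h3pos : 0 < h₃) (h32 : h₃ ≤ h₂) (h21 : h₂ ≤ h₁) :
    HasRealization ![h₁, h₂, h₃] ↔ (h₁ = h₂ ∧ h₂ = h₃) := by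
  have hsum : (∑ i, ![h₁, h₂, h₃] i) = h₁ + h₂ + h₃ := by
    simp [Fin.sum_univ_three]
  constructor
  · rintro ⟨L, hL, R, C, S, hR, hC, hS, hRd, hCd, hSd, hsub⟩
    have e01 : (0 : Fin 3) ≠ 1 := by decide
    have hR0 : (R 0).card = h₁ := hR 0
    have hC0 : (C 0).card = h₁ := hC 0
    have hS0 : (S 0).card = h₁ := hS 0
    have hR1 : (R 1).card = h₂ := hR 1
    have hC1 : (C 1).card = h₂ := hC 1
    have hS1 : (S 1).card = h₂ := hS 1
    -- h₂ ≤ n - h₁ - h₂ = h₃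
    have k1 : h₂ ≤ (∑ i, ![h₁, h₂, h₃] i) - h₁ - h₂ :=
      count_le hL hR0 hC0 hS0 hR1 hC1 hS1 (hsub 0) (hsub 1)
        (hRd 0 1 e01) (hCd 0 1 e01) (hSd 0 1 e01) (by omega)
    -- h₁ ≤ n - h₂ - h₁ = h₃
    have k2 : h₁ ≤ (∑ i, ![h₁, h₂, h₃] i) - h₂ - h₁ :=
      count_le hL hR1 hC1 hS1 hR0 hC0 hS0 (hsub 1) (hsub 0)
        (hRd 1 0 e01.symm) (hCd 1 0 e01.symm) (hSd 1 0 e01.symm) (by omega)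
    rw [hsum] at k1 k2
    omega
  · rintro ⟨rfl, rfl⟩
    unfold HasRealization
    rw [hsum]
    exact construction h₁ h3pos
end

section
/- Let P, Q, R be partitions of n. For every outline rectangle O associated to (P,Q,R), there exists a latin square L of order n such that the reduction of L modulo (P,Q,R) equals O. -/
/-- For a partition `p = (p_1 … p_k)` of `n`, `blockSet p n i` is the block
`p[i]`: the interval of `p i` consecutive elements of `Fin n` following the
first `p_1 + … + p_{i-1}` elements. -/
def blockSet {k : ℕ} (p : Fin k → ℕ) (n : ℕ) (i : Fin k) : Finset (Fin n) :=
  Finset.univ.filter fun x =>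
    (∑ j ∈ Finset.univ.filter (· < i), p j) ≤ (x : ℕ) ∧
    (x : ℕ) < ∑ j ∈ Finset.univ.filter (· ≤ i), p j

/-- `L` is a realization of the partition `p` in normal form: `L` is a latin
square and, for each `i`, the rows and columns indexed by the block `p[i]`
form a subsquare using exactly the symbols in `p[i]` (as `L` is a latin
square and the blocks have the right sizes, mapping each such cell into
`p[i]` is equivalent to this). -/
def IsNormalFormRealization {k n : ℕ} (p : Fin k → ℕ) (L : Fin n → Fin n → Fin n) : Prop :=
  IsLatinSquare L ∧
  ∀ i : Fin k, ∀ x ∈ blockSet p n i, ∀ y ∈ blockSet p n i, L x y ∈ blockSet p n i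

/-- An outline rectangle associated to partitions `(p, q, r)` (of a common
`n`): a `u × v` array `O` of multisets with elements from `{1,…,t}` (encoded
as `Fin t`) such that the cell `O i j` contains exactly `p i * q j` elements
(with multiplicity), each symbol `l` occurs exactly `p i * r l` times in row
`i`, and each symbol `l` occurs exactly `q j * r l` times in column `j`. -/
def IsOutlineRectangle {u v t : ℕ} (p : Fin u → ℕ) (q : Fin v → ℕ) (r : Fin t → ℕ)
    (O : Fin u → Fin v → Multiset (Fin t)) : Prop :=
  (∀ i j, Multiset.card (O i j) = p i * q j) ∧
  (∀ i l, ∑ j, (O i j).count l = p i * r l) ∧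
  (∀ j l, ∑ i, (O i j).count l = q j * r l)

/-- `O` is the reduction of the latin square `L` modulo `(p, q, r)`: the
`(i, j)` cell of the reduction is the multiset of all entries of `L` in the
rows of block `p[i]` and columns of block `q[j]`, with every symbol lying in
block `r[l]` replaced by `l`.  Equivalently (as multisets are determined by
their counts), for all `i, j, l`, the number of copies of `l` in `O i j`
equals the number of cells `(x, y)` with `x ∈ p[i]`, `y ∈ q[j]` and
`L x y ∈ r[l]`. -/
def IsReduction {n u v t : ℕ} (p : Fin u → ℕ) (q : Fin v → ℕ) (r : Fin t → ℕ)
    (L : Fin n → Fin n → Fin n) (O : Fin u → Fin v → Multiset (Fin t)) : Prop :=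
  ∀ i j l, (O i j).count l =
    ((blockSet p n i ×ˢ blockSet q n j).filter
      (fun xy => L xy.1 xy.2 ∈ blockSet r n l)).card

section Aux
open Finset

/-- length of overlap of intervals `[u,v) ∩ [lo,hi)` -/
def ov (u v lo hi : ℕ) : ℕ := min v hi - max u lo

lemma ov_comm (u v lo hi : ℕ) : ov u v lo hi = ov lo hi u v := by
  unfold ov; omega

lemma sum_sub_telescope (f : ℕ → ℕ) (hf : Monotone f) (m : ℕ) :
    ∑ i ∈ range m, (f (i + 1) - f i) = f m - f 0 := by
  induction m with
  | zero => simp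
  | succ m ih =>
    rw [Finset.sum_range_succ, ih]
    have h1 := hf (Nat.le_succ m)
    have h2 := hf (Nat.zero_le m)
    simp only [Nat.succ_eq_add_one] at *
    omega

lemma ov_sum (m : ℕ) (c : ℕ → ℕ) (lo hi : ℕ) (hlo : lo ≤ hi)
    (hhi : hi ≤ ∑ i ∈ range m, c i) :
    ∑ i ∈ range m, ov (∑ i' ∈ range i, c i') (∑ i' ∈ range (i + 1), c i') lo hi
      = hi - lo := by
  set F : ℕ → ℕ := fun x => min hi (max lo x) with hF
  have hFmono : Monotone F := by
    intro x y hxy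
    simp only [hF]
    omega
  have key : ∀ i, ov (∑ i' ∈ range i, c i') (∑ i' ∈ range (i + 1), c i') lo hi
      = F (∑ i' ∈ range (i + 1), c i') - F (∑ i' ∈ range i, c i') := by
    intro i
    have hle : (∑ i' ∈ range i, c i') ≤ ∑ i' ∈ range (i + 1), c i' := by
      rw [Finset.sum_range_succ]; omega
    simp only [hF]; unfold ov; omega
  calc ∑ i ∈ range m, ov (∑ i' ∈ range i, c i') (∑ i' ∈ range (i + 1), c i') lo hi
      = ∑ i ∈ range m, ((fun x => F (∑ i' ∈ range x, c i')) (i+1)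
          - (fun x => F (∑ i' ∈ range x, c i')) i) := by
        exact Finset.sum_congr rfl fun i _ => key i
    _ = F (∑ i' ∈ range m, c i') - F (∑ i' ∈ range 0, c i') := by
        exact sum_sub_telescope (fun x => F (∑ i' ∈ range x, c i'))
          (fun x y hxy => hFmono (Finset.sum_le_sum_of_subset (Finset.range_subset_range.2 hxy))) m
    _ = hi - lo := by
        have : max lo (∑ i' ∈ range m, c i') ≥ hi := le_max_of_le_right hhi
        simp only [hF, Finset.range_zero, Finset.sum_empty]
        omega

section offsets
variable (w : ℕ → ℕ)

/-- offset: `offW w j = w 0 + ... + w (j-1)` -/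
def offW (j : ℕ) : ℕ := ∑ j' ∈ range j, w j'

lemma offW_mono : Monotone (offW w) := by
  intro i j hij
  exact Finset.sum_le_sum_of_subset (Finset.range_subset_range.2 hij)

lemma offW_add0 (i i' : ℕ) (h : i < i') : offW w i + w i ≤ offW w i' := by
  have h1 : offW w (i + 1) ≤ offW w i' := offW_mono w h
  have h2 : offW w (i + 1) = offW w i + w i := by
    rw [offW, offW, Finset.sum_range_succ]
  omega

lemma offW_exist0 (u : ℕ) (xv : ℕ) (h : xv < offW w u) :
    ∃ i < u, offW w i ≤ xv ∧ xv < offW w i + w i := by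
  induction u with
  | zero => simp [offW] at h
  | succ u ih =>
    by_cases hx : xv < offW w u
    · obtain ⟨i, hi, h1, h2⟩ := ih hx
      exact ⟨i, Nat.lt_succ_of_lt hi, h1, h2⟩
    · refine ⟨u, Nat.lt_succ_self u, by omega, ?_⟩
      rw [offW, Finset.sum_range_succ] at h
      push_neg at hx
      have : offW w u = ∑ j' ∈ range u, w j' := rfl
      omega

lemma offW_uniq0 {i i' xv : ℕ} (h1 : offW w i ≤ xv) (h2 : xv < offW w i + w i)
    (h1' : offW w i' ≤ xv) (h2' : xv < offW w i' + w i') : i = i' := by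
  by_contra hne
  rcases Nat.lt_or_ge i i' with h | h
  · have := offW_add0 w i i' h; omega
  · have hlt : i' < i := by omega
    have := offW_add0 w i' i hlt; omega

end offsets

lemma offW_add (w : ℕ → ℕ) (i i' : ℕ) (h : i < i') :
    (∑ j' ∈ range i, w j') + w i ≤ ∑ j' ∈ range i', w j' :=
  offW_add0 w i i' h

lemma offW_exist (w : ℕ → ℕ) (u : ℕ) (xv : ℕ) (h : xv < ∑ j' ∈ range u, w j') :
    ∃ i < u, (∑ j' ∈ range i, w j') ≤ xv ∧ xv < (∑ j' ∈ range i, w j') + w i :=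
  offW_exist0 w u xv h

lemma offW_uniq (w : ℕ → ℕ) {i i' xv : ℕ} (h1 : (∑ j' ∈ range i, w j') ≤ xv)
    (h2 : xv < (∑ j' ∈ range i, w j') + w i)
    (h1' : (∑ j' ∈ range i', w j') ≤ xv)
    (h2' : xv < (∑ j' ∈ range i', w j') + w i') : i = i' :=
  offW_uniq0 w h1 h2 h1' h2'

/-- the set of pairs `(j, s)` with `j < v`, `s < a j`. -/
def pairSet (v : ℕ) (a : ℕ → ℕ) : Finset (ℕ × ℕ) :=
  (range v).biUnion (fun j => (range (a j)).image (fun s => (j, s)))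

lemma pairSet_mem (v : ℕ) (a : ℕ → ℕ) (x : ℕ × ℕ) :
    x ∈ pairSet v a ↔ x.1 < v ∧ x.2 < a x.1 := by
  simp only [pairSet, Finset.mem_biUnion, Finset.mem_image, Finset.mem_range]
  constructor
  · rintro ⟨j, hj, s, hs, rfl⟩; exact ⟨hj, hs⟩
  · rintro ⟨h1, h2⟩; exact ⟨x.1, h1, x.2, h2, rfl⟩

lemma pairSet_sum {β : Type*} [AddCommMonoid β] (v : ℕ) (a : ℕ → ℕ) (g : ℕ × ℕ → β) :
    ∑ x ∈ pairSet v a, g x = ∑ j ∈ range v, ∑ s ∈ range (a j), g (j, s) := by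
  rw [pairSet, Finset.sum_biUnion]
  · refine Finset.sum_congr rfl fun j _ => ?_
    rw [Finset.sum_image]
    intro s _ s' _ h
    simpa using h
  · intro j1 h1 j2 h2 hne
    simp only [Finset.disjoint_left, Finset.mem_image, Finset.mem_range]
    rintro x ⟨s, _, rfl⟩ ⟨s', _, h⟩
    injection h with h1 h2
    exact hne h1.symm

lemma pairSet_card (v : ℕ) (a : ℕ → ℕ) :
    (pairSet v a).card = ∑ j ∈ range v, a j := by
  rw [Finset.card_eq_sum_ones, pairSet_sum]
  simp

lemma pairSet_filter (v : ℕ) (a : ℕ → ℕ) (j : ℕ) (hj : j < v) :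
    (pairSet v a).filter (fun x => x.1 = j) = (range (a j)).image (fun s => (j, s)) := by
  ext x
  simp only [Finset.mem_filter, pairSet_mem, Finset.mem_image, Finset.mem_range]
  constructor
  · rintro ⟨⟨h1, h2⟩, rfl⟩; exact ⟨x.2, h2, rfl⟩
  · rintro ⟨s, hs, rfl⟩; exact ⟨⟨hj, hs⟩, rfl⟩

lemma pairSet_filter_sum {β : Type*} [AddCommMonoid β] (v : ℕ) (a : ℕ → ℕ) (j : ℕ)
    (hj : j < v) (g : ℕ × ℕ → β) :
    ∑ x ∈ (pairSet v a).filter (fun x => x.1 = j), g x = ∑ s ∈ range (a j), g (j, s) := by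
  rw [pairSet_filter v a j hj, Finset.sum_image]
  intro s _ s' _ h
  injection h

theorem split_nat (v t d : ℕ) (hd : 0 < d) (a b : ℕ → ℕ) (M : ℕ → ℕ → ℕ)
    (h1 : ∀ j < v, ∑ k ∈ range t, M j k = d * a j)
    (h2 : ∀ k < t, ∑ j ∈ range v, M j k = d * b k) :
    ∃ N : ℕ → ℕ → ℕ, (∀ j k, N j k ≤ M j k) ∧
      (∀ j < v, ∑ k ∈ range t, N j k = a j) ∧
      (∀ k < t, ∑ j ∈ range v, N j k = b k) := by
  classical
  set m := ∑ j ∈ range v, a j with hmdef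
  set X := pairSet v a with hX
  set Y := pairSet t b with hY
  -- total masses agree
  have hm : ∑ k ∈ range t, b k = m := by
    have e1 : ∑ j ∈ range v, ∑ k ∈ range t, M j k = d * m := by
      rw [hmdef, Finset.mul_sum]
      exact Finset.sum_congr rfl fun j hj => h1 j (Finset.mem_range.1 hj)
    have e2 : ∑ k ∈ range t, ∑ j ∈ range v, M j k = d * ∑ k ∈ range t, b k := by
      rw [Finset.mul_sum]
      exact Finset.sum_congr rfl fun k hk => h2 k (Finset.mem_range.1 hk)
    rw [Finset.sum_comm] at e1
    rw [e1] at e2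
    exact (Nat.eq_of_mul_eq_mul_left hd e2.symm)
  -- step 1 : distribute the edges at each left block among its vertices
  set e1 : ℕ × ℕ → ℕ → ℕ := fun x k =>
    ov (∑ k' ∈ range k, M x.1 k') (∑ k' ∈ range (k + 1), M x.1 k')
      (x.2 * d) (x.2 * d + d) with he1
  have e1row : ∀ x ∈ X, ∑ k ∈ range t, e1 x k = d := by
    intro x hx
    rw [pairSet_mem] at hx
    rw [he1]
    have := ov_sum t (M x.1) (x.2 * d) (x.2 * d + d) (by omega)
      (by rw [h1 x.1 hx.1]
          have : x.2 + 1 ≤ a x.1 := hx.2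
          calc x.2 * d + d = (x.2 + 1) * d := by ring
            _ ≤ a x.1 * d := Nat.mul_le_mul_right d this
            _ = d * a x.1 := Nat.mul_comm _ _)
    rw [this]; omega
  have e1col : ∀ j < v, ∀ k < t, ∑ s ∈ range (a j), e1 (j, s) k = M j k := by
    intro j hj k hk
    have conv : ∀ s, e1 (j, s) k
        = ov (∑ i' ∈ range s, (fun _ => d) i') (∑ i' ∈ range (s + 1), (fun _ => d) i')
          (∑ k' ∈ range k, M j k') (∑ k' ∈ range k, M j k' + M j k) := by
      intro s
      rw [he1, ov_comm]
      simp only [Finset.sum_const, Finset.card_range, smul_eq_mul, Nat.succ_mul]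
      rw [Finset.sum_range_succ]
    calc ∑ s ∈ range (a j), e1 (j, s) k
        = ∑ s ∈ range (a j), ov (∑ i' ∈ range s, (fun _ => d) i')
            (∑ i' ∈ range (s + 1), (fun _ => d) i')
            (∑ k' ∈ range k, M j k') (∑ k' ∈ range k, M j k' + M j k) :=
          Finset.sum_congr rfl fun s _ => conv s
      _ = (∑ k' ∈ range k, M j k' + M j k) - ∑ k' ∈ range k, M j k' := by
          apply ov_sum
          · omega
          · simp only [Finset.sum_const, Finset.card_range, smul_eq_mul]
            calc ∑ k' ∈ range k, M j k' + M j k = ∑ k' ∈ range (k+1), M j k' := by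
                  rw [Finset.sum_range_succ]
              _ ≤ ∑ k' ∈ range t, M j k' :=
                  Finset.sum_le_sum_of_subset (Finset.range_subset_range.2 hk)
              _ = d * a j := h1 j hj
              _ = a j * d := Nat.mul_comm _ _
      _ = M j k := by omega
  have e1colX : ∀ k < t, ∑ x ∈ X, e1 x k = d * b k := by
    intro k hk
    rw [hX, pairSet_sum]
    calc ∑ j ∈ range v, ∑ s ∈ range (a j), e1 (j, s) k
        = ∑ j ∈ range v, M j k :=
          Finset.sum_congr rfl fun j hj => e1col j (Finset.mem_range.1 hj) k hk
      _ = d * b k := h2 k hk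
  -- enumeration of X
  have hkeylt : ∀ x ∈ X, (∑ j' ∈ range x.1, a j') + x.2 < m := by
    intro x hx
    rw [hX, pairSet_mem] at hx
    have h3 := offW_add a x.1 v hx.1
    omega
  have hexists : ∀ i : ℕ, ∃ jp : ℕ, i < m →
      jp < v ∧ (∑ j' ∈ range jp, a j') ≤ i ∧ i < (∑ j' ∈ range jp, a j') + a jp := by
    intro i
    by_cases h : i < m
    · obtain ⟨j, hj, hj1, hj2⟩ := offW_exist a v i (hmdef ▸ h)
      exact ⟨j, fun _ => ⟨hj, hj1, hj2⟩⟩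
    · exact ⟨0, fun hc => absurd hc h⟩
  choose J hJ using hexists
  set ρ : ℕ → ℕ × ℕ := fun i => (J i, i - ∑ j' ∈ range (J i), a j') with hρ
  set ι : ℕ × ℕ → ℕ := fun x => (∑ j' ∈ range x.1, a j') + x.2 with hι
  have ρmem : ∀ i < m, ρ i ∈ X ∧ ι (ρ i) = i := by
    intro i hi
    obtain ⟨hj, hj1, hj2⟩ := hJ i hi
    refine ⟨?_, ?_⟩
    · rw [hX, pairSet_mem, hρ]
      exact ⟨hj, by simp; omega⟩
    · simp only [hρ, hι]
      omega
  have ρinv : ∀ x ∈ X, ι x < m ∧ ρ (ι x) = x := by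
    intro x hx
    have hxm : ι x < m := hkeylt x hx
    refine ⟨hxm, ?_⟩
    obtain ⟨hj, hj1, hj2⟩ := hJ (ι x) hxm
    rw [hX, pairSet_mem] at hx
    have hfst : J (ι x) = x.1 := by
      apply offW_uniq a hj1 hj2
      · simp only [hι]; omega
      · simp only [hι]; omega
    show (J (ι x), ι x - ∑ j' ∈ range (J (ι x)), a j') = x
    rw [hfst]
    have hsnd : ι x - ∑ j' ∈ range x.1, a j' = x.2 := by
      simp only [hι]; omega
    rw [hsnd]
  have sumρ : ∀ g : ℕ × ℕ → ℕ, ∑ i ∈ range m, g (ρ i) = ∑ x ∈ X, g x := by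
    intro g
    apply Finset.sum_nbij' ρ ι
    · intro i hi; exact (ρmem i (Finset.mem_range.1 hi)).1
    · intro x hx; exact Finset.mem_range.2 (ρinv x hx).1
    · intro i hi; exact (ρmem i (Finset.mem_range.1 hi)).2
    · intro x hx; exact (ρinv x hx).2
    · intro i _; rfl
  -- step 2 : distribute the edges at each right block among its vertices
  set D : ℕ × ℕ → ℕ → ℕ := fun x k => ∑ i ∈ range (ι x), e1 (ρ i) k with hD
  set e : ℕ × ℕ → ℕ × ℕ → ℕ := fun x y =>
    ov (D x y.1) (D x y.1 + e1 x y.1) (y.2 * d) (y.2 * d + d) with he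
  have Dsucc : ∀ x ∈ X, ∀ k, D x k + e1 x k = ∑ i ∈ range (ι x + 1), e1 (ρ i) k := by
    intro x hx k
    rw [Finset.sum_range_succ, (ρinv x hx).2]
  have colTot : ∀ k < t, ∑ i ∈ range m, e1 (ρ i) k = d * b k := by
    intro k hk
    rw [sumρ (fun x => e1 x k)]
    exact e1colX k hk
  have Dbound : ∀ x ∈ X, ∀ k < t, D x k + e1 x k ≤ d * b k := by
    intro x hx k hk
    rw [Dsucc x hx k, ← colTot k hk]
    exact Finset.sum_le_sum_of_subset (Finset.range_subset_range.2 (ρinv x hx).1)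
  have erow1 : ∀ x ∈ X, ∀ k < t, ∑ s' ∈ range (b k), e x (k, s') = e1 x k := by
    intro x hx k hk
    have conv : ∀ s', e x (k, s')
        = ov (∑ i' ∈ range s', (fun _ => d) i') (∑ i' ∈ range (s' + 1), (fun _ => d) i')
          (D x k) (D x k + e1 x k) := by
      intro s'
      rw [he, ov_comm]
      simp only [Finset.sum_const, Finset.card_range, smul_eq_mul, Nat.succ_mul]
    calc ∑ s' ∈ range (b k), e x (k, s')
        = ∑ s' ∈ range (b k), ov (∑ i' ∈ range s', (fun _ => d) i')
            (∑ i' ∈ range (s' + 1), (fun _ => d) i') (D x k) (D x k + e1 x k) :=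
          Finset.sum_congr rfl fun s' _ => conv s'
      _ = (D x k + e1 x k) - D x k := by
          apply ov_sum
          · omega
          · simp only [Finset.sum_const, Finset.card_range, smul_eq_mul]
            rw [Nat.mul_comm]
            exact Dbound x hx k hk
      _ = e1 x k := by omega
  have exrow : ∀ x ∈ X, ∑ y ∈ Y, e x y = d := by
    intro x hx
    rw [hY, pairSet_sum]
    calc ∑ k ∈ range t, ∑ s' ∈ range (b k), e x (k, s')
        = ∑ k ∈ range t, e1 x k :=
          Finset.sum_congr rfl fun k hk => erow1 x hx k (Finset.mem_range.1 hk)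
      _ = d := e1row x hx
  have ecol : ∀ y ∈ Y, ∑ x ∈ X, e x y = d := by
    intro y hy
    rw [hY, pairSet_mem] at hy
    rw [← sumρ (fun x => e x y)]
    have conv : ∀ i ∈ range m, e (ρ i) y
        = ov (∑ i' ∈ range i, e1 (ρ i') y.1) (∑ i' ∈ range (i + 1), e1 (ρ i') y.1)
          (y.2 * d) (y.2 * d + d) := by
      intro i hi
      have hii : ι (ρ i) = i := (ρmem i (Finset.mem_range.1 hi)).2
      simp only [he, hD, hii]
      rw [Finset.sum_range_succ]
    calc ∑ i ∈ range m, e (ρ i) y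
        = ∑ i ∈ range m, ov (∑ i' ∈ range i, e1 (ρ i') y.1)
            (∑ i' ∈ range (i + 1), e1 (ρ i') y.1) (y.2 * d) (y.2 * d + d) :=
          Finset.sum_congr rfl conv
      _ = (y.2 * d + d) - y.2 * d := by
          apply ov_sum
          · omega
          · rw [colTot y.1 hy.1]
            calc y.2 * d + d = (y.2 + 1) * d := by ring
              _ ≤ b y.1 * d := Nat.mul_le_mul_right d hy.2
              _ = d * b y.1 := Nat.mul_comm _ _
      _ = d := by omega
  have eblock : ∀ j < v, ∀ k < t,
      ∑ x ∈ X.filter (fun x => x.1 = j), ∑ y ∈ Y.filter (fun y => y.1 = k), e x y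
        = M j k := by
    intro j hj k hk
    have inner : ∀ x ∈ X, ∑ y ∈ Y.filter (fun y => y.1 = k), e x y = e1 x k := by
      intro x hx
      rw [hY, pairSet_filter_sum t b k hk]
      exact erow1 x hx k hk
    calc ∑ x ∈ X.filter (fun x => x.1 = j), ∑ y ∈ Y.filter (fun y => y.1 = k), e x y
        = ∑ x ∈ X.filter (fun x => x.1 = j), e1 (x.1, x.2) k := by
          refine Finset.sum_congr rfl fun x hx => ?_
          rw [inner x (Finset.mem_of_mem_filter x hx)]
      _ = ∑ s ∈ range (a j), e1 (j, s) k := by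
          rw [hX]; exact pairSet_filter_sum v a j hj _
      _ = M j k := e1col j hj k hk
  -- Hall's theorem
  have hall : ∀ S : Finset {x // x ∈ X},
      S.card ≤ (S.biUnion (fun x => Y.filter (fun y => 1 ≤ e ↑x y))).card := by
    intro S
    set B := S.biUnion (fun x => Y.filter (fun y => 1 ≤ e ↑x y)) with hB
    have hBY : ∀ y ∈ B, y ∈ Y := by
      intro y hy
      rw [hB, Finset.mem_biUnion] at hy
      obtain ⟨x, _, hy⟩ := hy
      exact Finset.mem_of_mem_filter y hy
    have key : d * S.card ≤ d * B.card := by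
      calc d * S.card = ∑ _x ∈ S, d := by rw [Finset.sum_const, smul_eq_mul, Nat.mul_comm]
        _ = ∑ x ∈ S, ∑ y ∈ Y.filter (fun y => 1 ≤ e ↑x y), e ↑x y := by
            refine Finset.sum_congr rfl fun x _ => ?_
            rw [Finset.sum_filter_of_ne ?_]
            · exact (exrow ↑x x.2).symm
            · intro y _ hy
              omega
        _ ≤ ∑ x ∈ S, ∑ y ∈ B, e ↑x y := by
            refine Finset.sum_le_sum fun x hx => ?_
            refine Finset.sum_le_sum_of_subset ?_
            rw [hB]
            exact Finset.subset_biUnion_of_mem (fun x : {x // x ∈ X} => Y.filter (fun y => 1 ≤ e ↑x y)) hx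
        _ = ∑ y ∈ B, ∑ x ∈ S, e ↑x y := Finset.sum_comm
        _ ≤ ∑ y ∈ B, ∑ x ∈ X.attach, e ↑x y := by
            refine Finset.sum_le_sum fun y _ => ?_
            refine Finset.sum_le_sum_of_subset ?_
            rw [← Finset.univ_eq_attach]
            exact Finset.subset_univ S
        _ = ∑ y ∈ B, ∑ x ∈ X, e x y := by
            refine Finset.sum_congr rfl fun y _ => ?_
            exact Finset.sum_attach X (fun x => e x y)
        _ = ∑ _y ∈ B, d := Finset.sum_congr rfl fun y hy => ecol y (hBY y hy)
        _ = d * B.card := by rw [Finset.sum_const, smul_eq_mul, Nat.mul_comm]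
    exact Nat.le_of_mul_le_mul_left key hd
  obtain ⟨f, hfinj, hfm⟩ :=
    (Finset.all_card_le_biUnion_card_iff_exists_injective
      (fun x : {x // x ∈ X} => Y.filter (fun y => 1 ≤ e ↑x y))).1 hall
  set g : ℕ × ℕ → ℕ × ℕ := fun x => if h : x ∈ X then f ⟨x, h⟩ else (0, 0) with hg
  have hgY : ∀ x ∈ X, g x ∈ Y ∧ 1 ≤ e x (g x) := by
    intro x h
    have h' := hfm ⟨x, h⟩
    rw [Finset.mem_filter] at h'
    simp only [hg, dif_pos h]
    exact h'
  have hginj : ∀ x ∈ X, ∀ x' ∈ X, g x = g x' → x = x' := by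
    intro x hx x' hx' hgg
    simp only [hg, dif_pos hx, dif_pos hx'] at hgg
    have := hfinj hgg
    exact congrArg Subtype.val this
  have hcardY : Y.card = m := by rw [hY, pairSet_card, hm]
  have hcardX : X.card = m := by rw [hX]; exact pairSet_card v a
  have himage : X.image g = Y := by
    apply Finset.eq_of_subset_of_card_le
    · intro y hy
      rw [Finset.mem_image] at hy
      obtain ⟨x, hx, rfl⟩ := hy
      exact (hgY x hx).1
    · rw [hcardY, Finset.card_image_of_injOn (fun x hx x' hx' h => hginj x hx x' hx' h),
        hcardX]
  have hgsurj : ∀ y ∈ Y, ∃ x ∈ X, g x = y := by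
    intro y hy
    rw [← himage, Finset.mem_image] at hy
    exact hy
  -- the selected submatrix
  refine ⟨fun j k => (X.filter (fun x => x.1 = j ∧ (g x).1 = k)).card, ?_, ?_, ?_⟩
  · intro j k
    show (X.filter (fun x => x.1 = j ∧ (g x).1 = k)).card ≤ M j k
    by_cases hj : j < v
    · by_cases hk : k < t
      · set P := ((X.filter (fun x => x.1 = j)) ×ˢ (Y.filter (fun y => y.1 = k))).filter
          (fun xy => 1 ≤ e xy.1 xy.2) with hP
        have step1 : (X.filter (fun x => x.1 = j ∧ (g x).1 = k)).card ≤ P.card := by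
          apply Finset.card_le_card_of_injOn (fun x => (x, g x))
          · intro x hx
            rw [Finset.mem_coe, Finset.mem_filter] at hx
            obtain ⟨hxX, hx1, hx2⟩ := hx
            rw [Finset.mem_coe, hP, Finset.mem_filter, Finset.mem_product]
            exact ⟨⟨Finset.mem_filter.2 ⟨hxX, hx1⟩, Finset.mem_filter.2 ⟨(hgY x hxX).1, hx2⟩⟩,
              (hgY x hxX).2⟩
          · intro x _ x' _ hxy
            exact congrArg Prod.fst hxy
        have step2 : P.card ≤ ∑ xy ∈ P, e xy.1 xy.2 := by
          rw [Finset.card_eq_sum_ones]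
          refine Finset.sum_le_sum fun xy hxy => ?_
          rw [hP, Finset.mem_filter] at hxy
          exact hxy.2
        have step3 : ∑ xy ∈ P, e xy.1 xy.2
            ≤ ∑ xy ∈ (X.filter (fun x => x.1 = j)) ×ˢ (Y.filter (fun y => y.1 = k)),
                e xy.1 xy.2 := by
          rw [hP]
          exact Finset.sum_le_sum_of_subset (Finset.filter_subset _ _)
        have step4 : ∑ xy ∈ (X.filter (fun x => x.1 = j)) ×ˢ (Y.filter (fun y => y.1 = k)),
            e xy.1 xy.2 = M j k := by
          rw [Finset.sum_product]
          exact eblock j hj k hk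
        omega
      · have hempty : X.filter (fun x => x.1 = j ∧ (g x).1 = k) = ∅ := by
          refine Finset.filter_eq_empty_iff.2 fun {x} hx => ?_
          rintro ⟨-, h2⟩
          have := (hgY x hx).1
          rw [hY, pairSet_mem] at this
          omega
        rw [hempty]
        simp
    · have hempty : X.filter (fun x => x.1 = j ∧ (g x).1 = k) = ∅ := by
        refine Finset.filter_eq_empty_iff.2 fun {x} hx => ?_
        rintro ⟨h1, -⟩
        rw [hX, pairSet_mem] at hx
        omega
      rw [hempty]
      simp
  · intro j hj
    show ∑ k ∈ range t, (X.filter (fun x => x.1 = j ∧ (g x).1 = k)).card = a j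
    have hmap : ∀ x ∈ X.filter (fun x => x.1 = j), (g x).1 ∈ range t := by
      intro x hx
      have hxX := Finset.mem_of_mem_filter x hx
      have := (hgY x hxX).1
      rw [hY, pairSet_mem] at this
      exact Finset.mem_range.2 this.1
    have hfib := Finset.card_eq_sum_card_fiberwise hmap
    have hcard : (X.filter (fun x => x.1 = j)).card = a j := by
      rw [hX, pairSet_filter v a j hj,
        Finset.card_image_of_injective _ (fun s s' h => by injection h), Finset.card_range]
    rw [← hcard, hfib]
    refine Finset.sum_congr rfl fun k _ => ?_
    rw [Finset.filter_filter]
  · intro k hk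
    show ∑ j ∈ range v, (X.filter (fun x => x.1 = j ∧ (g x).1 = k)).card = b k
    have hmap : ∀ x ∈ X.filter (fun x => (g x).1 = k), x.1 ∈ range v := by
      intro x hx
      have hxX := Finset.mem_of_mem_filter x hx
      rw [hX, pairSet_mem] at hxX
      exact Finset.mem_range.2 hxX.1
    have hfib := Finset.card_eq_sum_card_fiberwise hmap
    have hcard : (X.filter (fun x => (g x).1 = k)).card
        = (Y.filter (fun y => y.1 = k)).card := by
      apply Finset.card_bij (fun x _ => g x)
      · intro x hx
        rw [Finset.mem_filter] at hx ⊢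
        exact ⟨(hgY x hx.1).1, hx.2⟩
      · intro x hx x' hx' h
        exact hginj x (Finset.mem_of_mem_filter _ hx) x' (Finset.mem_of_mem_filter _ hx') h
      · intro y hy
        rw [Finset.mem_filter] at hy
        obtain ⟨x, hxX, rfl⟩ := hgsurj y hy.1
        exact ⟨x, Finset.mem_filter.2 ⟨hxX, hy.2⟩, rfl⟩
    have hYk : (Y.filter (fun y => y.1 = k)).card = b k := by
      rw [hY, pairSet_filter t b k hk,
        Finset.card_image_of_injective _ (fun s s' h => by injection h), Finset.card_range]
    calc ∑ j ∈ range v, (X.filter (fun x => x.1 = j ∧ (g x).1 = k)).card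
        = ∑ j ∈ range v, ((X.filter (fun x => (g x).1 = k)).filter (fun x => x.1 = j)).card := by
          refine Finset.sum_congr rfl fun j _ => ?_
          rw [Finset.filter_filter]
          congr 1
          apply Finset.filter_congr
          intro x _
          constructor
          · rintro ⟨u1, u2⟩; exact ⟨u2, u1⟩
          · rintro ⟨u1, u2⟩; exact ⟨u2, u1⟩
      _ = (X.filter (fun x => (g x).1 = k)).card := hfib.symm
      _ = b k := by rw [hcard, hYk]




theorem decomp_nat (v t : ℕ) (a b : ℕ → ℕ) : ∀ (d : ℕ) (M : ℕ → ℕ → ℕ),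
    (∀ j < v, ∑ k ∈ range t, M j k = d * a j) →
    (∀ k < t, ∑ j ∈ range v, M j k = d * b k) →
    ∃ F : ℕ → ℕ → ℕ → ℕ,
      (∀ s < d, ∀ j < v, ∑ k ∈ range t, F s j k = a j) ∧
      (∀ s < d, ∀ k < t, ∑ j ∈ range v, F s j k = b k) ∧
      (∀ j < v, ∀ k < t, ∑ s ∈ range d, F s j k = M j k) := by
  intro d
  induction d with
  | zero =>
    intro M h1 h2
    refine ⟨fun _ _ _ => 0, by omega, by omega, ?_⟩
    intro j hj k hk
    have := h1 j hj
    rw [Nat.zero_mul] at this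
    have hz := (Finset.sum_eq_zero_iff.1 this) k (Finset.mem_range.2 hk)
    simp [hz]
  | succ d ih =>
    intro M h1 h2
    obtain ⟨N, hNle, hNrow, hNcol⟩ := split_nat v t (d + 1) (Nat.succ_pos d) a b M h1 h2
    set M' : ℕ → ℕ → ℕ := fun j k => M j k - N j k with hM'
    have h1' : ∀ j < v, ∑ k ∈ range t, M' j k = d * a j := by
      intro j hj
      have key : ∑ k ∈ range t, (M j k - N j k) + ∑ k ∈ range t, N j k
          = ∑ k ∈ range t, M j k := by
        rw [← Finset.sum_add_distrib]
        exact Finset.sum_congr rfl fun k _ => by have := hNle j k; omega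
      have hM := h1 j hj
      rw [Nat.succ_mul] at hM
      have hN := hNrow j hj
      simp only [hM']
      omega
    have h2' : ∀ k < t, ∑ j ∈ range v, M' j k = d * b k := by
      intro k hk
      have key : ∑ j ∈ range v, (M j k - N j k) + ∑ j ∈ range v, N j k
          = ∑ j ∈ range v, M j k := by
        rw [← Finset.sum_add_distrib]
        exact Finset.sum_congr rfl fun j _ => by have := hNle j k; omega
      have hM := h2 k hk
      rw [Nat.succ_mul] at hM
      have hN := hNcol k hk
      simp only [hM']
      omega
    obtain ⟨F, hF1, hF2, hF3⟩ := ih M' h1' h2'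
    refine ⟨fun s => if s = 0 then N else F (s - 1), ?_, ?_, ?_⟩
    · intro s hs j hj
      by_cases h0 : s = 0
      · simp only [h0, if_pos rfl]
        exact hNrow j hj
      · simp only [if_neg h0]
        exact hF1 (s - 1) (by omega) j hj
    · intro s hs k hk
      by_cases h0 : s = 0
      · simp only [h0, if_pos rfl]
        exact hNcol k hk
      · simp only [if_neg h0]
        exact hF2 (s - 1) (by omega) k hk
    · intro j hj k hk
      rw [Finset.sum_range_succ']
      simp only [Nat.add_sub_cancel, if_neg (Nat.succ_ne_zero _), if_true, reduceIte]
      rw [hF3 j hj k hk]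
      have := hNle j k
      simp only [hM']
      omega

/-- extension of a `Fin u`-indexed family to `ℕ` -/
def pext {u : ℕ} (p : Fin u → ℕ) : ℕ → ℕ := fun jv => if h : jv < u then p ⟨jv, h⟩ else 0

lemma pext_sum {u : ℕ} (p : Fin u → ℕ) (iv : ℕ) (hiv : iv ≤ u) :
    ∑ j ∈ Finset.univ.filter (fun j : Fin u => j.val < iv), p j
      = ∑ jv ∈ range iv, pext p jv := by
  refine Finset.sum_bij' (fun (j : Fin u) _ => j.val)
    (fun jv hjv => (⟨jv, lt_of_lt_of_le (Finset.mem_range.1 hjv) hiv⟩ : Fin u))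
    ?_ ?_ ?_ ?_ ?_
  · intro j hj
    exact Finset.mem_range.2 ((Finset.mem_filter.1 hj).2)
  · intro jv hjv
    simp only [Finset.mem_filter, Finset.mem_univ, true_and]
    exact Finset.mem_range.1 hjv
  · intro j _
    rfl
  · intro jv _
    rfl
  · intro j _
    rw [pext]
    rw [dif_pos j.isLt]

lemma pext_total {u n : ℕ} (p : Fin u → ℕ) (hpn : ∑ i, p i = n) :
    ∑ jv ∈ range u, pext p jv = n := by
  rw [← pext_sum p u (le_refl u), ← hpn]
  apply Finset.sum_congr
  · ext j
    simp only [Finset.mem_filter, Finset.mem_univ, true_and, iff_true]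
    exact j.isLt
  · intros; rfl

lemma blockSet_mem {u n : ℕ} (p : Fin u → ℕ) (i : Fin u) (x : Fin n) :
    x ∈ blockSet p n i ↔
      (∑ jv ∈ range i.val, pext p jv) ≤ x.val ∧
        x.val < (∑ jv ∈ range i.val, pext p jv) + p i := by
  rw [blockSet, Finset.mem_filter]
  have h1 : ∑ j ∈ Finset.univ.filter (· < i), p j = ∑ jv ∈ range i.val, pext p jv := by
    rw [← pext_sum p i.val (le_of_lt i.isLt)]
    apply Finset.sum_congr
    · ext j
      simp only [Finset.mem_filter, Finset.mem_univ, true_and, Fin.lt_def]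
    · intros; rfl
  have h2 : ∑ j ∈ Finset.univ.filter (· ≤ i), p j
      = (∑ jv ∈ range i.val, pext p jv) + p i := by
    have h3 : Finset.univ.filter (fun j : Fin u => j ≤ i)
        = Finset.univ.filter (fun j : Fin u => j.val < i.val + 1) := by
      ext j
      simp only [Finset.mem_filter, Finset.mem_univ, true_and, Fin.le_def]
      omega
    rw [h3, pext_sum p (i.val + 1) i.isLt, Finset.sum_range_succ]
    simp [pext]
  rw [h1, h2]
  simp

theorem refine_step (u n : ℕ) (p : Fin u → ℕ) (hpn : ∑ i, p i = n)
    (v t : ℕ) (a : Fin v → ℕ) (b : Fin t → ℕ) (A : Fin u → Fin v → Fin t → ℕ)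
    (h1 : ∀ i j, ∑ l, A i j l = p i * a j)
    (h2 : ∀ i l, ∑ j, A i j l = p i * b l) :
    ∃ B : Fin n → Fin v → Fin t → ℕ,
      (∀ x j, ∑ l, B x j l = a j) ∧
      (∀ x l, ∑ j, B x j l = b l) ∧
      (∀ i j l, ∑ x ∈ blockSet p n i, B x j l = A i j l) := by
  classical
  set off : ℕ → ℕ := fun iv => ∑ jv ∈ range iv, pext p jv with hoff
  have hofftotal : off u = n := pext_total p hpn
  -- the amalgamated array, ℕ-indexed
  set Am : Fin u → ℕ → ℕ → ℕ := fun i jv kv =>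
    if h : jv < v ∧ kv < t then A i ⟨jv, h.1⟩ ⟨kv, h.2⟩ else 0 with hAm
  have hAmeq : ∀ (i : Fin u) (j : Fin v) (l : Fin t), Am i j.val l.val = A i j l := by
    intro i j l
    simp only [hAm]
    rw [dif_pos (show (j : ℕ) < v ∧ (l : ℕ) < t from ⟨j.isLt, l.isLt⟩)]
  have marg1 : ∀ i : Fin u, ∀ jv < v, ∑ kv ∈ range t, Am i jv kv = p i * pext a jv := by
    intro i jv hjv
    rw [← Fin.sum_univ_eq_sum_range (fun kv => Am i jv kv) t]
    rw [pext, dif_pos hjv, ← h1 i ⟨jv, hjv⟩]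
    refine Finset.sum_congr rfl fun l _ => ?_
    exact hAmeq i ⟨jv, hjv⟩ l
  have marg2 : ∀ i : Fin u, ∀ kv < t, ∑ jv ∈ range v, Am i jv kv = p i * pext b kv := by
    intro i kv hkv
    rw [← Fin.sum_univ_eq_sum_range (fun jv => Am i jv kv) v]
    rw [pext, dif_pos hkv, ← h2 i ⟨kv, hkv⟩]
    refine Finset.sum_congr rfl fun j _ => ?_
    exact hAmeq i j ⟨kv, hkv⟩
  choose F hF1 hF2 hF3 using fun i : Fin u =>
    decomp_nat v t (pext a) (pext b) (p i) (Am i) (marg1 i) (marg2 i)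
  -- the refined array
  set B : Fin n → Fin v → Fin t → ℕ := fun x j l =>
    ∑ i : Fin u, ∑ s ∈ range (p i), if off i.val + s = x.val then F i s j.val l.val else 0
    with hB
  -- uniqueness of the block decomposition
  have hpext : ∀ i : Fin u, pext p i.val = p i := by
    intro i
    rw [pext, dif_pos i.isLt]
  have hofflt : ∀ i : Fin u, ∀ s < p i, off i.val + s < n := by
    intro i s hs
    have h3 := offW_add (pext p) i.val u i.isLt
    have h4 := hpext i
    have h5 : (∑ j' ∈ range u, pext p j') = n := pext_total p hpn
    simp only [hoff]
    omega
  have hexist : ∀ w < n, ∃ i : Fin u, ∃ s < p i, off i.val + s = w := by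
    intro w hw
    obtain ⟨iv, hiv, hle, hlt⟩ := offW_exist (pext p) u w (by rwa [pext_total p hpn])
    refine ⟨⟨iv, hiv⟩, w - ∑ j' ∈ range iv, pext p j', ?_, ?_⟩
    · have := hpext ⟨iv, hiv⟩
      simp only at this
      omega
    · simp only [hoff]
      omega
  have huniq : ∀ (i i' : Fin u) (s s' : ℕ), s < p i → s' < p i' →
      off i.val + s = off i'.val + s' → i = i' ∧ s = s' := by
    intro i i' s s' hs hs' heq
    have h3 : i.val = i'.val := by
      apply offW_uniq (pext p) (i := i.val) (i' := i'.val) (xv := off i.val + s)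
      · simp only [hoff] at *; omega
      · have := hpext i; simp only [hoff] at *; omega
      · simp only [hoff] at *; omega
      · have := hpext i'; simp only [hoff] at *; omega
    have h4 : i = i' := Fin.ext h3
    subst h4
    exact ⟨rfl, by omega⟩
  -- an indicator-sum evaluation
  have unit : ∀ (x : Fin n) (c : Fin u → ℕ → ℕ),
      (∑ i : Fin u, ∑ s ∈ range (p i), if off i.val + s = x.val then c i s else 0)
        = ∑ i : Fin u, ∑ s ∈ range (p i),
            if off i.val + s = x.val then c ((hexist x.val x.isLt).choose)
              ((hexist x.val x.isLt).choose_spec.choose) else 0 := by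
    intro x c
    refine Finset.sum_congr rfl fun i _ => Finset.sum_congr rfl fun s hs => ?_
    by_cases hcond : off i.val + s = x.val
    · obtain ⟨hs0, heq0⟩ := (hexist x.val x.isLt).choose_spec.choose_spec
      obtain ⟨hieq, hseq⟩ := huniq _ _ _ _ (Finset.mem_range.1 hs) hs0 (by omega)
      rw [hieq, hseq]
    · rw [if_neg hcond, if_neg hcond]
  have hoffeq : ∀ iv, off iv = ∑ jv ∈ range iv, pext p jv := fun iv => rfl
  have total : ∀ (x : Fin n) (c0 : ℕ),
      (∑ i : Fin u, ∑ s ∈ range (p i), if off i.val + s = x.val then c0 else 0) = c0 := by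
    intro x c0
    obtain ⟨I, sI, hsI, heqI⟩ := hexist x.val x.isLt
    rw [Finset.sum_eq_single I]
    · rw [Finset.sum_eq_single_of_mem sI (Finset.mem_range.2 hsI)]
      · rw [if_pos heqI]
      · intro s hs hneq
        have hcond : ¬(off I.val + s = x.val) := by
          intro hcond
          exact hneq (huniq I I s sI (Finset.mem_range.1 hs) hsI (by omega)).2
        rw [if_neg hcond]
    · intro i _ hne
      refine Finset.sum_eq_zero fun s hs => ?_
      have hcond : ¬(off i.val + s = x.val) := by
        intro hcond
        exact hne (huniq i I s sI (Finset.mem_range.1 hs) hsI (by omega)).1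
      rw [if_neg hcond]
    · intro h
      exact absurd (Finset.mem_univ I) h
  refine ⟨B, ?_, ?_, ?_⟩
  · intro x j
    calc ∑ l, B x j l
        = ∑ i : Fin u, ∑ s ∈ range (p i), ∑ l : Fin t,
            (if off i.val + s = x.val then F i s j.val l.val else 0) := by
          simp only [hB]
          rw [Finset.sum_comm]
          exact Finset.sum_congr rfl fun i _ => Finset.sum_comm
      _ = ∑ i : Fin u, ∑ s ∈ range (p i), (if off i.val + s = x.val then a j else 0) := by
          refine Finset.sum_congr rfl fun i _ => Finset.sum_congr rfl fun s hs => ?_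
          by_cases hcond : off i.val + s = x.val
          · simp only [if_pos hcond]
            rw [Fin.sum_univ_eq_sum_range (fun kv => F i s j.val kv) t]
            rw [hF1 i s (Finset.mem_range.1 hs) j.val j.isLt]
            simp only [pext]
            rw [dif_pos j.isLt]
          · simp only [if_neg hcond, Finset.sum_const_zero]
      _ = a j := total x (a j)
  · intro x l
    calc ∑ j, B x j l
        = ∑ i : Fin u, ∑ s ∈ range (p i), ∑ j : Fin v,
            (if off i.val + s = x.val then F i s j.val l.val else 0) := by
          simp only [hB]
          rw [Finset.sum_comm]
          exact Finset.sum_congr rfl fun i _ => Finset.sum_comm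
      _ = ∑ i : Fin u, ∑ s ∈ range (p i), (if off i.val + s = x.val then b l else 0) := by
          refine Finset.sum_congr rfl fun i _ => Finset.sum_congr rfl fun s hs => ?_
          by_cases hcond : off i.val + s = x.val
          · simp only [if_pos hcond]
            rw [Fin.sum_univ_eq_sum_range (fun jv => F i s jv l.val) v]
            rw [hF2 i s (Finset.mem_range.1 hs) l.val l.isLt]
            simp only [pext]
            rw [dif_pos l.isLt]
          · simp only [if_neg hcond, Finset.sum_const_zero]
      _ = b l := total x (b l)
  · intro i0 j l
    calc ∑ x ∈ blockSet p n i0, B x j l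
        = ∑ i : Fin u, ∑ s ∈ range (p i), ∑ x ∈ blockSet p n i0,
            (if off i.val + s = x.val then F i s j.val l.val else 0) := by
          simp only [hB]
          rw [Finset.sum_comm]
          exact Finset.sum_congr rfl fun i _ => Finset.sum_comm
      _ = ∑ s ∈ range (p i0), F i0 s j.val l.val := by
          rw [Finset.sum_eq_single i0]
          · refine Finset.sum_congr rfl fun s hs => ?_
            have hs' := Finset.mem_range.1 hs
            have hx0mem : (⟨off i0.val + s, hofflt i0 s hs'⟩ : Fin n) ∈ blockSet p n i0 := by
              rw [blockSet_mem]
              have hh := hoffeq i0.val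
              have hp0 := hpext i0
              constructor
              · show (∑ jv ∈ range i0.val, pext p jv) ≤ off i0.val + s
                omega
              · show off i0.val + s < (∑ jv ∈ range i0.val, pext p jv) + p i0
                omega
            rw [Finset.sum_eq_single_of_mem _ hx0mem]
            · rw [if_pos rfl]
            · intro x hx hneq
              have hcond : ¬(off i0.val + s = x.val) := by
                intro hcond
                exact hneq (Fin.ext hcond.symm)
              rw [if_neg hcond]
          · intro i _ hne
            refine Finset.sum_eq_zero fun s hs => ?_
            refine Finset.sum_eq_zero fun x hx => ?_
            have hcond : ¬(off i.val + s = x.val) := by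
              intro hcond
              rw [blockSet_mem] at hx
              have hh := hoffeq i0.val
              have hp0 := hpext i0
              exact hne (huniq i i0 s (x.val - off i0.val) (Finset.mem_range.1 hs)
                (by omega) (by omega)).1
            rw [if_neg hcond]
          · intro h
            exact absurd (Finset.mem_univ i0) h
      _ = A i0 j l := by
          rw [hF3 i0 j.val j.isLt l.val l.isLt]
          exact hAmeq i0 j l


lemma sum_eq_one_unique {n : ℕ} (m : Fin n → ℕ) (h : ∑ z, m z = 1) :
    ∃! z, 0 < m z := by
  have hex : ∃ z, 0 < m z := by
    by_contra hc
    push_neg at hc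
    have : ∑ z, m z = 0 := Finset.sum_eq_zero fun z _ => by have := hc z; omega
    omega
  obtain ⟨z, hz⟩ := hex
  refine ⟨z, hz, fun w hw => ?_⟩
  by_contra hne
  have hsub : ({w, z} : Finset (Fin n)) ⊆ Finset.univ := Finset.subset_univ _
  have hpair : ∑ x ∈ ({w, z} : Finset (Fin n)), m x = m w + m z :=
    Finset.sum_pair hne
  have hle : ∑ x ∈ ({w, z} : Finset (Fin n)), m x ≤ ∑ z, m z :=
    Finset.sum_le_sum_of_subset hsub
  omega

lemma latin_of_unit (n : ℕ) (T : Fin n → Fin n → Fin n → ℕ)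
    (hz : ∀ x y, ∑ z, T x y z = 1)
    (hy : ∀ x z, ∑ y, T x y z = 1)
    (hx : ∀ y z, ∑ x, T x y z = 1) :
    ∃ L : Fin n → Fin n → Fin n, IsLatinSquare L ∧
      (∀ x y z, T x y z = if L x y = z then 1 else 0) := by
  classical
  set L : Fin n → Fin n → Fin n := fun x y => (sum_eq_one_unique _ (hz x y)).choose with hL
  have hLpos : ∀ x y, 0 < T x y (L x y) := fun x y =>
    (sum_eq_one_unique _ (hz x y)).choose_spec.1
  have hLuniq : ∀ x y w, 0 < T x y w → w = L x y := fun x y =>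
    (sum_eq_one_unique _ (hz x y)).choose_spec.2
  have hind : ∀ x y z, T x y z = if L x y = z then 1 else 0 := by
    intro x y z
    by_cases hzz : L x y = z
    · rw [if_pos hzz, ← hzz]
      have hle : T x y (L x y) ≤ ∑ z, T x y z :=
        Finset.single_le_sum (fun _ _ => Nat.zero_le _) (Finset.mem_univ _)
      have := hLpos x y
      have := hz x y
      omega
    · rw [if_neg hzz]
      by_contra hne
      exact hzz ((hLuniq x y z (by omega)).symm)
  have two_le : ∀ (m : Fin n → ℕ) (y y' : Fin n), y ≠ y' → 0 < m y → 0 < m y' →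
      2 ≤ ∑ w, m w := by
    intro m y y' hne h1 h2
    have hpair : ∑ x ∈ ({y, y'} : Finset (Fin n)), m x = m y + m y' :=
      Finset.sum_pair hne
    have hle : ∑ x ∈ ({y, y'} : Finset (Fin n)), m x ≤ ∑ w, m w :=
      Finset.sum_le_sum_of_subset (Finset.subset_univ _)
    omega
  refine ⟨L, ⟨?_, ?_⟩, hind⟩
  · intro x
    rw [Fintype.bijective_iff_injective_and_card]
    refine ⟨?_, rfl⟩
    intro y y' hyy
    by_contra hne
    have h1 : 0 < T x y (L x y) := hLpos x y
    have h2 : 0 < T x y' (L x y) := by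
      have : L x y' = L x y := by simpa using hyy.symm
      rw [← this]
      exact hLpos x y'
    have ht := two_le (fun w => T x w (L x y)) y y' hne h1 h2
    have hlink : ∑ w : Fin n, (fun w => T x w (L x y)) w = ∑ w : Fin n, T x w (L x y) := rfl
    have := hy x (L x y)
    omega
  · intro y
    rw [Fintype.bijective_iff_injective_and_card]
    refine ⟨?_, rfl⟩
    intro x x' hxx
    by_contra hne
    have h1 : 0 < T x y (L x y) := hLpos x y
    have h2 : 0 < T x' y (L x y) := by
      have : L x' y = L x y := by simpa using hxx.symm
      rw [← this]
      exact hLpos x' y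
    have ht := two_le (fun w => T w y (L x y)) x x' hne h1 h2
    have hlink : ∑ w : Fin n, (fun w => T w y (L x y)) w = ∑ w : Fin n, T w y (L x y) := rfl
    have := hx y (L x y)
    omega

lemma blockSet_existsUnique {u n : ℕ} (p : Fin u → ℕ) (hpn : ∑ i, p i = n) (x : Fin n) :
    ∃! i, x ∈ blockSet p n i := by
  obtain ⟨iv, hiv, hl, hr⟩ := offW_exist (pext p) u x.val
    (by rw [pext_total p hpn]; exact x.isLt)
  have hpe : pext p iv = p ⟨iv, hiv⟩ := by rw [pext, dif_pos hiv]
  refine ⟨⟨iv, hiv⟩, ?_, ?_⟩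
  · show x ∈ blockSet p n ⟨iv, hiv⟩
    rw [blockSet_mem]
    simp only [Fin.val_mk]
    constructor
    · exact hl
    · omega
  · intro i hi
    rw [blockSet_mem] at hi
    have hpe' : pext p i.val = p i := by rw [pext, dif_pos i.isLt]
    apply Fin.ext
    show i.val = iv
    exact offW_uniq (pext p) (i := i.val) (i' := iv) (xv := x.val)
      (by omega) (by omega) (by omega) (by omega)

lemma sum_blockSet {u n : ℕ} (p : Fin u → ℕ) (hpn : ∑ i, p i = n) (g : Fin n → ℕ) :
    ∑ i, ∑ x ∈ blockSet p n i, g x = ∑ x, g x := by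
  classical
  have step : ∀ i : Fin u, ∑ x ∈ blockSet p n i, g x
      = ∑ x : Fin n, if x ∈ blockSet p n i then g x else 0 := by
    intro i
    rw [← Finset.sum_filter]
    congr 1
    ext x
    simp [blockSet, Finset.mem_filter]
  calc ∑ i, ∑ x ∈ blockSet p n i, g x
      = ∑ i : Fin u, ∑ x : Fin n, if x ∈ blockSet p n i then g x else 0 :=
        Finset.sum_congr rfl fun i _ => step i
    _ = ∑ x : Fin n, ∑ i : Fin u, (if x ∈ blockSet p n i then g x else 0) := Finset.sum_comm
    _ = ∑ x : Fin n, g x := by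
        refine Finset.sum_congr rfl fun x _ => ?_
        obtain ⟨i0, hi0, huniq⟩ := blockSet_existsUnique p hpn x
        rw [Finset.sum_eq_single i0]
        · rw [if_pos hi0]
        · intro i _ hne
          rw [if_neg]
          intro hmem
          exact hne (huniq i hmem)
        · intro h
          exact absurd (Finset.mem_univ i0) h

/-- Hilton: let `p, q, r` be partitions of `n`.  Every outline
rectangle `O` associated to `(p, q, r)` lifts to a latin square `L` of order
`n` whose reduction modulo `(p, q, r)` equals `O`. -/
theorem statement14 (n u v t : ℕ) (p : Fin u → ℕ) (q : Fin v → ℕ) (r : Fin t → ℕ)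
    (hp : ∀ i, 0 < p i) (hq : ∀ j, 0 < q j) (hr : ∀ l, 0 < r l)
    (hpn : ∑ i, p i = n) (hqn : ∑ j, q j = n) (hrn : ∑ l, r l = n)
    (O : Fin u → Fin v → Multiset (Fin t))
    (hO : IsOutlineRectangle p q r O) :
    ∃ L : Fin n → Fin n → Fin n, IsLatinSquare L ∧ IsReduction p q r L O := by
  classical
  obtain ⟨hO1, hO2, hO3⟩ := hO
  set A : Fin u → Fin v → Fin t → ℕ := fun i j l => (O i j).count l with hA
  have hS1 : ∀ i j, ∑ l, A i j l = p i * q j := by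
    intro i j
    rw [← hO1 i j]
    rw [← Multiset.toFinset_sum_count_eq (O i j)]
    symm
    apply Finset.sum_subset (Finset.subset_univ _)
    intro l _ hl
    exact Multiset.count_eq_zero_of_notMem (by simpa [Multiset.mem_toFinset] using hl)
  have hS2 : ∀ i l, ∑ j, A i j l = p i * r l := hO2
  have hS3 : ∀ j l, ∑ i, A i j l = q j * r l := hO3
  -- refine the row partition
  obtain ⟨B1, hB1a, hB1b, hB1c⟩ := refine_step u n p hpn v t q r A hS1 hS2
  -- refine the column partition
  set A2 : Fin v → Fin n → Fin t → ℕ := fun j x l => B1 x j l with hA2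
  have hA2_1 : ∀ j x, ∑ l, A2 j x l = q j * (fun _ : Fin n => 1) x := by
    intro j x
    simp only [hA2, mul_one]
    exact hB1a x j
  have hA2_2 : ∀ j l, ∑ x, A2 j x l = q j * r l := by
    intro j l
    calc ∑ x, A2 j x l = ∑ x, B1 x j l := rfl
      _ = ∑ i, ∑ x ∈ blockSet p n i, B1 x j l := (sum_blockSet p hpn _).symm
      _ = ∑ i, A i j l := Finset.sum_congr rfl fun i _ => hB1c i j l
      _ = q j * r l := hS3 j l
  obtain ⟨B2, hB2a, hB2b, hB2c⟩ :=
    refine_step v n q hqn n t (fun _ => 1) r A2 hA2_1 hA2_2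
  -- refine the symbol partition
  set A3 : Fin t → Fin n → Fin n → ℕ := fun l x y => B2 y x l with hA3
  have hA3_1 : ∀ l x, ∑ y, A3 l x y = r l * (fun _ : Fin n => 1) x := by
    intro l x
    simp only [hA3, mul_one]
    calc ∑ y, B2 y x l = ∑ j, ∑ y ∈ blockSet q n j, B2 y x l := (sum_blockSet q hqn _).symm
      _ = ∑ j, A2 j x l := Finset.sum_congr rfl fun j _ => hB2c j x l
      _ = ∑ j, B1 x j l := rfl
      _ = r l := hB1b x l
  have hA3_2 : ∀ l y, ∑ x, A3 l x y = r l * (fun _ : Fin n => 1) y := by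
    intro l y
    simp only [hA3, mul_one]
    exact hB2b y l
  obtain ⟨B3, hB3a, hB3b, hB3c⟩ :=
    refine_step t n r hrn n n (fun _ => 1) (fun _ => 1) A3 hA3_1 hA3_2
  -- the латin unit array
  set T : Fin n → Fin n → Fin n → ℕ := fun x y z => B3 z x y with hT
  have hz : ∀ x y, ∑ z, T x y z = 1 := by
    intro x y
    calc ∑ z, T x y z = ∑ z, B3 z x y := rfl
      _ = ∑ l, ∑ z ∈ blockSet r n l, B3 z x y := (sum_blockSet r hrn _).symm
      _ = ∑ l, A3 l x y := Finset.sum_congr rfl fun l _ => hB3c l x y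
      _ = ∑ l, B2 y x l := rfl
      _ = 1 := hB2a y x
  obtain ⟨L, hLatin, hLind⟩ := latin_of_unit n T hz
    (fun x z => hB3a z x) (fun y z => hB3b z y)
  refine ⟨L, hLatin, ?_⟩
  intro i j l
  calc (O i j).count l = A i j l := rfl
    _ = ∑ x ∈ blockSet p n i, B1 x j l := (hB1c i j l).symm
    _ = ∑ x ∈ blockSet p n i, ∑ y ∈ blockSet q n j, B2 y x l :=
        Finset.sum_congr rfl fun x _ => (hB2c j x l).symm
    _ = ∑ x ∈ blockSet p n i, ∑ y ∈ blockSet q n j, ∑ z ∈ blockSet r n l, B3 z x y :=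
        Finset.sum_congr rfl fun x _ => Finset.sum_congr rfl fun y _ => (hB3c l x y).symm
    _ = ∑ x ∈ blockSet p n i, ∑ y ∈ blockSet q n j,
          (if L x y ∈ blockSet r n l then 1 else 0) := by
        refine Finset.sum_congr rfl fun x _ => Finset.sum_congr rfl fun y _ => ?_
        calc ∑ z ∈ blockSet r n l, B3 z x y
            = ∑ z ∈ blockSet r n l, (if L x y = z then 1 else 0) :=
              Finset.sum_congr rfl fun z _ => hLind x y z
          _ = if L x y ∈ blockSet r n l then 1 else 0 :=
              Finset.sum_ite_eq (blockSet r n l) (L x y) (fun _ => 1)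
    _ = ((blockSet p n i ×ˢ blockSet q n j).filter
          (fun xy => L xy.1 xy.2 ∈ blockSet r n l)).card := by
        rw [Finset.card_filter, Finset.sum_product]

end Aux
end

section
/- Let P = (h_1 … h_k) be a partition of n, and let O be an outline square associated to P such that for every i ∈ {1,…,k} the cell O(i,i) consists of h_i^2 copies of symbol i. Then there exists a latin square L of order n whose reduction modulo (P,P,P) equals O, and L is a realization of P in normal form. -/
namespace Stmt15
open Finset

section Core
variable {β γ : Type*} [Fintype β] [Fintype γ] [DecidableEq β] [DecidableEq γ]

/-- From counts with total at least `D`, extract subcounts with total exactly `D`. -/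
lemma extract_le (g : γ → ℕ) (D : ℕ) (hD : D ≤ ∑ x, g x) :
    ∃ h : γ → ℕ, (∀ x, h x ≤ g x) ∧ ∑ x, h x = D := by
  induction D with
  | zero => exact ⟨fun _ => 0, fun _ => Nat.zero_le _, by simp⟩
  | succ D ih =>
    obtain ⟨h, hle, hsum⟩ := ih (le_trans (Nat.le_succ D) hD)
    have : ∃ x, h x < g x := by
      by_contra hc
      push_neg at hc
      have : ∑ x, g x ≤ ∑ x, h x := Finset.sum_le_sum fun x _ => hc x
      omega
    obtain ⟨x0, hx0⟩ := this
    refine ⟨fun x => if x = x0 then h x + 1 else h x, fun x => ?_, ?_⟩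
    · by_cases hx : x = x0 <;> simp [hx] <;> [omega; exact hle x]
    · have hsplit : ∀ x : γ, (if x = x0 then h x + 1 else h x)
          = h x + (if x = x0 then 1 else 0) := by intro x; split <;> simp
      simp_rw [hsplit, Finset.sum_add_distrib,
        Finset.sum_ite_eq' Finset.univ x0 (fun _ => 1), Finset.mem_univ, if_true, hsum]

/-- Distribute a multiset of counts of total `D * q` into `q` parts of total `D` each. -/
lemma distribute (g : γ → ℕ) (D q : ℕ) (hg : ∑ x, g x = D * q) :
    ∃ E : Fin q → γ → ℕ, (∀ s, ∑ x, E s x = D) ∧ (∀ x, ∑ s, E s x = g x) := by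
  induction q generalizing g with
  | zero =>
    refine ⟨fun s => absurd s.2 (by omega), fun s => absurd s.2 (by omega), fun x => ?_⟩
    have : g x = 0 := by
      simp only [Nat.mul_zero] at hg
      have := Finset.single_le_sum (f := g) (fun y _ => Nat.zero_le _) (Finset.mem_univ x)
      omega
    simp [this]
  | succ q ih =>
    obtain ⟨h, hle, hsum⟩ := extract_le g D (by rw [hg]; nlinarith)
    obtain ⟨E, hE1, hE2⟩ := ih (fun x => g x - h x) (by
      have : ∑ x, (g x - h x) = ∑ x, g x - ∑ x, h x :=
        Finset.sum_tsub_distrib Finset.univ (fun x _ => hle x)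
      rw [this, hg, hsum]; ring_nf; omega)
    refine ⟨fun s => Fin.cases h E s, ?_, ?_⟩
    · intro s
      refine Fin.cases ?_ ?_ s
      · simpa using hsum
      · intro s'; simpa using hE1 s'
    · intro x
      rw [Fin.sum_univ_succ]
      simp only [Fin.cases_zero, Fin.cases_succ]
      rw [hE2 x]
      have := hle x; omega


/-- A `D`-regular bipartite multigraph (given by edge multiplicities) on finite vertex
sets has a perfect matching. -/
lemma regular_matching (c : β → γ → ℕ) (D : ℕ) (hD : 0 < D)
    (hrow : ∀ b, ∑ x, c b x = D) (hcol : ∀ x, ∑ b, c b x = D) :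
    ∃ f : β → γ, Function.Bijective f ∧ ∀ b, 0 < c b (f b) := by
  set t : β → Finset γ := fun b => univ.filter (fun x => 0 < c b x) with ht
  have hall : ∀ s : Finset β, s.card ≤ (s.biUnion t).card := by
    intro s
    have h1 : D * s.card = ∑ b ∈ s, ∑ x, c b x := by
      rw [Finset.sum_congr rfl (fun b _ => hrow b)]
      simp [mul_comm]
    have h2 : ∀ b ∈ s, ∑ x, c b x = ∑ x ∈ s.biUnion t, c b x := by
      intro b hb
      symm
      apply Finset.sum_subset (Finset.subset_univ _)
      intro x _ hx
      by_contra hc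
      exact hx (Finset.mem_biUnion.2 ⟨b, hb, by simp [ht, Nat.pos_of_ne_zero hc]⟩)
    have h3 : ∑ b ∈ s, ∑ x ∈ s.biUnion t, c b x ≤ ∑ x ∈ s.biUnion t, D := by
      rw [Finset.sum_comm]
      refine Finset.sum_le_sum fun x _ => ?_
      rw [← hcol x]
      exact Finset.sum_le_sum_of_subset (Finset.subset_univ s)
    have h4 : D * s.card ≤ D * (s.biUnion t).card := by
      rw [h1, Finset.sum_congr rfl h2]
      simpa [mul_comm] using h3
    exact Nat.le_of_mul_le_mul_left h4 hD
  obtain ⟨f, hinj, hmem⟩ := (Finset.all_card_le_biUnion_card_iff_exists_injective t).1 hall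
  have hcard : Fintype.card β = Fintype.card γ := by
    have : ∑ b : β, ∑ x : γ, c b x = ∑ x : γ, ∑ b : β, c b x := Finset.sum_comm
    simp only [hrow, hcol, Finset.sum_const, smul_eq_mul, Finset.card_univ] at this
    exact Nat.eq_of_mul_eq_mul_right hD this
  have hbij : Function.Bijective f :=
    (Fintype.bijective_iff_injective_and_card f).2 ⟨hinj, hcard⟩
  exact ⟨f, hbij, fun b => by have := hmem b; simpa [ht] using this⟩


/-- The key splitting lemma: from a bipartite multigraph whose degrees are `D * Q b`
and `D * R x`, split off a sub-multigraph with degrees exactly `Q b` and `R x`. -/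
lemma split_counts (c : β → γ → ℕ) (Q : β → ℕ) (R : γ → ℕ) (D : ℕ) (hD : 0 < D)
    (hrow : ∀ b, ∑ x, c b x = D * Q b) (hcol : ∀ x, ∑ b, c b x = D * R x) :
    ∃ d : β → γ → ℕ, (∀ b x, d b x ≤ c b x) ∧ (∀ b, ∑ x, d b x = Q b) ∧
      (∀ x, ∑ b, d b x = R x) := by
  classical
  choose E hE1 hE2 using fun b => distribute (c b) D (Q b) (hrow b)
  set β' := Σ b : β, Fin (Q b) with hβ'
  set c1 : β' → γ → ℕ := fun w x => E w.1 w.2 x with hc1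
  have hsig : ∀ (g : β' → ℕ), ∑ w : β', g w = ∑ b : β, ∑ s : Fin (Q b), g ⟨b, s⟩ := by
    intro g
    rw [← Finset.univ_sigma_univ, Finset.sum_sigma]
  have hc1col : ∀ x, ∑ w, c1 w x = D * R x := by
    intro x
    rw [hsig (fun w => c1 w x)]
    rw [← hcol x]
    exact Finset.sum_congr rfl fun b _ => hE2 b x
  choose F hF1 hF2 using fun x => distribute (fun w => c1 w x) D (R x) (hc1col x)
  set γ' := Σ x : γ, Fin (R x) with hγ'
  set c2 : β' → γ' → ℕ := fun w y => F y.1 y.2 w with hc2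
  have hsig' : ∀ (g : γ' → ℕ), ∑ y : γ', g y = ∑ x : γ, ∑ s : Fin (R x), g ⟨x, s⟩ := by
    intro g
    rw [← Finset.univ_sigma_univ, Finset.sum_sigma]
  have hc2row : ∀ w, ∑ y, c2 w y = D := by
    intro w
    rw [hsig' (fun y => c2 w y)]
    have : ∀ x, ∑ s : Fin (R x), c2 w ⟨x, s⟩ = c1 w x := fun x => hF2 x w
    rw [Finset.sum_congr rfl fun x _ => this x]
    exact hE1 w.1 w.2
  obtain ⟨f, hbij, hpos⟩ := regular_matching c2 D hD hc2row (fun y => hF1 y.1 y.2)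
  set d : β → γ → ℕ := fun b x =>
    ∑ s : Fin (Q b), ∑ s' : Fin (R x), (if f ⟨b, s⟩ = ⟨x, s'⟩ then 1 else 0) with hd
  refine ⟨d, ?_, ?_, ?_⟩
  · intro b x
    have step1 : d b x ≤ ∑ s : Fin (Q b), ∑ s' : Fin (R x), c2 ⟨b, s⟩ ⟨x, s'⟩ := by
      refine Finset.sum_le_sum fun s _ => Finset.sum_le_sum fun s' _ => ?_
      split
      · next h => have := hpos ⟨b, s⟩; rw [h] at this; omega
      · omega
    have step2 : ∀ s : Fin (Q b), ∑ s' : Fin (R x), c2 ⟨b, s⟩ ⟨x, s'⟩ = c1 ⟨b, s⟩ x :=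
      fun s => hF2 x ⟨b, s⟩
    calc d b x ≤ ∑ s : Fin (Q b), c1 (⟨b, s⟩ : β') x := by
          rw [← Finset.sum_congr rfl fun s _ => step2 s]; exact step1
      _ = c b x := hE2 b x
  · intro b
    rw [Finset.sum_comm]
    have : ∀ s : Fin (Q b),
        ∑ x : γ, ∑ s' : Fin (R x), (if f ⟨b, s⟩ = ⟨x, s'⟩ then 1 else 0) = 1 := by
      intro s
      rw [← hsig' (fun y => if f ⟨b, s⟩ = y then 1 else 0)]
      rw [Fintype.sum_eq_single (f ⟨b, s⟩) (fun y hy => if_neg (Ne.symm hy))]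
      exact if_pos rfl
    rw [Finset.sum_congr rfl fun s _ => this s]
    simp
  · intro x
    rw [← hsig (fun w => ∑ s' : Fin (R x), (if f w = ⟨x, s'⟩ then 1 else 0))]
    rw [Finset.sum_comm]
    have : ∀ s' : Fin (R x), ∑ w : β', (if f w = ⟨x, s'⟩ then 1 else 0) = 1 := by
      intro s'
      obtain ⟨w0, hw0⟩ := hbij.surjective ⟨x, s'⟩
      have : ∀ w : β', (f w = (⟨x, s'⟩ : γ')) ↔ w = w0 := fun w =>
        ⟨fun h => hbij.injective (h.trans hw0.symm), fun h => h ▸ hw0⟩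
      simp_rw [this]
      rw [Fintype.sum_eq_single w0 (fun w hw => if_neg hw)]
      exact if_pos rfl
    rw [Finset.sum_congr rfl fun s' _ => this s']
    simp

end Core


/-- Extension of `p` to `ℕ` by zero. -/
def pext {u : ℕ} (p : Fin u → ℕ) : ℕ → ℕ := fun m => if h : m < u then p ⟨m, h⟩ else 0

/-- Prefix sums of `p`. -/
def pre {u : ℕ} (p : Fin u → ℕ) (m : ℕ) : ℕ := ∑ j ∈ Finset.range m, pext p j

lemma pre_succ {u : ℕ} (p : Fin u → ℕ) (m : ℕ) :
    pre p (m + 1) = pre p m + pext p m := Finset.sum_range_succ _ m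

lemma pre_mono {u : ℕ} (p : Fin u → ℕ) {m m' : ℕ} (h : m ≤ m') : pre p m ≤ pre p m' :=
  Finset.sum_le_sum_of_subset (Finset.range_subset_range.2 h)

lemma pre_total {u : ℕ} (p : Fin u → ℕ) {m : ℕ} (h : u ≤ m) : pre p m = ∑ i, p i := by
  unfold pre
  rw [← Finset.sum_range_add_sum_Ico _ h]
  have h2 : ∑ j ∈ Finset.Ico u m, pext p j = 0 := by
    apply Finset.sum_eq_zero
    intro j hj
    have := (Finset.mem_Ico.1 hj).1
    simp [pext, Nat.not_lt.2 this]
  rw [h2, add_zero, Finset.sum_range]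
  apply Finset.sum_congr rfl
  intro j _
  simp [pext, j.isLt]

lemma sum_filter_lt {u : ℕ} (p : Fin u → ℕ) (m : ℕ) (hm : m ≤ u) :
    ∑ j ∈ Finset.univ.filter (fun j : Fin u => (j : ℕ) < m), p j = pre p m := by
  unfold pre
  refine Finset.sum_bij' (fun j _ => (j : ℕ)) (fun a ha => ⟨a, by
      have := Finset.mem_range.1 ha; omega⟩) ?_ ?_ ?_ ?_ ?_
  · intro j hj
    simp only [Finset.mem_filter, Finset.mem_univ, true_and] at hj
    exact Finset.mem_range.2 hj
  · intro a ha
    have := Finset.mem_range.1 ha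
    simp only [Finset.mem_filter, Finset.mem_univ, true_and]
    exact this
  · intro j hj; rfl
  · intro a ha; rfl
  · intro j hj
    have hj' : (j : ℕ) < u := j.isLt
    simp [pext, hj']

/-- Membership in a block in terms of prefix sums. -/
lemma mem_blockSet_iff {u n : ℕ} (p : Fin u → ℕ) (i : Fin u) (x : Fin n) :
    x ∈ blockSet p n i ↔ pre p i ≤ (x : ℕ) ∧ (x : ℕ) < pre p ((i : ℕ) + 1) := by
  unfold blockSet
  rw [Finset.mem_filter]
  have h1 : Finset.univ.filter (· < i) = Finset.univ.filter (fun j : Fin u => (j : ℕ) < (i : ℕ)) := by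
    apply Finset.filter_congr; intro j _; exact iff_of_eq rfl
  have h2 : Finset.univ.filter (· ≤ i) = Finset.univ.filter (fun j : Fin u => (j : ℕ) < (i : ℕ) + 1) := by
    apply Finset.filter_congr; intro j _
    rw [Fin.le_def, Nat.lt_succ_iff]
  rw [h1, h2, sum_filter_lt p _ (le_of_lt i.isLt), sum_filter_lt p _ i.isLt]
  simp

lemma card_interval {n A B : ℕ} (hB : B ≤ n) :
    (Finset.univ.filter fun x : Fin n => A ≤ (x : ℕ) ∧ (x : ℕ) < B).card = B - A := by
  rw [← Nat.card_Ico A B]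
  refine Finset.card_nbij (fun x => (x : ℕ)) ?_ ?_ ?_
  · intro x hx
    simp only [Finset.mem_coe, Finset.mem_filter, Finset.mem_univ, true_and] at hx
    simp only [Finset.mem_coe]
    exact Finset.mem_Ico.2 hx
  · intro x _ y _ h; exact Fin.val_injective h
  · intro m hm
    simp only [Finset.coe_Ico, Set.mem_Ico] at hm
    refine ⟨⟨m, by omega⟩, ?_, rfl⟩
    simp only [Finset.mem_coe, Finset.mem_filter, Finset.mem_univ, true_and]
    exact hm

lemma card_blockSet {u n : ℕ} (p : Fin u → ℕ) (hpn : ∑ i, p i = n) (i : Fin u) :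
    (blockSet p n i).card = p i := by
  have h1 : blockSet p n i
      = Finset.univ.filter fun x : Fin n => pre p i ≤ (x : ℕ) ∧ (x : ℕ) < pre p ((i : ℕ) + 1) := by
    ext x; rw [mem_blockSet_iff]; simp
  have h2 : pre p ((i : ℕ) + 1) ≤ n := by
    rw [← hpn, ← pre_total p (le_refl u)]
    exact pre_mono p i.isLt
  rw [h1, card_interval h2, pre_succ]
  have : pext p (i : ℕ) = p i := by simp [pext, i.isLt]
  omega

lemma blockSet_disjoint {u n : ℕ} (p : Fin u → ℕ) {i i' : Fin u} (h : i ≠ i') :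
    Disjoint (blockSet p n i) (blockSet p n i') := by
  rw [Finset.disjoint_left]
  intro x hx hx'
  rw [mem_blockSet_iff] at hx hx'
  rcases Nat.lt_or_ge (i : ℕ) (i' : ℕ) with hlt | hge
  · have := pre_mono p (show (i : ℕ) + 1 ≤ (i' : ℕ) from hlt)
    omega
  · have hlt' : (i' : ℕ) < (i : ℕ) := by
      rcases Nat.lt_or_ge (i' : ℕ) (i : ℕ) with h1 | h1
      · exact h1
      · exact absurd (Fin.ext (le_antisymm hge h1 : (i' : ℕ) = (i : ℕ)).symm) h
    have := pre_mono p (show (i' : ℕ) + 1 ≤ (i : ℕ) from hlt')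
    omega



variable {u : ℕ}

/-- Replace the value of `f` at `i0` by the two values `x, y` (inserted at positions
`i0` and `i0 + 1`), shifting later values. -/
def splitF (i0 : Fin u) {M : Type*} (f : Fin u → M) (x y : M) : Fin (u + 1) → M :=
  fun k =>
    if h1 : (k : ℕ) < (i0 : ℕ) then f ⟨k, by have := i0.isLt; omega⟩
    else if h2 : (k : ℕ) = (i0 : ℕ) then x
    else if h3 : (k : ℕ) = (i0 : ℕ) + 1 then y
    else f ⟨(k : ℕ) - 1, by have := k.isLt; have := i0.isLt; omega⟩

/-- The embedding of old indices into new indices (the index `i0` goes to the first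
of its two new positions). -/
def emb (i0 : Fin u) : Fin u → Fin (u + 1) :=
  fun i => ⟨if (i : ℕ) ≤ (i0 : ℕ) then (i : ℕ) else (i : ℕ) + 1, by
    have := i.isLt; split <;> omega⟩

/-- The second new position. -/
def snd (i0 : Fin u) : Fin (u + 1) := ⟨(i0 : ℕ) + 1, by have := i0.isLt; omega⟩

/-- The amalgamation (fiber) map from new indices to old indices. -/
def amap (i0 : Fin u) : Fin (u + 1) → Fin u :=
  fun k =>
    if h : (k : ℕ) ≤ (i0 : ℕ) then ⟨k, by have := i0.isLt; omega⟩
    else ⟨(k : ℕ) - 1, by have := k.isLt; omega⟩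

lemma emb_val (i0 i : Fin u) :
    ((emb i0 i : Fin (u + 1)) : ℕ) = if (i : ℕ) ≤ (i0 : ℕ) then (i : ℕ) else (i : ℕ) + 1 := rfl

lemma snd_val (i0 : Fin u) : ((snd i0 : Fin (u + 1)) : ℕ) = (i0 : ℕ) + 1 := rfl

lemma amap_val (i0 : Fin u) (k : Fin (u + 1)) :
    ((amap i0 k : Fin u) : ℕ) = if (k : ℕ) ≤ (i0 : ℕ) then (k : ℕ) else (k : ℕ) - 1 := by
  unfold amap
  split <;> rfl

lemma splitF_of_lt {M : Type*} (i0 : Fin u) (f : Fin u → M) (x y : M) (k : Fin (u + 1))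
    (h : (k : ℕ) < (i0 : ℕ)) :
    splitF i0 f x y k = f ⟨k, by have := i0.isLt; omega⟩ := by
  unfold splitF
  rw [dif_pos h]

lemma splitF_of_eq {M : Type*} (i0 : Fin u) (f : Fin u → M) (x y : M) (k : Fin (u + 1))
    (h : (k : ℕ) = (i0 : ℕ)) : splitF i0 f x y k = x := by
  unfold splitF
  rw [dif_neg (by omega), dif_pos h]

lemma splitF_of_eq1 {M : Type*} (i0 : Fin u) (f : Fin u → M) (x y : M) (k : Fin (u + 1))
    (h : (k : ℕ) = (i0 : ℕ) + 1) : splitF i0 f x y k = y := by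
  unfold splitF
  rw [dif_neg (by omega), dif_neg (by omega), dif_pos h]

lemma splitF_of_gt {M : Type*} (i0 : Fin u) (f : Fin u → M) (x y : M) (k : Fin (u + 1))
    (h : (i0 : ℕ) + 1 < (k : ℕ)) :
    splitF i0 f x y k = f ⟨(k : ℕ) - 1, by have := k.isLt; omega⟩ := by
  unfold splitF
  rw [dif_neg (by omega), dif_neg (by omega), dif_neg (by omega)]

lemma splitF_emb {M : Type*} (i0 : Fin u) (f : Fin u → M) (x y : M) {i : Fin u}
    (h : i ≠ i0) : splitF i0 f x y (emb i0 i) = f i := by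
  have hne : (i : ℕ) ≠ (i0 : ℕ) := fun hc => h (Fin.ext hc)
  rcases Nat.lt_or_ge (i : ℕ) (i0 : ℕ) with hlt | hge
  · have hv : ((emb i0 i : Fin (u + 1)) : ℕ) = (i : ℕ) := by
      rw [emb_val, if_pos (le_of_lt hlt)]
    rw [splitF_of_lt i0 f x y _ (by omega)]
    congr 1
    exact Fin.ext hv
  · have hv : ((emb i0 i : Fin (u + 1)) : ℕ) = (i : ℕ) + 1 := by
      rw [emb_val, if_neg (by omega)]
    rw [splitF_of_gt i0 f x y _ (by omega)]
    congr 1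
    apply Fin.ext
    simp only [Fin.val_mk]
    omega

lemma splitF_emb_self {M : Type*} (i0 : Fin u) (f : Fin u → M) (x y : M) :
    splitF i0 f x y (emb i0 i0) = x := by
  apply splitF_of_eq
  rw [emb_val, if_pos (le_refl _)]

lemma splitF_snd {M : Type*} (i0 : Fin u) (f : Fin u → M) (x y : M) :
    splitF i0 f x y (snd i0) = y := by
  apply splitF_of_eq1
  exact snd_val i0

lemma amap_fiber_ne (i0 : Fin u) {i : Fin u} (h : i ≠ i0) :
    Finset.univ.filter (fun k => amap i0 k = i) = {emb i0 i} := by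
  have hne : (i : ℕ) ≠ (i0 : ℕ) := fun hc => h (Fin.ext hc)
  ext k
  simp only [Finset.mem_filter, Finset.mem_univ, true_and, Finset.mem_singleton]
  constructor
  · intro hk
    have hk' := congrArg Fin.val hk
    rw [amap_val] at hk'
    apply Fin.ext
    rw [emb_val]
    by_cases hle : (k : ℕ) ≤ (i0 : ℕ)
    · rw [if_pos hle] at hk'
      rw [if_pos (by omega)]
      omega
    · rw [if_neg hle] at hk'
      rw [if_neg (by omega)]
      omega
  · intro hk
    subst hk
    apply Fin.ext
    rw [amap_val, emb_val]
    by_cases hle : (i : ℕ) ≤ (i0 : ℕ)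
    · simp only [if_pos hle]
    · simp only [if_neg hle]
      rw [if_neg (by omega)]
      omega

lemma amap_fiber_self (i0 : Fin u) :
    Finset.univ.filter (fun k => amap i0 k = i0) = {emb i0 i0, snd i0} := by
  ext k
  simp only [Finset.mem_filter, Finset.mem_univ, true_and, Finset.mem_insert,
    Finset.mem_singleton]
  constructor
  · intro hk
    have hk' := congrArg Fin.val hk
    rw [amap_val] at hk'
    by_cases hle : (k : ℕ) ≤ (i0 : ℕ)
    · rw [if_pos hle] at hk'
      left; apply Fin.ext
      rw [emb_val, if_pos (le_refl _)]
      omega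
    · rw [if_neg hle] at hk'
      right; apply Fin.ext
      rw [snd_val]
      omega
  · intro hk
    rcases hk with hk | hk <;> subst hk <;> apply Fin.ext <;> rw [amap_val]
    · rw [emb_val]
      simp only [if_pos (le_refl ((i0 : ℕ)))]
    · rw [snd_val, if_neg (by omega)]
      omega

/-- Sums are preserved by splitting, provided the two new values add up to the old. -/
lemma sum_splitF (i0 : Fin u) (f : Fin u → ℕ) (x y : ℕ) (hxy : x + y = f i0) :
    ∑ k, splitF i0 f x y k = ∑ i, f i := by
  rw [← Finset.sum_fiberwise Finset.univ (amap i0) (splitF i0 f x y)]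
  apply Finset.sum_congr rfl
  intro i _
  by_cases h : i = i0
  · subst h
    rw [amap_fiber_self, Finset.sum_pair (by
      intro hc
      have := congrArg Fin.val hc
      rw [emb_val, snd_val, if_pos (le_refl _)] at this
      omega)]
    rw [splitF_emb_self, splitF_snd, hxy]
  · rw [amap_fiber_ne i0 h, Finset.sum_singleton, splitF_emb i0 f x y h]



variable {u n : ℕ}

lemma pext_splitF (i0 : Fin u) (p : Fin u → ℕ) (x y : ℕ) (m : ℕ) :
    pext (splitF i0 p x y) m =
      if m < (i0 : ℕ) then pext p m
      else if m = (i0 : ℕ) then x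
      else if m = (i0 : ℕ) + 1 then y
      else pext p (m - 1) := by
  have hi0 := i0.isLt
  by_cases hm : m < u + 1
  · have hl : pext (splitF i0 p x y) m = splitF i0 p x y ⟨m, hm⟩ := by
      unfold pext; rw [dif_pos hm]
    rcases Nat.lt_trichotomy m (i0 : ℕ) with h | h | h
    · rw [hl, splitF_of_lt i0 p x y _ h, if_pos h]
      unfold pext; rw [dif_pos (by omega)]
    · rw [hl, splitF_of_eq i0 p x y _ h, if_neg (by omega), if_pos h]
    · rcases Nat.eq_or_lt_of_le h with h1 | h1
      · rw [hl, splitF_of_eq1 i0 p x y ⟨m, hm⟩ (show m = (i0 : ℕ) + 1 by omega),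
          if_neg (by omega), if_neg (by omega), if_pos (by omega)]
      · rw [hl, splitF_of_gt i0 p x y ⟨m, hm⟩ (show (i0 : ℕ) + 1 < m by omega),
          if_neg (by omega), if_neg (by omega), if_neg (by omega)]
        unfold pext; rw [dif_pos (show m - 1 < u by omega)]
  · have hl : pext (splitF i0 p x y) m = 0 := by unfold pext; rw [dif_neg hm]
    rw [hl, if_neg (by omega), if_neg (by omega), if_neg (by omega)]
    unfold pext; rw [dif_neg (by omega)]

lemma pre_splitF (i0 : Fin u) (p : Fin u → ℕ) (x y : ℕ) (hxy : x + y = p i0) (m : ℕ) :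
    pre (splitF i0 p x y) m =
      if m ≤ (i0 : ℕ) then pre p m
      else if m = (i0 : ℕ) + 1 then pre p i0 + x
      else pre p (m - 1) := by
  have hi0 := i0.isLt
  have hpi0 : pext p (i0 : ℕ) = p i0 := by unfold pext; rw [dif_pos hi0]
  induction m with
  | zero =>
    rw [if_pos (Nat.zero_le _)]
    unfold pre
    simp
  | succ m ih =>
    rw [pre_succ, ih, pext_splitF]
    rcases Nat.lt_trichotomy m (i0 : ℕ) with h | h | h
    · rw [if_pos (le_of_lt h), if_pos h, if_pos (by omega), ← pre_succ]
    · subst h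
      rw [if_pos (le_refl _), if_neg (by omega), if_pos rfl, if_neg (by omega), if_pos rfl]
    · rcases Nat.eq_or_lt_of_le h with h1 | h1
      · rw [if_neg (by omega), if_pos (by omega), if_neg (by omega), if_neg (by omega),
          if_pos (by omega), if_neg (by omega), if_neg (by omega)]
        have : m + 1 - 1 = (i0 : ℕ) + 1 := by omega
        rw [this, pre_succ, hpi0]
        omega
      · rw [if_neg (by omega), if_neg (by omega), if_neg (by omega), if_neg (by omega),
          if_neg (by omega), if_neg (by omega), if_neg (by omega)]
        have h2 : m + 1 - 1 = (m - 1) + 1 := by omega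
        rw [h2, pre_succ]

lemma blockSet_splitF_ne (i0 : Fin u) (p : Fin u → ℕ) (x y : ℕ) (hxy : x + y = p i0)
    {i : Fin u} (h : i ≠ i0) :
    blockSet (splitF i0 p x y) n (emb i0 i) = blockSet p n i := by
  have hne : (i : ℕ) ≠ (i0 : ℕ) := fun hc => h (Fin.ext hc)
  ext z
  rw [mem_blockSet_iff, mem_blockSet_iff, pre_splitF i0 p x y hxy,
    pre_splitF i0 p x y hxy]
  rcases Nat.lt_or_ge (i : ℕ) (i0 : ℕ) with hlt | hge
  · have hv : ((emb i0 i : Fin (u + 1)) : ℕ) = (i : ℕ) := by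
      rw [emb_val, if_pos (by omega)]
    rw [hv, if_pos (by omega), if_pos (by omega)]
  · have hv : ((emb i0 i : Fin (u + 1)) : ℕ) = (i : ℕ) + 1 := by
      rw [emb_val, if_neg (by omega)]
    rw [hv, if_neg (by omega), if_neg (by omega), if_neg (by omega), if_neg (by omega)]
    have e1 : (i : ℕ) + 1 - 1 = (i : ℕ) := by omega
    have e2 : (i : ℕ) + 1 + 1 - 1 = (i : ℕ) + 1 := by omega
    rw [e1, e2]

lemma blockSet_splitF_i0 (i0 : Fin u) (p : Fin u → ℕ) (x y : ℕ) (hxy : x + y = p i0) :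
    blockSet p n i0
      = blockSet (splitF i0 p x y) n (emb i0 i0) ∪ blockSet (splitF i0 p x y) n (snd i0) := by
  have hi0 := i0.isLt
  have hpi0 : pext p (i0 : ℕ) = p i0 := by unfold pext; rw [dif_pos hi0]
  have hv : ((emb i0 i0 : Fin (u + 1)) : ℕ) = (i0 : ℕ) := by
    rw [emb_val, if_pos (le_refl _)]
  ext z
  rw [Finset.mem_union, mem_blockSet_iff, mem_blockSet_iff, mem_blockSet_iff,
    pre_splitF i0 p x y hxy, pre_splitF i0 p x y hxy, pre_splitF i0 p x y hxy,
    pre_splitF i0 p x y hxy, hv, snd_val]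
  have e1 : pre p ((i0 : ℕ) + 1) = pre p (i0 : ℕ) + p i0 := by rw [pre_succ, hpi0]
  simp only [Nat.add_sub_cancel]
  split_ifs <;> omega

lemma emb_ne_snd (i0 : Fin u) : emb i0 i0 ≠ snd i0 := by
  intro hc
  have := congrArg Fin.val hc
  rw [emb_val, snd_val, if_pos (le_refl _)] at this
  omega



variable {u n : ℕ}

/-- General additive version of `sum_splitF`. -/
lemma sum_splitF' (i0 : Fin u) (f : Fin u → ℕ) (x y : ℕ) :
    ∑ k, splitF i0 f x y k + f i0 = ∑ i, f i + (x + y) := by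
  rw [← Finset.sum_fiberwise Finset.univ (amap i0) (splitF i0 f x y)]
  rw [← Finset.sum_erase_add _ _ (Finset.mem_univ i0), ← Finset.sum_erase_add _ f (Finset.mem_univ i0)]
  have h1 : ∑ i ∈ Finset.univ.erase i0, ∑ k ∈ Finset.univ.filter (fun k => amap i0 k = i),
      splitF i0 f x y k = ∑ i ∈ Finset.univ.erase i0, f i := by
    apply Finset.sum_congr rfl
    intro i hi
    have hne : i ≠ i0 := (Finset.mem_erase.1 hi).1
    rw [amap_fiber_ne i0 hne, Finset.sum_singleton, splitF_emb i0 f x y hne]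
  have h2 : ∑ k ∈ Finset.univ.filter (fun k => amap i0 k = i0), splitF i0 f x y k = x + y := by
    rw [amap_fiber_self, Finset.sum_pair (emb_ne_snd i0), splitF_emb_self, splitF_snd]
  rw [h1, h2]
  omega

/-- Case analysis for indices of the refined partition. -/
lemma new_index_cases (i0 : Fin u) (k : Fin (u + 1)) :
    (∃ i : Fin u, i ≠ i0 ∧ k = emb i0 i) ∨ k = emb i0 i0 ∨ k = snd i0 := by
  have hi0 := i0.isLt
  have hk := k.isLt
  rcases Nat.lt_trichotomy (k : ℕ) (i0 : ℕ) with h | h | h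
  · refine Or.inl ⟨⟨k, by omega⟩, fun hc => by
      have := congrArg Fin.val hc; simp only [Fin.val_mk] at this; omega, ?_⟩
    apply Fin.ext
    rw [emb_val, if_pos (by simp only [Fin.val_mk]; omega)]
  · exact Or.inr (Or.inl (Fin.ext (by rw [emb_val, if_pos (le_refl _)]; exact h)))
  · rcases Nat.eq_or_lt_of_le h with h1 | h1
    · exact Or.inr (Or.inr (Fin.ext (by rw [snd_val]; omega)))
    · refine Or.inl ⟨⟨(k : ℕ) - 1, by omega⟩, fun hc => by
        have := congrArg Fin.val hc; simp only [Fin.val_mk] at this; omega, ?_⟩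
      apply Fin.ext
      rw [emb_val, if_neg (by simp only [Fin.val_mk]; omega)]
      simp only [Fin.val_mk]
      omega

lemma card_filter_union_fst {α : Type*} [DecidableEq α] (A1 A2 B : Finset α)
    (hd : Disjoint A1 A2) (P : α × α → Prop) [DecidablePred P] :
    (((A1 ∪ A2) ×ˢ B).filter P).card
      = ((A1 ×ˢ B).filter P).card + ((A2 ×ˢ B).filter P).card := by
  rw [Finset.union_product, Finset.filter_union]
  apply Finset.card_union_of_disjoint
  rw [Finset.disjoint_left]
  intro z hz1 hz2
  have h1 := Finset.mem_product.1 (Finset.mem_of_mem_filter z hz1)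
  have h2 := Finset.mem_product.1 (Finset.mem_of_mem_filter z hz2)
  exact Finset.disjoint_left.1 hd h1.1 h2.1

lemma card_filter_union_snd {α : Type*} [DecidableEq α] (A B1 B2 : Finset α)
    (hd : Disjoint B1 B2) (P : α × α → Prop) [DecidablePred P] :
    ((A ×ˢ (B1 ∪ B2)).filter P).card
      = ((A ×ˢ B1).filter P).card + ((A ×ˢ B2).filter P).card := by
  rw [Finset.product_union, Finset.filter_union]
  apply Finset.card_union_of_disjoint
  rw [Finset.disjoint_left]
  intro z hz1 hz2
  have h1 := Finset.mem_product.1 (Finset.mem_of_mem_filter z hz1)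
  have h2 := Finset.mem_product.1 (Finset.mem_of_mem_filter z hz2)
  exact Finset.disjoint_left.1 hd h1.2 h2.2

lemma card_filter_mem_union {α β : Type*} [DecidableEq α] [DecidableEq β] (S : Finset α)
    (C1 C2 : Finset β) (hd : Disjoint C1 C2) (f : α → β) :
    (S.filter (fun z => f z ∈ C1 ∪ C2)).card
      = (S.filter (fun z => f z ∈ C1)).card + (S.filter (fun z => f z ∈ C2)).card := by
  have : ∀ z, (f z ∈ C1 ∪ C2) ↔ (f z ∈ C1 ∨ f z ∈ C2) := fun z => Finset.mem_union
  rw [Finset.filter_congr (fun z _ => this z), Finset.filter_or]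
  apply Finset.card_union_of_disjoint
  rw [Finset.disjoint_left]
  intro z hz1 hz2
  exact Finset.disjoint_left.1 hd (Finset.mem_filter.1 hz1).2 (Finset.mem_filter.1 hz2).2

lemma sum_eq_one_exists {γ : Type*} [Fintype γ] [DecidableEq γ] (f : γ → ℕ)
    (h : ∑ x, f x = 1) : ∃ x, f x = 1 ∧ ∀ y, y ≠ x → f y = 0 := by
  have hex : ∃ x, f x ≠ 0 := by
    by_contra hc
    push_neg at hc
    rw [Finset.sum_eq_zero (fun x _ => hc x)] at h
    omega
  obtain ⟨x, hx⟩ := hex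
  have hle := Finset.single_le_sum (f := f) (fun y _ => Nat.zero_le _) (Finset.mem_univ x)
  refine ⟨x, by omega, fun y hy => ?_⟩
  have hsub : ({x, y} : Finset γ) ⊆ Finset.univ := Finset.subset_univ _
  have := Finset.sum_le_sum_of_subset (f := f) hsub
  rw [Finset.sum_pair (fun hc => hy hc.symm)] at this
  omega

lemma two_le_sum {γ : Type*} [Fintype γ] [DecidableEq γ] (f : γ → ℕ) {a b : γ}
    (hab : a ≠ b) (ha : 1 ≤ f a) (hb : 1 ≤ f b) : 2 ≤ ∑ x, f x := by
  have hsub : ({a, b} : Finset γ) ⊆ Finset.univ := Finset.subset_univ _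
  have := Finset.sum_le_sum_of_subset (f := f) hsub
  rw [Finset.sum_pair hab] at this
  omega

lemma pre_ones (p : Fin n → ℕ) (hp1 : ∀ i, p i = 1) {m : ℕ} (hm : m ≤ n) :
    pre p m = m := by
  induction m with
  | zero => unfold pre; simp
  | succ m ih =>
    rw [pre_succ, ih (by omega)]
    unfold pext
    rw [dif_pos (by omega), hp1]

lemma blockSet_ones (p : Fin n → ℕ) (hp1 : ∀ i, p i = 1) (i : Fin n) :
    blockSet p n i = {i} := by
  ext z
  rw [mem_blockSet_iff, Finset.mem_singleton, pre_ones p hp1 (le_of_lt i.isLt),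
    pre_ones p hp1 i.isLt]
  constructor
  · intro h; exact Fin.ext (by omega)
  · intro h; subst h; omega


/-- Splitting one part of the first partition of an outline array into parts
of sizes `P i0 - 1` and `1`. -/
lemma split_step {A B C : ℕ} (P : Fin A → ℕ) (Q : Fin B → ℕ) (R : Fin C → ℕ)
    (M : Fin A → Fin B → Fin C → ℕ) (i0 : Fin A) (h2A : 2 ≤ P i0)
    (hPpos : ∀ i, 0 < P i)
    (g1 : ∀ i j, ∑ l, M i j l = P i * Q j)
    (g2 : ∀ i l, ∑ j, M i j l = P i * R l)
    (g3 : ∀ j l, ∑ i, M i j l = Q j * R l) :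
    ∃ M' : Fin (A + 1) → Fin B → Fin C → ℕ,
      (∀ k, 0 < splitF i0 P (P i0 - 1) 1 k) ∧
      (∑ k, splitF i0 P (P i0 - 1) 1 k = ∑ i, P i) ∧
      ((∑ k, (splitF i0 P (P i0 - 1) 1 k - 1)) + 1 = ∑ i, (P i - 1)) ∧
      (∀ k j, ∑ l, M' k j l = splitF i0 P (P i0 - 1) 1 k * Q j) ∧
      (∀ k l, ∑ j, M' k j l = splitF i0 P (P i0 - 1) 1 k * R l) ∧
      (∀ j l, ∑ k, M' k j l = Q j * R l) ∧
      (∀ (i : Fin A) j l, i ≠ i0 → M' (emb i0 i) j l = M i j l) ∧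
      (∀ j l, M' (emb i0 i0) j l + M' (snd i0) j l = M i0 j l) := by
  obtain ⟨d, hdle, hdrow, hdcol⟩ := split_counts (fun j l => M i0 j l) Q R (P i0)
    (by omega) (fun j => g1 i0 j) (fun l => g2 i0 l)
  set P' := splitF i0 P (P i0 - 1) 1 with hP'
  refine ⟨fun k j l => splitF i0 (fun i => M i j l) (M i0 j l - d j l) (d j l) k,
    ?_, ?_, ?_, ?_, ?_, ?_, ?_, ?_⟩
  · intro k
    rcases new_index_cases i0 k with ⟨i, hne, rfl⟩ | rfl | rfl
    · rw [hP', splitF_emb i0 P _ _ hne]; exact hPpos i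
    · rw [hP', splitF_emb_self]; omega
    · rw [hP', splitF_snd]; omega
  · exact sum_splitF i0 P _ _ (by omega)
  · have hpoint : ∀ k, P' k - 1 = splitF i0 (fun i => P i - 1) (P i0 - 2) 0 k := by
      intro k
      rcases new_index_cases i0 k with ⟨i, hne, rfl⟩ | rfl | rfl
      · rw [hP', splitF_emb i0 P _ _ hne, splitF_emb i0 _ _ _ hne]
      · rw [hP', splitF_emb_self, splitF_emb_self]; omega
      · rw [hP', splitF_snd, splitF_snd]
    rw [Finset.sum_congr rfl fun k _ => hpoint k]
    have h := sum_splitF' i0 (fun i => P i - 1) (P i0 - 2) 0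
    show (∑ k, splitF i0 (fun i => P i - 1) (P i0 - 2) 0 k) + 1 = ∑ i, (P i - 1)
    omega
  · intro k j
    rcases new_index_cases i0 k with ⟨i, hne, rfl⟩ | rfl | rfl
    · rw [hP', splitF_emb i0 P _ _ hne,
        Finset.sum_congr rfl fun l _ => splitF_emb i0 (fun i => M i j l) _ _ hne]
      exact g1 i j
    · rw [hP', splitF_emb_self,
        Finset.sum_congr rfl fun l _ => splitF_emb_self i0 (fun i => M i j l) _ _]
      rw [Finset.sum_tsub_distrib Finset.univ (fun l _ => hdle j l), g1 i0 j, hdrow j,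
        Nat.sub_one_mul]
    · rw [hP', splitF_snd,
        Finset.sum_congr rfl fun l _ => splitF_snd i0 (fun i => M i j l) _ _]
      rw [hdrow j, one_mul]
  · intro k l
    rcases new_index_cases i0 k with ⟨i, hne, rfl⟩ | rfl | rfl
    · rw [hP', splitF_emb i0 P _ _ hne,
        Finset.sum_congr rfl fun j _ => splitF_emb i0 (fun i => M i j l) _ _ hne]
      exact g2 i l
    · rw [hP', splitF_emb_self,
        Finset.sum_congr rfl fun j _ => splitF_emb_self i0 (fun i => M i j l) _ _]
      rw [Finset.sum_tsub_distrib Finset.univ (fun j _ => hdle j l), g2 i0 l, hdcol l,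
        Nat.sub_one_mul]
    · rw [hP', splitF_snd,
        Finset.sum_congr rfl fun j _ => splitF_snd i0 (fun i => M i j l) _ _]
      rw [hdcol l, one_mul]
  · intro j l
    rw [sum_splitF i0 (fun i => M i j l) _ _
      (show M i0 j l - d j l + d j l = M i0 j l by have := hdle j l; omega)]
    exact g3 j l
  · intro i j l hne
    exact splitF_emb i0 (fun i => M i j l) _ _ hne
  · intro j l
    show splitF i0 (fun i => M i j l) (M i0 j l - d j l) (d j l) (emb i0 i0)
      + splitF i0 (fun i => M i j l) (M i0 j l - d j l) (d j l) (snd i0) = M i0 j l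
    rw [splitF_emb_self, splitF_snd]
    have := hdle j l
    omega


lemma exists_pos_of_sum_pos {w : ℕ} (f : Fin w → ℕ) (h : 0 < ∑ i, f i) : ∃ i, 0 < f i := by
  by_contra hc
  push_neg at hc
  rw [Finset.sum_eq_zero (fun i _ => by have := hc i; omega)] at h
  omega

/-- The main engine: every outline rectangle (in counts form) is the reduction of a
latin square. -/
theorem exists_latin_of_counts :
    ∀ (m n u v t : ℕ) (p : Fin u → ℕ) (q : Fin v → ℕ) (r : Fin t → ℕ),
    (∀ i, 0 < p i) → (∀ j, 0 < q j) → (∀ l, 0 < r l) →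
    ∑ i, p i = n → ∑ j, q j = n → ∑ l, r l = n →
    (∑ i, (p i - 1)) + (∑ j, (q j - 1)) + (∑ l, (r l - 1)) = m →
    ∀ N : Fin u → Fin v → Fin t → ℕ,
    (∀ i j, ∑ l, N i j l = p i * q j) →
    (∀ i l, ∑ j, N i j l = p i * r l) →
    (∀ j l, ∑ i, N i j l = q j * r l) →
    ∃ L : Fin n → Fin n → Fin n, IsLatinSquare L ∧
      ∀ i j l, ((blockSet p n i ×ˢ blockSet q n j).filter
        (fun xy => L xy.1 xy.2 ∈ blockSet r n l)).card = N i j l := by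
  intro m
  induction m using Nat.strong_induction_on with
  | _ m IH =>
  intro n u v t p q r hp hq hr hpn hqn hrn hm N h1 h2 h3
  by_cases hm0 : m = 0
  · -- base case: all parts are 1
    subst hm0
    have hp1 : ∀ i, p i = 1 := by
      intro i
      have h0 : ∑ i, (p i - 1) = 0 := by omega
      have := (Finset.sum_eq_zero_iff).1 h0 i (Finset.mem_univ i)
      have := hp i
      omega
    have hq1 : ∀ j, q j = 1 := by
      intro j
      have h0 : ∑ j, (q j - 1) = 0 := by omega
      have := (Finset.sum_eq_zero_iff).1 h0 j (Finset.mem_univ j)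
      have := hq j
      omega
    have hr1 : ∀ l, r l = 1 := by
      intro l
      have h0 : ∑ l, (r l - 1) = 0 := by omega
      have := (Finset.sum_eq_zero_iff).1 h0 l (Finset.mem_univ l)
      have := hr l
      omega
    have hu : u = n := by
      have hs : ∑ i, p i = u := by
        rw [Finset.sum_congr rfl fun i _ => hp1 i]
        simp
      omega
    have hv : v = n := by
      have hs : ∑ j, q j = v := by
        rw [Finset.sum_congr rfl fun j _ => hq1 j]
        simp
      omega
    have ht : t = n := by
      have hs : ∑ l, r l = t := by
        rw [Finset.sum_congr rfl fun l _ => hr1 l]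
        simp
      omega
    subst hu
    subst hv
    subst ht
    have hex : ∀ i j, ∃ l, N i j l = 1 ∧ ∀ y, y ≠ l → N i j y = 0 := by
      intro i j
      apply sum_eq_one_exists
      rw [h1 i j, hp1 i, hq1 j]
    choose Lf hL1 hL0 using hex
    have hrowsum : ∀ i l, ∑ j, N i j l = 1 := by
      intro i l; rw [h2 i l, hp1 i, hr1 l]
    have hcolsum : ∀ j l, ∑ i, N i j l = 1 := by
      intro j l; rw [h3 j l, hq1 j, hr1 l]
    have hrowinj : ∀ i, Function.Injective (fun j => Lf i j) := by
      intro i j j' hjj'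
      simp only at hjj'
      by_contra hne
      have e1 : N i j (Lf i j) = 1 := hL1 i j
      have e2 : N i j' (Lf i j) = 1 := by rw [hjj']; exact hL1 i j'
      have h2s := two_le_sum (fun j'' => N i j'' (Lf i j)) hne
        (le_of_eq e1.symm) (le_of_eq e2.symm)
      rw [hrowsum i (Lf i j)] at h2s
      omega
    have hcolinj : ∀ j, Function.Injective (fun i => Lf i j) := by
      intro j i i' hii'
      simp only at hii'
      by_contra hne
      have e1 : N i j (Lf i j) = 1 := hL1 i j
      have e2 : N i' j (Lf i j) = 1 := by rw [hii']; exact hL1 i' j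
      have h2s := two_le_sum (fun i'' => N i'' j (Lf i j)) hne
        (le_of_eq e1.symm) (le_of_eq e2.symm)
      rw [hcolsum j (Lf i j)] at h2s
      omega
    refine ⟨Lf, ⟨fun i => (Fintype.bijective_iff_injective_and_card _).2 ⟨hrowinj i, rfl⟩,
      fun j => (Fintype.bijective_iff_injective_and_card _).2 ⟨hcolinj j, rfl⟩⟩, ?_⟩
    intro i j l
    rw [blockSet_ones p hp1, blockSet_ones q hq1, blockSet_ones r hr1,
      Finset.singleton_product_singleton, Finset.filter_singleton]
    by_cases hc : Lf i j = l
    · rw [if_pos (by simpa using hc), Finset.card_singleton, ← hc]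
      exact (hL1 i j).symm
    · rw [if_neg (by simpa using hc), Finset.card_empty]
      exact (hL0 i j l (fun h => hc h.symm)).symm
  · -- inductive step
    have hcase : (0 < ∑ i, (p i - 1)) ∨ (0 < ∑ j, (q j - 1)) ∨ (0 < ∑ l, (r l - 1)) := by
      omega
    rcases hcase with hc | hc | hc
    · -- split a row block
      obtain ⟨i0, hi0⟩ := exists_pos_of_sum_pos _ hc
      have h2p : 2 ≤ p i0 := by have := hp i0; omega
      obtain ⟨N', hpos', hsum', hmeas', g1', g2', g3', hemb, hamal⟩ :=
        split_step p q r N i0 h2p hp h1 h2 h3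
      obtain ⟨L, hLlatin, hLcount⟩ := IH (m - 1) (by omega) n (u + 1) v t
        (splitF i0 p (p i0 - 1) 1) q r hpos' hq hr (by rw [hsum']; exact hpn) hqn hrn
        (by omega) N' g1' g2' g3'
      refine ⟨L, hLlatin, ?_⟩
      intro i j l
      by_cases hii : i = i0
      · subst hii
        rw [blockSet_splitF_i0 i p (p i - 1) 1 (by omega) (n := n),
          card_filter_union_fst _ _ _ (blockSet_disjoint _ (emb_ne_snd i)),
          hLcount (emb i i) j l, hLcount (snd i) j l]
        exact hamal j l
      · rw [← blockSet_splitF_ne i0 p (p i0 - 1) 1 (by omega) hii,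
          hLcount (emb i0 i) j l]
        exact hemb i j l hii
    · -- split a column block
      obtain ⟨j0, hj0⟩ := exists_pos_of_sum_pos _ hc
      have h2q : 2 ≤ q j0 := by have := hq j0; omega
      obtain ⟨N', hpos', hsum', hmeas', g1', g2', g3', hemb, hamal⟩ :=
        split_step q p r (fun j i l => N i j l) j0 h2q hq
          (fun j i => by rw [h1 i j]; ring)
          (fun j l => h3 j l)
          (fun i l => h2 i l)
      obtain ⟨L, hLlatin, hLcount⟩ := IH (m - 1) (by omega) n u (v + 1) t
        p (splitF j0 q (q j0 - 1) 1) r hp hpos' hr hpn (by rw [hsum']; exact hqn) hrn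
        (by omega) (fun i k l => N' k i l)
        (fun i k => (g1' k i).trans (Nat.mul_comm _ _))
        (fun i l => g3' i l)
        (fun k l => g2' k l)
      refine ⟨L, hLlatin, ?_⟩
      intro i j l
      by_cases hjj : j = j0
      · subst hjj
        rw [blockSet_splitF_i0 j q (q j - 1) 1 (by omega) (n := n),
          card_filter_union_snd _ _ _ (blockSet_disjoint _ (emb_ne_snd j)),
          hLcount i (emb j j) l, hLcount i (snd j) l]
        exact hamal i l
      · rw [← blockSet_splitF_ne j0 q (q j0 - 1) 1 (by omega) hjj,
          hLcount i (emb j0 j) l]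
        exact hemb j i l hjj
    · -- split a symbol block
      obtain ⟨l0, hl0⟩ := exists_pos_of_sum_pos _ hc
      have h2r : 2 ≤ r l0 := by have := hr l0; omega
      obtain ⟨N', hpos', hsum', hmeas', g1', g2', g3', hemb, hamal⟩ :=
        split_step r p q (fun l i j => N i j l) l0 h2r hr
          (fun l i => by rw [h2 i l]; ring)
          (fun l j => by rw [h3 j l]; ring)
          (fun i j => h1 i j)
      obtain ⟨L, hLlatin, hLcount⟩ := IH (m - 1) (by omega) n u v (t + 1)
        p q (splitF l0 r (r l0 - 1) 1) hp hq hpos' hpn hqn (by rw [hsum']; exact hrn)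
        (by omega) (fun i j k => N' k i j)
        (fun i j => g3' i j)
        (fun i k => (g1' k i).trans (Nat.mul_comm _ _))
        (fun j k => (g2' k j).trans (Nat.mul_comm _ _))
      refine ⟨L, hLlatin, ?_⟩
      intro i j l
      by_cases hll : l = l0
      · subst hll
        rw [blockSet_splitF_i0 l r (r l - 1) 1 (by omega) (n := n),
          card_filter_mem_union _ _ _ (blockSet_disjoint _ (emb_ne_snd l)),
          hLcount i j (emb l l), hLcount i j (snd l)]
        exact hamal i j
      · rw [← blockSet_splitF_ne l0 r (r l0 - 1) 1 (by omega) hll,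
          hLcount i j (emb l0 l)]
        exact hemb l i j hll


end Stmt15

/-- let `p = (h_1 … h_k)` be a partition of `n` and `O` an
outline square associated to `p` (i.e. an outline rectangle associated to
`(p, p, p)`) such that `O i i` consists of `h_i ^ 2` copies of symbol `i` for
every `i`.  Then there is a latin square `L` of order `n` whose reduction
modulo `(p, p, p)` equals `O`, and `L` is a realization of `p` in normal
form. -/
theorem statement15 (n k : ℕ) (p : Fin k → ℕ)
    (hp : ∀ i, 0 < p i) (hpn : ∑ i, p i = n)
    (O : Fin k → Fin k → Multiset (Fin k))
    (hO : IsOutlineRectangle p p p O)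
    (hdiag : ∀ i : Fin k, O i i = Multiset.replicate (p i ^ 2) i) :
    ∃ L : Fin n → Fin n → Fin n,
      IsReduction p p p L O ∧ IsNormalFormRealization p L := by

  classical
  obtain ⟨hcard, hrow, hcol⟩ := hO
  have hcardsum : ∀ s : Multiset (Fin k), ∑ l, s.count l = Multiset.card s := by
    intro s
    have hsub : s.toFinset ⊆ Finset.univ := Finset.subset_univ _
    have hzero : ∀ x ∈ (Finset.univ : Finset (Fin k)), x ∉ s.toFinset → s.count x = 0 := by
      intro x _ hx
      exact Multiset.count_eq_zero_of_notMem (fun hmem => hx (Multiset.mem_toFinset.2 hmem))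
    exact (Finset.sum_subset hsub hzero).symm.trans (Multiset.toFinset_sum_count_eq s)
  have h1 : ∀ i j, ∑ l, (O i j).count l = p i * p j := by
    intro i j
    rw [hcardsum (O i j), hcard i j]
  obtain ⟨L, hLlatin, hLcount⟩ := Stmt15.exists_latin_of_counts
    ((∑ i, (p i - 1)) + (∑ j, (p j - 1)) + (∑ l, (p l - 1))) n k k k p p p
    hp hp hp hpn hpn hpn rfl (fun i j l => (O i j).count l) h1 hrow hcol
  refine ⟨L, fun i j l => (hLcount i j l).symm, hLlatin, ?_⟩
  intro i x hx y hy
  have hfilter : ((blockSet p n i ×ˢ blockSet p n i).filter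
      (fun xy => L xy.1 xy.2 ∈ blockSet p n i)).card = p i ^ 2 := by
    rw [hLcount i i i, hdiag i, Multiset.count_replicate, if_pos rfl]
  have hfull : (blockSet p n i ×ˢ blockSet p n i).card = p i ^ 2 := by
    rw [Finset.card_product, Stmt15.card_blockSet p hpn i]
    ring
  have heq : (blockSet p n i ×ˢ blockSet p n i).filter
      (fun xy => L xy.1 xy.2 ∈ blockSet p n i) = blockSet p n i ×ˢ blockSet p n i := by
    apply Finset.eq_of_subset_of_card_le (Finset.filter_subset _ _)
    rw [hfilter, hfull]
  have hxy : (x, y) ∈ blockSet p n i ×ˢ blockSet p n i := Finset.mem_product.2 ⟨hx, hy⟩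
  rw [← heq] at hxy
  exact (Finset.mem_filter.1 hxy).2
end

section
/- If O_1 and O_2 are outline arrays corresponding to frequency arrays F_1 and F_2 of order k respectively, then there exists an outline array O* corresponding to the frequency array F* of order k defined by F*(i,j) = F_1(i,j) + F_2(i,j) for all i,j. -/
/-- An outline array corresponding to a frequency array `F` of order `k` (a
`k × k` array of non-negative integers): a `k × k` array `O` of multisets of
symbols from `{1,…,k}` (encoded as `Fin k`) such that `O i j` has exactly
`F i j` elements (with multiplicity), symbol `l` occurs exactly `F i l` times
in row `i`, and symbol `l` occurs exactly `F l j` times in column `j`. -/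
def IsOutlineArray {k : ℕ} (F : Fin k → Fin k → ℕ)
    (O : Fin k → Fin k → Multiset (Fin k)) : Prop :=
  (∀ i j, Multiset.card (O i j) = F i j) ∧
  (∀ i l, ∑ j, (O i j).count l = F i l) ∧
  (∀ j l, ∑ i, (O i j).count l = F l j)

/-- if `O₁` and `O₂` are outline arrays corresponding to
frequency arrays `F₁` and `F₂` of order `k`, then there exists an outline
array corresponding to the frequency array `F₁ + F₂`. -/
theorem statement16 (k : ℕ) (F₁ F₂ : Fin k → Fin k → ℕ)
    (O₁ O₂ : Fin k → Fin k → Multiset (Fin k))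
    (h₁ : IsOutlineArray F₁ O₁) (h₂ : IsOutlineArray F₂ O₂) :
    ∃ O : Fin k → Fin k → Multiset (Fin k),
      IsOutlineArray (fun i j => F₁ i j + F₂ i j) O := by
  obtain ⟨c₁, r₁, l₁⟩ := h₁
  obtain ⟨c₂, r₂, l₂⟩ := h₂
  refine ⟨fun i j => O₁ i j + O₂ i j, ?_, ?_, ?_⟩
  · intro i j; simp [c₁ i j, c₂ i j]
  · intro i l; simp [Multiset.count_add, Finset.sum_add_distrib, r₁ i l, r₂ i l]
  · intro j l; simp [Multiset.count_add, Finset.sum_add_distrib, l₁ j l, l₂ j l]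
end

section
/- Suppose an outline array O exists corresponding to a frequency array F of order k, and let S_1, S_2, …, S_{k'} be a partition of {1,…,k} into k' nonempty sets. Then there exists an outline array O* corresponding to the frequency array F* of order k' defined by F*(i,j) = Σ_{x ∈ S_i} Σ_{y ∈ S_j} F(x,y) for all i,j ∈ {1,…,k'}. -/
/-- if an outline array exists for a frequency array `F` of
order `k`, and `S_1, …, S_{k'}` is a partition of `{1,…,k}` into `k'`
nonempty sets, then an outline array exists for the frequency array `F*` of
order `k'` given by `F*(i,j) = ∑_{x ∈ S_i} ∑_{y ∈ S_j} F(x,y)`. -/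
theorem statement17 (k k' : ℕ) (F : Fin k → Fin k → ℕ)
    (O : Fin k → Fin k → Multiset (Fin k))
    (hO : IsOutlineArray F O)
    (S : Fin k' → Finset (Fin k))
    (hne : ∀ i, (S i).Nonempty)
    (hdisj : ∀ i j, i ≠ j → Disjoint (S i) (S j))
    (hcover : ∀ x : Fin k, ∃ i, x ∈ S i) :
    ∃ O' : Fin k' → Fin k' → Multiset (Fin k'),
      IsOutlineArray (fun i j : Fin k' => ∑ x ∈ S i, ∑ y ∈ S j, F x y) O' := by
  classical
  obtain ⟨hcard, hrow, hcol⟩ := hO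
  choose φ hφ using hcover
  have hS : ∀ j : Fin k', S j = Finset.univ.filter (fun y => φ y = j) := by
    intro j
    ext y
    simp only [Finset.mem_filter, Finset.mem_univ, true_and]
    constructor
    · intro hy
      by_contra h
      exact Finset.disjoint_left.mp (hdisj (φ y) j h) (hφ y) hy
    · intro h; exact h ▸ hφ y
  have hmem : ∀ (y : Fin k) (j : Fin k'), y ∈ S j ↔ φ y = j := by
    intro y j; rw [hS]; simp
  have hpart : ∀ (g : Fin k → ℕ), ∑ j : Fin k', ∑ y ∈ S j, g y = ∑ y, g y := by
    intro g
    calc ∑ j : Fin k', ∑ y ∈ S j, g y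
        = ∑ j : Fin k', ∑ y ∈ Finset.univ.filter (fun y => φ y = j), g y := by
          refine Finset.sum_congr rfl fun j _ => by rw [hS]
      _ = ∑ y, g y := Finset.sum_fiberwise _ _ _
  have hcnt : ∀ (s : Multiset (Fin k)) (l : Fin k'),
      (s.map φ).count l = ∑ m ∈ S l, s.count m := by
    intro s l
    induction s using Multiset.induction with
    | empty => simp
    | cons a s ih =>
      simp only [Multiset.map_cons, Multiset.count_cons, Finset.sum_add_distrib, ih]
      congr 1
      rw [Finset.sum_ite_eq' (S l) a (fun _ => 1)]
      by_cases h : a ∈ S l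
      · simp [h, ((hmem a l).mp h).symm, hφ a]
      · have : φ a ≠ l := fun hh => h ((hmem a l).mpr hh)
        simp [h, Ne.symm this]
  have cardsum : ∀ (t : Finset (Fin k)) (f : Fin k → Multiset (Fin k')),
      Multiset.card (∑ x ∈ t, f x) = ∑ x ∈ t, Multiset.card (f x) := by
    intro t f
    induction t using Finset.cons_induction with
    | empty => simp
    | cons a t ha ih => simp [Finset.sum_cons, ih]
  refine ⟨fun i j => ∑ x ∈ S i, ∑ y ∈ S j, (O x y).map φ, ?_, ?_, ?_⟩
  · intro i j
    rw [cardsum]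
    refine Finset.sum_congr rfl fun x _ => ?_
    rw [cardsum]
    exact Finset.sum_congr rfl fun y _ => by rw [Multiset.card_map, hcard]
  · intro i l
    calc ∑ j, Multiset.count l (∑ x ∈ S i, ∑ y ∈ S j, (O x y).map φ)
        = ∑ j, ∑ x ∈ S i, ∑ y ∈ S j, ((O x y).map φ).count l := by
          simp [Multiset.count_sum']
      _ = ∑ x ∈ S i, ∑ j, ∑ y ∈ S j, ((O x y).map φ).count l := Finset.sum_comm
      _ = ∑ x ∈ S i, ∑ y, ∑ m ∈ S l, (O x y).count m := by
          refine Finset.sum_congr rfl fun x _ => ?_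
          rw [hpart (fun y => ((O x y).map φ).count l)]
          exact Finset.sum_congr rfl fun y _ => hcnt _ _
      _ = ∑ x ∈ S i, ∑ m ∈ S l, ∑ y, (O x y).count m := by
          exact Finset.sum_congr rfl fun x _ => Finset.sum_comm
      _ = ∑ x ∈ S i, ∑ m ∈ S l, F x m := by
          exact Finset.sum_congr rfl fun x _ =>
            Finset.sum_congr rfl fun m _ => hrow x m
  · intro j l
    calc ∑ i, Multiset.count l (∑ x ∈ S i, ∑ y ∈ S j, (O x y).map φ)
        = ∑ i, ∑ x ∈ S i, ∑ y ∈ S j, ((O x y).map φ).count l := by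
          simp [Multiset.count_sum']
      _ = ∑ x, ∑ y ∈ S j, ((O x y).map φ).count l :=
          hpart (fun x => ∑ y ∈ S j, ((O x y).map φ).count l)
      _ = ∑ x, ∑ y ∈ S j, ∑ m ∈ S l, (O x y).count m := by
          refine Finset.sum_congr rfl fun x _ => Finset.sum_congr rfl fun y _ => hcnt _ _
      _ = ∑ y ∈ S j, ∑ m ∈ S l, ∑ x, (O x y).count m := by
          rw [Finset.sum_comm]
          exact Finset.sum_congr rfl fun y _ => Finset.sum_comm
      _ = ∑ y ∈ S j, ∑ m ∈ S l, F m y := by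
          exact Finset.sum_congr rfl fun y _ =>
            Finset.sum_congr rfl fun m _ => hcol y m
      _ = ∑ m ∈ S l, ∑ y ∈ S j, F m y := Finset.sum_comm
end

section
/- Let h_1 ≥ h_2 ≥ … ≥ h_k > 0 be integers and let n be an integer with n ≥ 2(h_1 + h_2 + … + h_k). Then there exists an incomplete latin square ILS(n; h_1 h_2 … h_k). -/
namespace ILS18





/-- Given capacities `c` with `D ≤ ∑ c`, we can pick a pointwise-smaller
function with total exactly `D`. -/
lemma exists_pointwise_le_sum {β : Type*} [Fintype β] (c : β → ℕ) (D : ℕ)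
    (hD : D ≤ ∑ b, c b) : ∃ m : β → ℕ, (∀ b, m b ≤ c b) ∧ ∑ b, m b = D := by
  classical
  induction D with
  | zero => exact ⟨fun _ => 0, fun _ => Nat.zero_le _, by simp⟩
  | succ D ih =>
    obtain ⟨m, hle, hsum⟩ := ih (Nat.le_of_succ_le hD)
    have hlt : ∑ b, m b < ∑ b, c b := by omega
    have : ∃ b, m b < c b := by
      by_contra hcon
      push_neg at hcon
      have : ∑ b, c b ≤ ∑ b, m b := Finset.sum_le_sum fun b _ => hcon b
      omega
    obtain ⟨b0, hb0⟩ := this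
    refine ⟨Function.update m b0 (m b0 + 1), ?_, ?_⟩
    · intro b
      rcases eq_or_ne b b0 with rfl | hne
      · simp [Function.update_self]; omega
      · simp [Function.update_of_ne hne, hle b]
    · rw [Finset.sum_update_of_mem (Finset.mem_univ _), ← Finset.erase_eq]
      rw [← hsum, ← Finset.sum_erase_add _ _ (Finset.mem_univ b0)]
      omega

/-- Transportation: split capacities `c` with `∑ c = K * D` into `K` buckets
each of total `D`. -/
lemma exists_split {β : Type*} [Fintype β] [DecidableEq β] (c : β → ℕ) (K D : ℕ)
    (hc : ∑ b, c b = K * D) :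
    ∃ M : ℕ → β → ℕ, (∀ j, j < K → ∑ b, M j b = D) ∧
      (∀ b, ∑ j ∈ Finset.range K, M j b = c b) := by
  classical
  induction K generalizing c with
  | zero =>
    refine ⟨fun _ _ => 0, by omega, fun b => ?_⟩
    simp only [Finset.range_zero, Finset.sum_empty]
    have : c b ≤ ∑ b, c b := Finset.single_le_sum (fun _ _ => Nat.zero_le _) (Finset.mem_univ b)
    omega
  | succ K ih =>
    have hD : D ≤ ∑ b, c b := by rw [hc]; nlinarith [Nat.zero_le (K * D)]
    obtain ⟨m0, hm0le, hm0sum⟩ := exists_pointwise_le_sum c D hD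
    have hsub : ∑ b, (c b - m0 b) = K * D := by
      rw [Finset.sum_tsub_distrib _ (fun b _ => hm0le b), hm0sum, hc]
      ring_nf
      omega
    obtain ⟨M, hMrow, hMcol⟩ := ih _ hsub
    refine ⟨fun j => if j = K then m0 else M j, ?_, ?_⟩
    · intro j hj
      rcases eq_or_ne j K with rfl | hne
      · simpa using hm0sum
      · simpa [hne] using hMrow j (by omega)
    · intro b
      rw [Finset.range_add_one, Finset.sum_insert (by simp)]
      simp only [eq_self_iff_true, if_true]
      have : ∑ j ∈ Finset.range K, (if j = K then m0 else M j) b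
          = ∑ j ∈ Finset.range K, M j b := by
        apply Finset.sum_congr rfl
        intro j hj
        have : j ≠ K := by simp at hj; omega
        simp [this]
      rw [this, hMcol b]
      have := hm0le b
      omega




/-- Decompose a `Δ`-regular bipartite multigraph (given by multiplicities `m`)
between two finite types of the same cardinality into `Δ` perfect matchings. -/
lemma exists_decomposition {ι β : Type*} [Fintype ι] [Fintype β]
    [DecidableEq ι] [DecidableEq β] (hcard : Fintype.card ι = Fintype.card β)
    (Δ : ℕ) (m : ι → β → ℕ)
    (hrow : ∀ a, ∑ b, m a b = Δ) (hcol : ∀ b, ∑ a, m a b = Δ) :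
    ∃ M : ℕ → ι → β, (∀ d, d < Δ → Function.Bijective (M d)) ∧
      (∀ a b, ((Finset.range Δ).filter (fun d => M d a = b)).card = m a b) := by
  classical
  induction Δ generalizing m with
  | zero =>
    have he : Nonempty (ι ≃ β) := ⟨Fintype.equivOfCardEq hcard⟩
    refine ⟨fun _ => he.some, by omega, fun a b => ?_⟩
    have : m a b ≤ ∑ b, m a b := Finset.single_le_sum (fun _ _ => Nat.zero_le _) (Finset.mem_univ b)
    rw [hrow a] at this
    simp only [Finset.range_zero, Finset.filter_empty, Finset.card_empty]
    omega
  | succ Δ ih =>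
    -- Hall's condition
    set t : ι → Finset β := fun a => Finset.univ.filter (fun b => 0 < m a b) with ht
    have hall : ∀ S : Finset ι, S.card ≤ (S.biUnion t).card := by
      intro S
      have key : (Δ + 1) * S.card ≤ (Δ + 1) * (S.biUnion t).card := by
        calc (Δ + 1) * S.card = ∑ a ∈ S, (Δ + 1) := by
              rw [Finset.sum_const, smul_eq_mul, mul_comm]
          _ = ∑ a ∈ S, ∑ b, m a b := by
              exact Finset.sum_congr rfl fun a _ => (hrow a).symm
          _ = ∑ a ∈ S, ∑ b ∈ S.biUnion t, m a b := by
              refine Finset.sum_congr rfl fun a ha => ?_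
              refine (Finset.sum_subset (Finset.subset_univ _) ?_).symm
              intro b _ hb
              by_contra hpos
              exact hb (Finset.mem_biUnion.mpr ⟨a, ha, by
                simp only [ht, Finset.mem_filter, Finset.mem_univ, true_and]
                omega⟩)
          _ = ∑ b ∈ S.biUnion t, ∑ a ∈ S, m a b := Finset.sum_comm
          _ ≤ ∑ b ∈ S.biUnion t, (Δ + 1) := by
              refine Finset.sum_le_sum fun b _ => ?_
              rw [← hcol b]
              exact Finset.sum_le_sum_of_subset (Finset.subset_univ S)
          _ = (S.biUnion t).card * (Δ + 1) := by rw [Finset.sum_const, smul_eq_mul]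
          _ = (Δ + 1) * (S.biUnion t).card := mul_comm _ _
      exact Nat.le_of_mul_le_mul_left key (Nat.succ_pos Δ)
    obtain ⟨f, hfinj, hfmem⟩ := (Finset.all_card_le_biUnion_card_iff_exists_injective t).mp hall
    have hfbij : Function.Bijective f :=
      (Fintype.bijective_iff_injective_and_card f).mpr ⟨hfinj, hcard⟩
    have hfpos : ∀ a, 0 < m a (f a) := by
      intro a
      have := hfmem a
      simp only [ht, Finset.mem_filter] at this
      exact this.2
    set m' : ι → β → ℕ := fun a b => m a b - (if f a = b then 1 else 0) with hm'
    have hrow' : ∀ a, ∑ b, m' a b = Δ := by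
      intro a
      rw [Finset.sum_tsub_distrib _ (fun b _ => by
        rcases eq_or_ne (f a) b with rfl | hne
        · rw [if_pos rfl]; exact hfpos a
        · simp [hne])]
      rw [hrow a, Finset.sum_ite_eq _ (f a) (fun _ => 1)]
      simp
    have hcol' : ∀ b, ∑ a, m' a b = Δ := by
      intro b
      rw [Finset.sum_tsub_distrib _ (fun a _ => by
        rcases eq_or_ne (f a) b with heq | hne
        · rw [if_pos heq, ← heq]; exact hfpos a
        · simp [hne])]
      rw [hcol b]
      obtain ⟨a0, ha0⟩ := hfbij.surjective b
      have : ∑ a, (if f a = b then 1 else 0) = 1 := by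
        rw [Finset.sum_boole]
        have : Finset.univ.filter (fun a => f a = b) = {a0} := by
          ext a
          simp only [Finset.mem_filter, Finset.mem_univ, true_and, Finset.mem_singleton]
          constructor
          · intro hfa; exact hfinj (hfa.trans ha0.symm)
          · rintro rfl; exact ha0
        simp [this]
      rw [this]
      omega
    obtain ⟨M, hMbij, hMcount⟩ := ih m' hrow' hcol'
    refine ⟨fun d => if d = Δ then f else M d, ?_, ?_⟩
    · intro d hd
      rcases eq_or_ne d Δ with rfl | hne
      · simpa using hfbij
      · have := hMbij d (by omega)
        simpa [hne] using this
    · intro a b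
      rw [Finset.range_add_one, Finset.filter_insert]
      have hreduce : (Finset.range Δ).filter (fun d => (if d = Δ then f else M d) a = b)
          = (Finset.range Δ).filter (fun d => M d a = b) := by
        apply Finset.filter_congr
        intro d hd
        have : d ≠ Δ := by simp at hd; omega
        simp [this]
      by_cases hfa : f a = b
      · rw [if_pos (by simpa using hfa)]
        rw [Finset.card_insert_of_notMem (by simp)]
        rw [hreduce, hMcount a b]
        have := hfpos a
        rw [hfa] at this
        simp only [hm', if_pos hfa]
        omega
      · rw [if_neg (by simpa using hfa)]
        rw [hreduce, hMcount a b]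
        simp [hm', hfa]




/-- Offsets of the blocks: `o h i = h 1 + ⋯ + h i`. -/
def o (h : ℕ → ℕ) (i : ℕ) : ℕ := ∑ j ∈ Finset.Icc 1 i, h j

lemma o_zero (h : ℕ → ℕ) : o h 0 = 0 := by simp [o]

lemma o_succ (h : ℕ → ℕ) (i : ℕ) : o h (i + 1) = o h i + h (i + 1) := by
  unfold o
  rw [← Finset.sum_Icc_succ_top (by omega : 1 ≤ i + 1)]

lemma o_mono (h : ℕ → ℕ) : Monotone (o h) := by
  intro i j hij
  exact Finset.sum_le_sum_of_subset (Finset.Icc_subset_Icc_right hij)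

/-- The index of the block containing `x`. -/
noncomputable def bIdx (h : ℕ → ℕ) (x : ℕ) : ℕ := sInf {i | x < o h i}

section BlockFacts

variable {k n : ℕ} {h : ℕ → ℕ}

lemma bIdx_lt (hx : x < o h k) : x < o h (bIdx h x) :=
  Nat.sInf_mem (⟨k, hx⟩ : Set.Nonempty {i | x < o h i})

lemma bIdx_le (hx : x < o h k) : bIdx h x ≤ k := Nat.sInf_le hx

lemma bIdx_pos (hx : x < o h k) : 1 ≤ bIdx h x := by
  by_contra hcon
  have h0 : bIdx h x = 0 := by omega
  have := bIdx_lt hx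
  rw [h0, o_zero] at this
  omega

lemma bIdx_lb (hx : x < o h k) : o h (bIdx h x - 1) ≤ x := by
  have h1 : 1 ≤ bIdx h x := bIdx_pos hx
  by_contra hcon
  push_neg at hcon
  have : bIdx h x ≤ bIdx h x - 1 := Nat.sInf_le hcon
  omega

lemma bIdx_eq_of (hi : 1 ≤ i) (hlb : o h (i - 1) ≤ x) (hub : x < o h i) :
    bIdx h x = i := by
  have hle : bIdx h x ≤ i := Nat.sInf_le hub
  have hge : i ≤ bIdx h x := by
    by_contra hcon
    push_neg at hcon
    have hmem : x < o h (bIdx h x) := Nat.sInf_mem (⟨i, hub⟩ : Set.Nonempty {j | x < o h j})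
    have : o h (bIdx h x) ≤ o h (i - 1) := o_mono h (by omega)
    omega
  omega

end BlockFacts

/-- The top-left `s × s` corner of the latin square: cyclic subsquares on the
diagonal blocks, and fresh symbols `≥ s` (coded via residues mod `t = n - s`)
off the diagonal. -/
noncomputable def corner (k n : ℕ) (h : ℕ → ℕ) (x y : ℕ) : ℕ :=
  if bIdx h x = bIdx h y then
    o h (bIdx h x - 1) +
      ((x - o h (bIdx h x - 1)) + (y - o h (bIdx h x - 1))) % h (bIdx h x)
  else o h k + (x + y) % (n - o h k)

section CornerFacts

variable {k n : ℕ} {h : ℕ → ℕ}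
variable (hk : 1 ≤ k) (hpos : ∀ i, 1 ≤ i → i ≤ k → 0 < h i) (hn : 2 * o h k ≤ n)

include hpos in
/-- If `x` and `y` are in the same block, the corner entry lies in that block. -/
lemma corner_mem_block (hx : x < o h k) (hy : y < o h k) (hxy : bIdx h x = bIdx h y) :
    o h (bIdx h x - 1) ≤ corner k n h x y ∧ corner k n h x y < o h (bIdx h x) := by
  have h1 : 1 ≤ bIdx h x := bIdx_pos hx
  have h2 : bIdx h x ≤ k := bIdx_le hx
  have hh : 0 < h (bIdx h x) := hpos _ h1 h2
  have hosucc : o h (bIdx h x) = o h (bIdx h x - 1) + h (bIdx h x) := by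
    have heq1 : bIdx h x - 1 + 1 = bIdx h x := by omega
    conv_lhs => rw [← heq1]
    rw [o_succ, heq1]
  unfold corner
  rw [if_pos hxy]
  constructor
  · omega
  · have := Nat.mod_lt ((x - o h (bIdx h x - 1)) + (y - o h (bIdx h x - 1))) hh
    omega

include hpos hn in
lemma corner_lt (hx : x < o h k) (hy : y < o h k) : corner k n h x y < n := by
  by_cases hxy : bIdx h x = bIdx h y
  · have := (corner_mem_block (n := n) hpos hx hy hxy).2
    have h2 : bIdx h x ≤ k := bIdx_le hx
    have := o_mono h h2
    omega
  · unfold corner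
    rw [if_neg hxy]
    have ht : 0 < n - o h k := by
      have hpos' : 0 < o h k := lt_of_le_of_lt (Nat.zero_le x) hx
      omega
    have := Nat.mod_lt (x + y) ht
    omega

lemma corner_offdiag_ge (hxy : bIdx h x ≠ bIdx h y) : o h k ≤ corner k n h x y := by
  unfold corner
  rw [if_neg hxy]
  omega

include hpos in
lemma block_bounds (hx : x < o h k) :
    o h (bIdx h x - 1) ≤ x ∧ x < o h (bIdx h x - 1) + h (bIdx h x) := by
  have h1 := bIdx_pos hx
  have hlb := bIdx_lb hx
  have hub := bIdx_lt hx
  have hosucc : o h (bIdx h x) = o h (bIdx h x - 1) + h (bIdx h x) := by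
    have heq1 : bIdx h x - 1 + 1 = bIdx h x := by omega
    conv_lhs => rw [← heq1]
    rw [o_succ, heq1]
  omega

include hpos hn in
/-- Rows of the corner are injective. -/
lemma corner_row_inj (hx : x < o h k) (hy : y < o h k) (hy' : y' < o h k)
    (heq : corner k n h x y = corner k n h x y') : y = y' := by
  have hsk : o h k ≤ n - o h k := by omega
  by_cases hb : bIdx h x = bIdx h y <;> by_cases hb' : bIdx h x = bIdx h y'
  · have hyblk := block_bounds hpos hy
    have hy'blk := block_bounds hpos hy'
    rw [← hb] at hyblk
    rw [← hb'] at hy'blk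
    unfold corner at heq
    rw [if_pos hb, if_pos hb'] at heq
    have hmod := Nat.add_left_cancel heq
    have hcong : (y - o h (bIdx h x - 1)) ≡ (y' - o h (bIdx h x - 1)) [MOD h (bIdx h x)] :=
      Nat.ModEq.add_left_cancel' (x - o h (bIdx h x - 1)) hmod
    have hfin : (y - o h (bIdx h x - 1)) % h (bIdx h x)
        = (y' - o h (bIdx h x - 1)) % h (bIdx h x) := hcong
    rw [Nat.mod_eq_of_lt (by omega), Nat.mod_eq_of_lt (by omega)] at hfin
    omega
  · exfalso
    have hlt := (corner_mem_block (n := n) hpos hx hy hb).2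
    have hge := corner_offdiag_ge (k := k) (n := n) (x := x) (y := y') hb'
    have := o_mono h (bIdx_le hx)
    omega
  · exfalso
    have hlt := (corner_mem_block (n := n) hpos hx hy' hb').2
    have hge := corner_offdiag_ge (k := k) (n := n) (x := x) (y := y) hb
    have := o_mono h (bIdx_le hx)
    omega
  · unfold corner at heq
    rw [if_neg hb, if_neg hb'] at heq
    have hmod := Nat.add_left_cancel heq
    have hcong : y ≡ y' [MOD (n - o h k)] := Nat.ModEq.add_left_cancel' x hmod
    have hfin : y % (n - o h k) = y' % (n - o h k) := hcong
    rw [Nat.mod_eq_of_lt (by omega), Nat.mod_eq_of_lt (by omega)] at hfin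
    omega

include hpos hn in
/-- Columns of the corner are injective. -/
lemma corner_col_inj (hx : x < o h k) (hx' : x' < o h k) (hy : y < o h k)
    (heq : corner k n h x y = corner k n h x' y) : x = x' := by
  have hsk : o h k ≤ n - o h k := by omega
  by_cases hb : bIdx h x = bIdx h y <;> by_cases hb' : bIdx h x' = bIdx h y
  · have hbb : bIdx h x = bIdx h x' := by rw [hb, hb']
    have hxblk := block_bounds hpos hx
    have hx'blk := block_bounds hpos hx'
    rw [← hbb] at hx'blk
    unfold corner at heq
    rw [if_pos hb, if_pos hb'] at heq
    rw [← hbb] at heq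
    have hmod := Nat.add_left_cancel heq
    have hcong : (x - o h (bIdx h x - 1)) ≡ (x' - o h (bIdx h x - 1)) [MOD h (bIdx h x)] :=
      Nat.ModEq.add_right_cancel' (y - o h (bIdx h x - 1)) hmod
    have hfin : (x - o h (bIdx h x - 1)) % h (bIdx h x)
        = (x' - o h (bIdx h x - 1)) % h (bIdx h x) := hcong
    rw [Nat.mod_eq_of_lt (by omega), Nat.mod_eq_of_lt (by omega)] at hfin
    omega
  · exfalso
    have hlt := (corner_mem_block (n := n) hpos hx hy hb).2
    have hge := corner_offdiag_ge (k := k) (n := n) (x := x') (y := y) hb'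
    have := o_mono h (bIdx_le hx)
    omega
  · exfalso
    have hlt := (corner_mem_block (n := n) hpos hx' hy hb').2
    have hge := corner_offdiag_ge (k := k) (n := n) (x := x) (y := y) hb
    have := o_mono h (bIdx_le hx')
    omega
  · unfold corner at heq
    rw [if_neg hb, if_neg hb'] at heq
    have hmod := Nat.add_left_cancel heq
    have hcong : x ≡ x' [MOD (n - o h k)] := Nat.ModEq.add_right_cancel' y hmod
    have hfin : x % (n - o h k) = x' % (n - o h k) := hcong
    rw [Nat.mod_eq_of_lt (by omega), Nat.mod_eq_of_lt (by omega)] at hfin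
    omega

end CornerFacts





lemma sum_indicator_not_mem {γ : Type*} [Fintype γ] [DecidableEq γ] (T : Finset γ) :
    ∑ a : γ, (if a ∈ T then (0:ℕ) else 1) = Fintype.card γ - T.card := by
  classical
  rw [← Finset.sum_filter_add_sum_filter_not Finset.univ (fun a => a ∈ T)]
  have h1 : ∑ a ∈ Finset.univ.filter (fun a => a ∈ T), (if a ∈ T then (0:ℕ) else 1) = 0 :=
    Finset.sum_eq_zero (by intro a ha; simp only [Finset.mem_filter] at ha; simp [ha.2])
  have h2 : ∑ a ∈ Finset.univ.filter (fun a => ¬ a ∈ T), (if a ∈ T then (0:ℕ) else 1)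
      = (Finset.univ.filter (fun a => ¬ a ∈ T)).card := by
    have hterm : ∀ a ∈ Finset.univ.filter (fun a => ¬ a ∈ T),
        (if a ∈ T then (0:ℕ) else 1) = 1 := by
      intro a ha
      simp only [Finset.mem_filter] at ha
      simp [ha.2]
    rw [Finset.sum_congr rfl hterm, Finset.sum_const, smul_eq_mul, mul_one]
  have h3 : (Finset.univ.filter (fun a => ¬ a ∈ T)).card = Fintype.card γ - T.card := by
    have he : Finset.univ.filter (fun a => ¬ a ∈ T) = Finset.univ \ T := by ext a; simp
    rw [he, Finset.card_sdiff_of_subset (Finset.subset_univ _), Finset.card_univ]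
  omega

lemma sum_indicator_mem {γ : Type*} [Fintype γ] [DecidableEq γ] (T : Finset γ) :
    ∑ a : γ, (if a ∈ T then (1:ℕ) else 0) = T.card := by
  classical
  rw [Finset.sum_boole]
  have h1 : Finset.univ.filter (fun a => a ∈ T) = T := by ext a; simp
  rw [h1]
  simp


end ILS18

open Finset ILS18 in
/-- if `h_1 ≥ h_2 ≥ … ≥ h_k > 0` and `n ≥ 2 (h_1 + … + h_k)`,
then an `ILS(n; h_1 … h_k)` exists. -/
theorem statement18 (k n : ℕ) (h : ℕ → ℕ) (hk : 1 ≤ k)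
    (hpos : ∀ i, 1 ≤ i → i ≤ k → 0 < h i)
    (hmono : ∀ i, 1 ≤ i → i < k → h (i + 1) ≤ h i)
    (hn : 2 * ∑ i ∈ Finset.Icc 1 k, h i ≤ n) :
    HasILS n (fun i : Fin k => h ((i : ℕ) + 1)) := by

  classical
  have hnle : 2 * o h k ≤ n := hn
  have hs1 : 1 ≤ o h k := by
    have h11 : o h 1 = h 1 := by unfold o; simp
    have hmono1 : o h 1 ≤ o h k := o_mono h hk
    have := hpos 1 le_rfl hk
    omega
  have hn0 : 0 < n := by omega
  haveI : Nonempty (Fin n) := ⟨⟨0, hn0⟩⟩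
  have hsn : o h k ≤ n := by omega
  have hst : o h k ≤ n - o h k := by omega
  -- the corner as a `Fin n` valued function
  let F : Fin n → Fin n → Fin n := fun x y =>
    ⟨corner k n h x.val y.val % n, Nat.mod_lt _ hn0⟩
  have hFval : ∀ (x y : Fin n), (x:ℕ) < o h k → (y:ℕ) < o h k →
      ((F x y : Fin n) : ℕ) = corner k n h x y := by
    intro x y hx hy
    show corner k n h x.val y.val % n = _
    exact Nat.mod_eq_of_lt (corner_lt hpos hnle hx hy)
  -- the set of "real" rows
  let Real : Finset (Fin n) := Finset.univ.filter (fun a : Fin n => (a:ℕ) < o h k)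
  have hRealMem : ∀ a : Fin n, a ∈ Real ↔ (a:ℕ) < o h k := by
    intro a; simp [Real]
  have hRealCard : Real.card = o h k := by
    have hall : ∀ m ∈ Finset.range (o h k), m < n := by
      intro m hm; rw [Finset.mem_range] at hm; omega
    have he : Real = (Finset.range (o h k)).attachFin hall := by
      ext a
      simp [Real, Finset.mem_attachFin, Finset.mem_range]
    rw [he, Finset.card_attachFin, Finset.card_range]
  -- row symbol sets of the corner
  let RS : Fin n → Finset (Fin n) := fun x => Real.image (fun y => F x y)
  have hRS_card : ∀ x : Fin n, (x:ℕ) < o h k → (RS x).card = o h k := by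
    intro x hx
    rw [Finset.card_image_of_injOn, hRealCard]
    intro y hy y' hy' heq
    rw [Finset.mem_coe, hRealMem] at hy
    rw [Finset.mem_coe, hRealMem] at hy'
    have hv : ((F x y : Fin n) : ℕ) = ((F x y' : Fin n) : ℕ) := congrArg Fin.val heq
    rw [hFval x y hx hy, hFval x y' hx hy'] at hv
    exact Fin.ext (corner_row_inj hpos hnle hx hy hy' hv)
  -- number of corner rows containing a symbol
  let RW : Fin n → Finset (Fin n) := fun σ =>
    Finset.univ.filter (fun x => (x:ℕ) < o h k ∧ σ ∈ RS x)
  have hRW_le : ∀ σ, (RW σ).card ≤ o h k := by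
    intro σ
    rw [← hRealCard]
    apply Finset.card_le_card
    intro a ha
    simp only [RW, Finset.mem_filter] at ha
    exact (hRealMem a).mpr ha.2.1
  have hRW_sum : ∑ σ : Fin n, (RW σ).card = o h k * o h k := by
    have h1 : ∀ σ : Fin n, (RW σ).card
        = ∑ x : Fin n, if ((x:ℕ) < o h k ∧ σ ∈ RS x) then 1 else 0 := by
      intro σ
      rw [Finset.card_filter]
    calc ∑ σ : Fin n, (RW σ).card
        = ∑ σ : Fin n, ∑ x : Fin n, (if ((x:ℕ) < o h k ∧ σ ∈ RS x) then 1 else 0) :=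
          Finset.sum_congr rfl (fun σ _ => h1 σ)
      _ = ∑ x : Fin n, ∑ σ : Fin n, (if ((x:ℕ) < o h k ∧ σ ∈ RS x) then 1 else 0) :=
          Finset.sum_comm
      _ = ∑ x : Fin n, (if (x:ℕ) < o h k then (RS x).card else 0) := by
          refine Finset.sum_congr rfl (fun x _ => ?_)
          by_cases hx : (x:ℕ) < o h k
          · rw [if_pos hx]
            rw [show (∑ σ : Fin n, (if ((x:ℕ) < o h k ∧ σ ∈ RS x) then 1 else 0))
                = ∑ σ : Fin n, (if σ ∈ RS x then 1 else 0) from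
              Finset.sum_congr rfl (fun σ _ => by simp [hx])]
            exact sum_indicator_mem (RS x)
          · rw [if_neg hx]
            refine Finset.sum_eq_zero (fun σ _ => by simp [hx])
      _ = ∑ x ∈ Real, (RS x).card := by
          rw [Finset.sum_filter]
      _ = ∑ _x ∈ Real, o h k :=
          Finset.sum_congr rfl (fun x hxm => hRS_card x ((hRealMem x).mp hxm))
      _ = o h k * o h k := by
          rw [Finset.sum_const, hRealCard, smul_eq_mul]
  -- capacities for the dummy rows
  let cap : Fin n → ℕ := fun σ => (n - 2 * o h k) + (RW σ).card
  have hcap_sum : ∑ σ : Fin n, cap σ = (n - o h k) * (n - o h k) := by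
    show ∑ σ : Fin n, ((n - 2 * o h k) + (RW σ).card) = _
    rw [Finset.sum_add_distrib, hRW_sum, Finset.sum_const, Finset.card_univ,
      Fintype.card_fin, smul_eq_mul]
    obtain ⟨u, hu⟩ : ∃ u, n = 2 * o h k + u := ⟨n - 2 * o h k, by omega⟩
    have e1 : n - 2 * o h k = u := by omega
    have e2 : n - o h k = o h k + u := by omega
    rw [e1, e2, hu]
    ring
  obtain ⟨MS, hMSrow, hMScol⟩ := exists_split cap (n - o h k) (n - o h k) hcap_sum
  -- first multiplicity matrix: real rows + dummy rows vs symbols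
  let m1 : Fin n → Fin n → ℕ := fun a b =>
    if (a:ℕ) < o h k then (if b ∈ RS a then 0 else 1) else MS ((a:ℕ) - o h k) b
  have hm1row : ∀ a, ∑ b : Fin n, m1 a b = n - o h k := by
    intro a
    by_cases ha : (a:ℕ) < o h k
    · have he : ∀ b : Fin n, m1 a b = if b ∈ RS a then 0 else 1 := by
        intro b; simp only [m1, if_pos ha]
      rw [Finset.sum_congr rfl (fun b _ => he b), sum_indicator_not_mem (RS a),
        Fintype.card_fin, hRS_card a ha]
    · have hlt : (a:ℕ) - o h k < n - o h k := by have := a.isLt; omega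
      have he : ∀ b : Fin n, m1 a b = MS ((a:ℕ) - o h k) b := by
        intro b; simp only [m1, if_neg ha]
      rw [Finset.sum_congr rfl (fun b _ => he b)]
      exact hMSrow _ hlt
  have hm1col : ∀ b, ∑ a : Fin n, m1 a b = n - o h k := by
    intro b
    rw [← Finset.sum_filter_add_sum_filter_not Finset.univ (fun a : Fin n => (a:ℕ) < o h k)]
    have hpart1 : ∑ a ∈ Finset.univ.filter (fun a : Fin n => (a:ℕ) < o h k), m1 a b
        = o h k - (RW b).card := by
      have he : ∀ a ∈ Finset.univ.filter (fun a : Fin n => (a:ℕ) < o h k),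
          m1 a b = if b ∈ RS a then 0 else 1 := by
        intro a ha
        simp only [Finset.mem_filter] at ha
        simp only [m1, if_pos ha.2]
      rw [Finset.sum_congr rfl he]
      have hsplit := Finset.sum_filter_add_sum_filter_not
        (Finset.univ.filter (fun a : Fin n => (a:ℕ) < o h k))
        (fun a => b ∈ RS a) (fun a => if b ∈ RS a then (0:ℕ) else 1)
      have hz : ∑ a ∈ (Finset.univ.filter (fun a : Fin n => (a:ℕ) < o h k)).filter
          (fun a => b ∈ RS a), (if b ∈ RS a then (0:ℕ) else 1) = 0 :=
        Finset.sum_eq_zero (fun a ha => by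
          simp only [Finset.mem_filter] at ha
          simp [ha.2])
      have ho : ∑ a ∈ (Finset.univ.filter (fun a : Fin n => (a:ℕ) < o h k)).filter
          (fun a => ¬ b ∈ RS a), (if b ∈ RS a then (0:ℕ) else 1)
          = ((Finset.univ.filter (fun a : Fin n => (a:ℕ) < o h k)).filter
            (fun a => ¬ b ∈ RS a)).card := by
        have hterm : ∀ a ∈ (Finset.univ.filter (fun a : Fin n => (a:ℕ) < o h k)).filter
            (fun a => ¬ b ∈ RS a), (if b ∈ RS a then (0:ℕ) else 1) = 1 := by
          intro a ha
          simp only [Finset.mem_filter] at ha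
          simp [ha.2]
        rw [Finset.sum_congr rfl hterm, Finset.sum_const, smul_eq_mul, mul_one]
      have hcards : ((Finset.univ.filter (fun a : Fin n => (a:ℕ) < o h k)).filter
            (fun a => b ∈ RS a)).card
          + ((Finset.univ.filter (fun a : Fin n => (a:ℕ) < o h k)).filter
            (fun a => ¬ b ∈ RS a)).card = o h k := by
        rw [Finset.card_filter_add_card_filter_not, hRealCard]
      have hRWeq : ((Finset.univ.filter (fun a : Fin n => (a:ℕ) < o h k)).filter
          (fun a => b ∈ RS a)) = RW b := by
        ext a
        simp only [RW, Finset.mem_filter, Finset.mem_univ, true_and]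
      rw [← hsplit, hz, ho]
      rw [hRWeq] at hcards
      omega
    have hpart2 : ∑ a ∈ Finset.univ.filter (fun a : Fin n => ¬ (a:ℕ) < o h k), m1 a b
        = cap b := by
      rw [← hMScol b]
      refine Finset.sum_bij' (fun a _ => (a:ℕ) - o h k)
        (fun j hj => (⟨o h k + j, by
          simp only [Finset.mem_range] at hj
          omega⟩ : Fin n)) ?_ ?_ ?_ ?_ ?_
      · intro a ha
        simp only [Finset.mem_filter] at ha
        simp only [Finset.mem_range]
        have := a.isLt
        omega
      · intro j hj
        simp only [Finset.mem_filter, Finset.mem_univ, true_and]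
        simp
      · intro a ha
        simp only [Finset.mem_filter] at ha
        apply Fin.ext
        simp only []
        have := ha.2
        omega
      · intro j hj
        simp only []
        omega
      · intro a ha
        simp only [Finset.mem_filter] at ha
        simp only [m1, if_neg ha.2]
    rw [hpart1, hpart2]
    show o h k - (RW b).card + ((n - 2 * o h k) + (RW b).card) = n - o h k
    have := hRW_le b
    omega
  -- decompose into matchings: the remaining columns of the rectangle
  obtain ⟨M, hMbij, hMcnt⟩ := exists_decomposition (rfl : Fintype.card (Fin n) = _)
    (n - o h k) m1 hm1row hm1col
  have hm1le1 : ∀ (a b : Fin n), (a:ℕ) < o h k → m1 a b ≤ 1 := by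
    intro a b ha
    simp only [m1, if_pos ha]
    split <;> omega
  have hMonce : ∀ (x : Fin n), (x:ℕ) < o h k → ∀ d d', d < n - o h k → d' < n - o h k →
      M d x = M d' x → d = d' := by
    intro x hx d d' hd hd' heq
    by_contra hne
    have hsub : ({d, d'} : Finset ℕ) ⊆
        (Finset.range (n - o h k)).filter (fun dd => M dd x = M d x) := by
      intro dd hdd
      simp only [Finset.mem_insert, Finset.mem_singleton] at hdd
      rcases hdd with rfl | rfl
      · simp [Finset.mem_filter, Finset.mem_range, hd]
      · simp [Finset.mem_filter, Finset.mem_range, hd', heq]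
    have hcard2 : 2 ≤ ((Finset.range (n - o h k)).filter (fun dd => M dd x = M d x)).card := by
      calc 2 = ({d, d'} : Finset ℕ).card := by
            rw [Finset.card_insert_of_notMem (by simp [hne]), Finset.card_singleton]
        _ ≤ _ := Finset.card_le_card hsub
    rw [hMcnt x (M d x)] at hcard2
    have := hm1le1 x (M d x) hx
    omega
  have hMnotRS : ∀ (x : Fin n), (x:ℕ) < o h k → ∀ d, d < n - o h k → M d x ∉ RS x := by
    intro x hx d hd hmem
    have h1 : 0 < m1 x (M d x) := by
      rw [← hMcnt x (M d x)]
      refine Finset.card_pos.mpr ⟨d, ?_⟩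
      simp [Finset.mem_filter, Finset.mem_range, hd]
    simp only [m1, if_pos hx, if_pos hmem] at h1
    omega
  -- the rectangle
  let rect : Fin n → Fin n → Fin n := fun x y =>
    if (y:ℕ) < o h k then F x y else M ((y:ℕ) - o h k) x
  have hMd_lt : ∀ y : Fin n, ¬ (y:ℕ) < o h k → (y:ℕ) - o h k < n - o h k := by
    intro y hy
    have := y.isLt
    omega
  have hFmemRS : ∀ (x y : Fin n), (y:ℕ) < o h k → F x y ∈ RS x := by
    intro x y hy
    exact Finset.mem_image_of_mem _ ((hRealMem y).mpr hy)
  have hrect_row_inj : ∀ x : Fin n, (x:ℕ) < o h k →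
      Function.Injective (fun y => rect x y) := by
    intro x hx y y' heq
    simp only [rect] at heq
    by_cases hy : (y:ℕ) < o h k <;> by_cases hy' : (y':ℕ) < o h k
    · rw [if_pos hy, if_pos hy'] at heq
      have hv : ((F x y : Fin n) : ℕ) = ((F x y' : Fin n) : ℕ) := congrArg Fin.val heq
      rw [hFval x y hx hy, hFval x y' hx hy'] at hv
      exact Fin.ext (corner_row_inj hpos hnle hx hy hy' hv)
    · exfalso
      rw [if_pos hy, if_neg hy'] at heq
      exact hMnotRS x hx _ (hMd_lt y' hy') (heq ▸ hFmemRS x y hy)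
    · exfalso
      rw [if_neg hy, if_pos hy'] at heq
      exact hMnotRS x hx _ (hMd_lt y hy) (heq.symm ▸ hFmemRS x y' hy')
    · rw [if_neg hy, if_neg hy'] at heq
      have := hMonce x hx _ _ (hMd_lt y hy) (hMd_lt y' hy') heq
      apply Fin.ext
      omega
  have hrect_row_bij : ∀ x : Fin n, (x:ℕ) < o h k →
      Function.Bijective (fun y => rect x y) :=
    fun x hx => Finite.injective_iff_bijective.mp (hrect_row_inj x hx)
  have hrect_col_inj : ∀ (y x x' : Fin n), (x:ℕ) < o h k → (x':ℕ) < o h k →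
      rect x y = rect x' y → x = x' := by
    intro y x x' hx hx' heq
    simp only [rect] at heq
    by_cases hy : (y:ℕ) < o h k
    · rw [if_pos hy, if_pos hy] at heq
      have hv : ((F x y : Fin n) : ℕ) = ((F x' y : Fin n) : ℕ) := congrArg Fin.val heq
      rw [hFval x y hx hy, hFval x' y hx' hy] at hv
      exact Fin.ext (corner_col_inj hpos hnle hx hx' hy hv)
    · rw [if_neg hy, if_neg hy] at heq
      exact (hMbij _ (hMd_lt y hy)).injective heq
  -- column symbol sets of the rectangle
  let CS : Fin n → Finset (Fin n) := fun y => Real.image (fun x => rect x y)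
  have hCS_card : ∀ y, (CS y).card = o h k := by
    intro y
    rw [Finset.card_image_of_injOn, hRealCard]
    intro x hxm x' hx'm heq
    rw [Finset.mem_coe, hRealMem] at hxm
    rw [Finset.mem_coe, hRealMem] at hx'm
    exact hrect_col_inj y x x' hxm hx'm heq
  -- each symbol appears in exactly `s` columns of the rectangle
  let CW : Fin n → Finset (Fin n) := fun σ => Finset.univ.filter (fun y => σ ∈ CS y)
  have hCW_card : ∀ σ, (CW σ).card = o h k := by
    intro σ
    rw [← hRealCard]
    symm
    refine Finset.card_bij (fun x _ => Function.invFun (fun y => rect x y) σ) ?_ ?_ ?_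
    · intro x hxm
      have hx := (hRealMem x).mp hxm
      have hinv : rect x (Function.invFun (fun y => rect x y) σ) = σ :=
        Function.invFun_eq ((hrect_row_bij x hx).surjective σ)
      simp only [CW, Finset.mem_filter, Finset.mem_univ, true_and]
      exact Finset.mem_image.mpr ⟨x, hxm, hinv⟩
    · intro x hxm x' hx'm heq
      have heq' : Function.invFun (fun y => rect x y) σ
          = Function.invFun (fun y => rect x' y) σ := heq
      have hx := (hRealMem x).mp hxm
      have hx' := (hRealMem x').mp hx'm
      have h1 : rect x (Function.invFun (fun y => rect x y) σ) = σ :=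
        Function.invFun_eq ((hrect_row_bij x hx).surjective σ)
      have h2 : rect x' (Function.invFun (fun y => rect x' y) σ) = σ :=
        Function.invFun_eq ((hrect_row_bij x' hx').surjective σ)
      rw [heq'] at h1
      exact hrect_col_inj _ x x' hx hx' (h1.trans h2.symm)
    · intro y hym
      simp only [CW, Finset.mem_filter, Finset.mem_univ, true_and] at hym
      obtain ⟨x, hxm, hxy⟩ := Finset.mem_image.mp hym
      have hx := (hRealMem x).mp hxm
      refine ⟨x, hxm, ?_⟩
      show Function.invFun (fun y => rect x y) σ = y
      have h1 : rect x (Function.invFun (fun y => rect x y) σ) = σ :=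
        Function.invFun_eq ((hrect_row_bij x hx).surjective σ)
      exact hrect_row_inj x hx (h1.trans hxy.symm)
  -- second multiplicity matrix: columns vs symbols
  let m2 : Fin n → Fin n → ℕ := fun y σ => if σ ∈ CS y then 0 else 1
  have hm2row : ∀ y, ∑ σ : Fin n, m2 y σ = n - o h k := by
    intro y
    show ∑ σ : Fin n, (if σ ∈ CS y then 0 else 1) = n - o h k
    rw [sum_indicator_not_mem (CS y), Fintype.card_fin, hCS_card y]
  have hm2col : ∀ σ, ∑ y : Fin n, m2 y σ = n - o h k := by
    intro σ
    have he : ∀ y : Fin n, m2 y σ = if y ∈ CW σ then 0 else 1 := by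
      intro y
      simp only [m2, CW, Finset.mem_filter, Finset.mem_univ, true_and]
    rw [Finset.sum_congr rfl (fun y _ => he y), sum_indicator_not_mem (CW σ),
      Fintype.card_fin, hCW_card σ]
  obtain ⟨N, hNbij, hNcnt⟩ := exists_decomposition (rfl : Fintype.card (Fin n) = _)
    (n - o h k) m2 hm2row hm2col
  have hm2le1 : ∀ y σ, m2 y σ ≤ 1 := by
    intro y σ
    simp only [m2]
    split <;> omega
  have hNonce : ∀ (y : Fin n), ∀ d d', d < n - o h k → d' < n - o h k →
      N d y = N d' y → d = d' := by
    intro y d d' hd hd' heq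
    by_contra hne
    have hsub : ({d, d'} : Finset ℕ) ⊆
        (Finset.range (n - o h k)).filter (fun dd => N dd y = N d y) := by
      intro dd hdd
      simp only [Finset.mem_insert, Finset.mem_singleton] at hdd
      rcases hdd with rfl | rfl
      · simp [Finset.mem_filter, Finset.mem_range, hd]
      · simp [Finset.mem_filter, Finset.mem_range, hd', heq]
    have hcard2 : 2 ≤ ((Finset.range (n - o h k)).filter (fun dd => N dd y = N d y)).card := by
      calc 2 = ({d, d'} : Finset ℕ).card := by
            rw [Finset.card_insert_of_notMem (by simp [hne]), Finset.card_singleton]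
        _ ≤ _ := Finset.card_le_card hsub
    rw [hNcnt y (N d y)] at hcard2
    have := hm2le1 y (N d y)
    omega
  have hNnotCS : ∀ (y : Fin n), ∀ d, d < n - o h k → N d y ∉ CS y := by
    intro y d hd hmem
    have h1 : 0 < m2 y (N d y) := by
      rw [← hNcnt y (N d y)]
      refine Finset.card_pos.mpr ⟨d, ?_⟩
      simp [Finset.mem_filter, Finset.mem_range, hd]
    simp only [m2, if_pos hmem] at h1
    omega
  -- the full latin square
  let L : Fin n → Fin n → Fin n := fun x y =>
    if (x:ℕ) < o h k then rect x y else N ((x:ℕ) - o h k) y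
  have hNd_lt : ∀ x : Fin n, ¬ (x:ℕ) < o h k → (x:ℕ) - o h k < n - o h k := by
    intro x hx
    have := x.isLt
    omega
  have hrows : ∀ x : Fin n, Function.Bijective (fun y => L x y) := by
    intro x
    by_cases hx : (x:ℕ) < o h k
    · have he : (fun y => L x y) = fun y => rect x y := by
        funext y
        simp only [L, if_pos hx]
      rw [he]
      exact hrect_row_bij x hx
    · have he : (fun y => L x y) = fun y => N ((x:ℕ) - o h k) y := by
        funext y
        simp only [L, if_neg hx]
      rw [he]
      exact hNbij _ (hNd_lt x hx)
  have hrectmemCS : ∀ (x y : Fin n), (x:ℕ) < o h k → rect x y ∈ CS y := by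
    intro x y hx
    exact Finset.mem_image_of_mem _ ((hRealMem x).mpr hx)
  have hcols : ∀ y : Fin n, Function.Bijective (fun x => L x y) := by
    intro y
    apply Finite.injective_iff_bijective.mp
    intro x x' heq
    simp only [L] at heq
    by_cases hx : (x:ℕ) < o h k <;> by_cases hx' : (x':ℕ) < o h k
    · rw [if_pos hx, if_pos hx'] at heq
      exact hrect_col_inj y x x' hx hx' heq
    · exfalso
      rw [if_pos hx, if_neg hx'] at heq
      exact hNnotCS y _ (hNd_lt x' hx') (heq ▸ hrectmemCS x y hx)
    · exfalso
      rw [if_neg hx, if_pos hx'] at heq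
      exact hNnotCS y _ (hNd_lt x hx) (heq.symm ▸ hrectmemCS x' y hx')
    · rw [if_neg hx, if_neg hx'] at heq
      have := hNonce y _ _ (hNd_lt x hx) (hNd_lt x' hx') heq
      apply Fin.ext
      omega
  refine ⟨L, ⟨hrows, hcols⟩, ?_⟩
  -- the subsquares: the diagonal blocks
  let B : Fin k → Finset (Fin n) := fun i =>
    Finset.univ.filter (fun v : Fin n => o h (i:ℕ) ≤ (v:ℕ) ∧ (v:ℕ) < o h ((i:ℕ)+1))
  have hBmem : ∀ (i : Fin k) (v : Fin n),
      v ∈ B i ↔ (o h (i:ℕ) ≤ (v:ℕ) ∧ (v:ℕ) < o h ((i:ℕ)+1)) := by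
    intro i v
    simp [B]
  have hBk : ∀ i : Fin k, o h ((i:ℕ)+1) ≤ o h k := by
    intro i
    exact o_mono h i.isLt
  have hBcard : ∀ i : Fin k, (B i).card = h ((i:ℕ)+1) := by
    intro i
    have hall : ∀ m ∈ Finset.Ico (o h (i:ℕ)) (o h ((i:ℕ)+1)), m < n := by
      intro m hm
      rw [Finset.mem_Ico] at hm
      have := hBk i
      omega
    have he : B i = (Finset.Ico (o h (i:ℕ)) (o h ((i:ℕ)+1))).attachFin hall := by
      ext v
      rw [hBmem, Finset.mem_attachFin, Finset.mem_Ico]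
    rw [he, Finset.card_attachFin, Nat.card_Ico, o_succ]
    omega
  have hBdisj : ∀ i j : Fin k, i ≠ j → Disjoint (B i) (B j) := by
    intro i j hne
    rw [Finset.disjoint_left]
    intro a hai haj
    rw [hBmem] at hai haj
    rcases Nat.lt_or_ge (i:ℕ) (j:ℕ) with hlt | hge
    · have : o h ((i:ℕ)+1) ≤ o h (j:ℕ) := o_mono h (by omega)
      omega
    · have hlt' : (j:ℕ) < (i:ℕ) := by
        rcases Nat.lt_or_ge (j:ℕ) (i:ℕ) with h1 | h2
        · exact h1
        · exact absurd (Fin.ext (by omega : (i:ℕ) = (j:ℕ))) hne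
      have : o h ((j:ℕ)+1) ≤ o h (i:ℕ) := o_mono h (by omega)
      omega
  refine ⟨B, B, B, hBcard, hBcard, hBcard, hBdisj, hBdisj, hBdisj, ?_⟩
  intro i x hx y hy
  rw [hBmem] at hx hy
  have hik : (i:ℕ) + 1 ≤ k := i.isLt
  have hxk : (x:ℕ) < o h k := lt_of_lt_of_le hx.2 (hBk i)
  have hyk : (y:ℕ) < o h k := lt_of_lt_of_le hy.2 (hBk i)
  have hbx : bIdx h (x:ℕ) = (i:ℕ) + 1 :=
    bIdx_eq_of (by omega) (by simpa using hx.1) hx.2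
  have hby : bIdx h (y:ℕ) = (i:ℕ) + 1 :=
    bIdx_eq_of (by omega) (by simpa using hy.1) hy.2
  have hLxy : L x y = F x y := by
    simp only [L, rect, if_pos hxk, if_pos hyk]
  have hmem := corner_mem_block (k := k) (n := n) hpos hxk hyk (by rw [hbx, hby])
  rw [hBmem]
  rw [hLxy]
  rw [hFval x y hxk hyk]
  rw [hbx] at hmem
  simpa using hmem
end
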